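/- arXiv:1712.03033 — 2 statements merged into one kernel-verified Lean document; each statement's English description precedes it below -/
import Mathlib

section
/- Let G be a simple 3-regular graph. Then κ₀(x,y) = 0 for every edge xy of G if and only if G is isomorphic to a prism graph Y_n for some n ≥ 4 or to a Möbius ladder M_k for some k ≥ 3. -/
open Finset

variable {V : Type*}

/-- The non-normalized graph Laplacian: `Δ f (x) = ∑_{y ∼ x} (f y − f x)`. -/
noncomputable def graphLap (G : SimpleGraph V) [∀ v, Fintype (G.neighborSet v)]
    (f : V → ℝ) (x : V) : ℝ :=
  ∑ y ∈ G.neighborFinset x, (f y - f x)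

/-- The Bakry–Émery operator `Γ`: `2Γ(f,g) = Δ(fg) − fΔg − gΔf`. -/
noncomputable def graphGamma (G : SimpleGraph V) [∀ v, Fintype (G.neighborSet v)]
    (f g : V → ℝ) (x : V) : ℝ :=
  (graphLap G (fun z => f z * g z) x - f x * graphLap G g x - g x * graphLap G f x) / 2

/-- The Bakry–Émery operator `Γ₂`: `2Γ₂(f,g) = ΔΓ(f,g) − Γ(f,Δg) − Γ(Δf,g)`. -/
noncomputable def graphGamma2 (G : SimpleGraph V) [∀ v, Fintype (G.neighborSet v)]
    (f g : V → ℝ) (x : V) : ℝ :=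
  (graphLap G (graphGamma G f g) x - graphGamma G f (graphLap G g) x -
    graphGamma G (graphLap G f) g x) / 2

/-- A vertex `x` satisfies the curvature-dimension inequality `CD(0,∞)` if
`Γ₂(f)(x) ≥ 0` for all `f : V → ℝ`. -/
def SatisfiesCD (G : SimpleGraph V) [∀ v, Fintype (G.neighborSet v)] (x : V) : Prop :=
  ∀ f : V → ℝ, 0 ≤ graphGamma2 G f f x

open Classical in
/-- The idleness-0 probability measure `μ_x^0` at a vertex `x`. -/
noncomputable def muZero (G : SimpleGraph V) [∀ v, Fintype (G.neighborSet v)] (x : V) :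
    V → ℝ :=
  fun z => if G.Adj x z then 1 / (G.degree x : ℝ) else 0

/-- The Wasserstein distance `W₁(μ_x^0, μ_y^0)`: the infimum of the transport cost over
all couplings of `μ_x^0` and `μ_y^0`. -/
noncomputable def Wone (G : SimpleGraph V) [∀ v, Fintype (G.neighborSet v)] (x y : V) : ℝ :=
  sInf {w : ℝ | ∃ π : V → V → ℝ,
    (∀ u v, 0 ≤ π u v) ∧
    (∀ u v, π u v ≠ 0 → G.Adj x u ∧ G.Adj y v) ∧
    (∀ u, ∑ v ∈ G.neighborFinset y, π u v = muZero G x u) ∧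
    (∀ v, ∑ u ∈ G.neighborFinset x, π u v = muZero G y v) ∧
    w = ∑ u ∈ G.neighborFinset x, ∑ v ∈ G.neighborFinset y, (G.dist u v : ℝ) * π u v}

/-- The Ollivier–Ricci curvature with idleness `0`: `κ₀(x,y) = 1 − W₁(μ_x^0, μ_y^0)`. -/
noncomputable def kappaZero (G : SimpleGraph V) [∀ v, Fintype (G.neighborSet v)]
    (x y : V) : ℝ :=
  1 - Wone G x y

/-- The prism graph `Y n` on vertices `ZMod n × Bool`: two `n`-cycles joined by rungs;
equivalently the Cartesian product of the cycle `C_n` with `K₂`. -/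
def prismGraph (n : ℕ) : SimpleGraph (ZMod n × Bool) :=
  SimpleGraph.fromRel (fun p q => (p.2 = q.2 ∧ q.1 = p.1 + 1) ∨ (p.1 = q.1 ∧ p.2 ≠ q.2))

/-- The Möbius ladder `M n` on vertices `ZMod (2n)`: the cycle `C_{2n}` together with
all antipodal edges. -/
def mobiusLadder (n : ℕ) : SimpleGraph (ZMod (2 * n)) :=
  SimpleGraph.fromRel (fun p q => q = p + 1 ∨ q = p + (n : ZMod (2 * n)))

open Classical in
/-- The Laplacian matrix `L = D − A` of a finite graph. -/
noncomputable def lapMat (G : SimpleGraph V) [Fintype V] : Matrix V V ℝ :=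
  fun i j =>
    (if i = j then ∑ k : V, (if G.Adj i k then (1 : ℝ) else 0) else 0) -
      (if G.Adj i j then 1 else 0)

/-- `λ₁ G` : the smallest non-zero eigenvalue of the Laplacian matrix of `G`. -/
noncomputable def lambdaOne (G : SimpleGraph V) [Fintype V] : ℝ :=
  sInf {t : ℝ | t ≠ 0 ∧ ∃ v : V → ℝ, v ≠ 0 ∧ (lapMat G).mulVec v = t • v}

noncomputable instance fintypeNeighborSetOfFinite [Finite V] (G : SimpleGraph V) (v : V) :
    Fintype (G.neighborSet v) := Fintype.ofFinite _
set_option maxHeartbeats 1000000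
set_option linter.unusedSectionVars false

namespace CubicAux
open SimpleGraph

variable {V : Type*} [DecidableEq V] (G : SimpleGraph V) [∀ v, Fintype (G.neighborSet v)]

/-- The local combinatorial criterion for `κ₀ = 0` in a cubic graph. -/
def Crit (x y : V) : Prop :=
  (∀ z, ¬(G.Adj x z ∧ G.Adj y z)) ∧
    ∃ u v, G.Adj x u ∧ G.Adj y v ∧ G.Adj u v ∧ u ≠ y ∧ v ≠ x

def WSet (x y : V) : Set ℝ :=
  {w : ℝ | ∃ π : V → V → ℝ,
    (∀ u v, 0 ≤ π u v) ∧
    (∀ u v, π u v ≠ 0 → G.Adj x u ∧ G.Adj y v) ∧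
    (∀ u, ∑ v ∈ G.neighborFinset y, π u v = muZero G x u) ∧
    (∀ v, ∑ u ∈ G.neighborFinset x, π u v = muZero G y v) ∧
    w = ∑ u ∈ G.neighborFinset x, ∑ v ∈ G.neighborFinset y, (G.dist u v : ℝ) * π u v}

theorem wone_eq (x y : V) : Wone G x y = sInf (WSet G x y) := rfl

lemma sum3 {M : Type*} [AddCommMonoid M] (f : V → M) (a b c : V)
    (hab : a ≠ b) (hac : a ≠ c) (hbc : b ≠ c) :
    ∑ t ∈ ({a, b, c} : Finset V), f t = f a + f b + f c := by
  rw [Finset.sum_insert (by simp [hab, hac]), Finset.sum_insert (by simp [hbc]),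
    Finset.sum_singleton, add_assoc]

lemma muZero_adj {x u : V} (hd : G.degree x = 3) (h : G.Adj x u) :
    muZero G x u = 3⁻¹ := by
  unfold muZero
  rw [if_pos h, hd]
  norm_num

lemma muZero_nonadj {x u : V} (h : ¬ G.Adj x u) : muZero G x u = 0 := by
  unfold muZero; rw [if_neg h]

lemma muZero_nonneg (x u : V) : 0 ≤ muZero G x u := by
  unfold muZero; split_ifs with h
  · positivity
  · exact le_rfl

lemma sum_muZero (x : V) (hd : G.degree x = 3) :
    ∑ u ∈ G.neighborFinset x, muZero G x u = 1 := by
  have h : ∀ u ∈ G.neighborFinset x, muZero G x u = 3⁻¹ := by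
    intro u hu
    exact muZero_adj G hd ((SimpleGraph.mem_neighborFinset _ _ _).mp hu)
  rw [Finset.sum_congr rfl h, Finset.sum_const]
  have hc : (G.neighborFinset x).card = 3 := hd
  rw [hc]
  norm_num

lemma wset_bddBelow (x y : V) : BddBelow (WSet G x y) := by
  refine ⟨0, fun w hw => ?_⟩
  obtain ⟨π, hpos, -, -, -, hw⟩ := hw
  rw [hw]
  apply Finset.sum_nonneg
  intro u _
  apply Finset.sum_nonneg
  intro v _
  have := hpos u v
  positivity

lemma wset_nonempty (x y : V) (hdx : G.degree x = 3) (hdy : G.degree y = 3) :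
    (WSet G x y).Nonempty := by
  refine ⟨_, fun u v => muZero G x u * muZero G y v, ?_, ?_, ?_, ?_, rfl⟩
  · intro u v; exact mul_nonneg (muZero_nonneg G x u) (muZero_nonneg G y v)
  · intro u v h
    constructor
    · by_contra hc
      exact h (by show muZero G x u * muZero G y v = 0; rw [muZero_nonadj G hc, zero_mul])
    · by_contra hc
      exact h (by show muZero G x u * muZero G y v = 0; rw [muZero_nonadj G hc, mul_zero])
  · intro u
    rw [← Finset.mul_sum, sum_muZero G y hdy, mul_one]
  · intro v
    rw [← Finset.sum_mul, sum_muZero G x hdx, one_mul]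

lemma sum_ite_and {s : Finset V} {q : V} (hq : q ∈ s) (P : Prop) [Decidable P] (f : V → ℝ) :
    ∑ v ∈ s, (if P ∧ v = q then f v else 0) = if P then f q else 0 := by
  by_cases hP : P <;> simp [hP, Finset.sum_ite_eq' s q f, hq]

/-- the matching coupling upper bound -/
lemma wone_le_matching {x y : V} (hdx : G.degree x = 3) (hdy : G.degree y = 3)
    {p1 p2 p3 q1 q2 q3 : V}
    (hNx : G.neighborFinset x = {p1, p2, p3}) (hNy : G.neighborFinset y = {q1, q2, q3})
    (hp12 : p1 ≠ p2) (hp13 : p1 ≠ p3) (hp23 : p2 ≠ p3)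
    (hq12 : q1 ≠ q2) (hq13 : q1 ≠ q3) (hq23 : q2 ≠ q3) :
    Wone G x y ≤ ((G.dist p1 q1 : ℝ) + (G.dist p2 q2 : ℝ) + (G.dist p3 q3 : ℝ)) / 3 := by
  have hxp1 : G.Adj x p1 := (SimpleGraph.mem_neighborFinset _ _ _).mp (by rw [hNx]; simp)
  have hxp2 : G.Adj x p2 := (SimpleGraph.mem_neighborFinset _ _ _).mp (by rw [hNx]; simp)
  have hxp3 : G.Adj x p3 := (SimpleGraph.mem_neighborFinset _ _ _).mp (by rw [hNx]; simp)
  have hyq1 : G.Adj y q1 := (SimpleGraph.mem_neighborFinset _ _ _).mp (by rw [hNy]; simp)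
  have hyq2 : G.Adj y q2 := (SimpleGraph.mem_neighborFinset _ _ _).mp (by rw [hNy]; simp)
  have hyq3 : G.Adj y q3 := (SimpleGraph.mem_neighborFinset _ _ _).mp (by rw [hNy]; simp)
  have hq1m : q1 ∈ G.neighborFinset y := by rw [hNy]; simp
  have hq2m : q2 ∈ G.neighborFinset y := by rw [hNy]; simp
  have hq3m : q3 ∈ G.neighborFinset y := by rw [hNy]; simp
  have hp1m : p1 ∈ G.neighborFinset x := by rw [hNx]; simp
  have hp2m : p2 ∈ G.neighborFinset x := by rw [hNx]; simp
  have hp3m : p3 ∈ G.neighborFinset x := by rw [hNx]; simp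
  rw [wone_eq]
  apply csInf_le (wset_bddBelow G x y)
  refine ⟨fun u v =>
      (if u = p1 ∧ v = q1 then (3:ℝ)⁻¹ else 0) +
      (if u = p2 ∧ v = q2 then (3:ℝ)⁻¹ else 0) +
      (if u = p3 ∧ v = q3 then (3:ℝ)⁻¹ else 0), ?_, ?_, ?_, ?_, ?_⟩
  · intro u v; positivity
  · intro u v h
    by_cases h1 : u = p1 ∧ v = q1
    · exact ⟨h1.1 ▸ hxp1, h1.2 ▸ hyq1⟩
    by_cases h2 : u = p2 ∧ v = q2
    · exact ⟨h2.1 ▸ hxp2, h2.2 ▸ hyq2⟩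
    by_cases h3 : u = p3 ∧ v = q3
    · exact ⟨h3.1 ▸ hxp3, h3.2 ▸ hyq3⟩
    · exfalso; apply h; simp [h1, h2, h3]
  · intro u
    rw [Finset.sum_add_distrib, Finset.sum_add_distrib,
      sum_ite_and hq1m (u = p1) (fun _ => (3:ℝ)⁻¹),
      sum_ite_and hq2m (u = p2) (fun _ => (3:ℝ)⁻¹),
      sum_ite_and hq3m (u = p3) (fun _ => (3:ℝ)⁻¹)]
    by_cases h1 : u = p1
    · subst h1; rw [if_pos rfl, if_neg hp12, if_neg hp13, muZero_adj G hdx hxp1]; ring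
    by_cases h2 : u = p2
    · subst h2; rw [if_neg (Ne.symm hp12), if_pos rfl, if_neg hp23, muZero_adj G hdx hxp2]; ring
    by_cases h3 : u = p3
    · subst h3; rw [if_neg (Ne.symm hp13), if_neg (Ne.symm hp23), if_pos rfl,
        muZero_adj G hdx hxp3]; ring
    · rw [if_neg h1, if_neg h2, if_neg h3, muZero_nonadj G]
      · ring
      · intro hadj
        have : u ∈ G.neighborFinset x := (SimpleGraph.mem_neighborFinset _ _ _).mpr hadj
        rw [hNx] at this
        simp only [Finset.mem_insert, Finset.mem_singleton] at this
        tauto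
  · intro v
    have e1 : ∀ (q p : V) (hpm : p ∈ G.neighborFinset x),
        ∑ u ∈ G.neighborFinset x, (if u = p ∧ v = q then (3:ℝ)⁻¹ else 0)
          = if v = q then (3:ℝ)⁻¹ else 0 := by
      intro q p hpm
      by_cases hv : v = q
      · subst hv
        rw [if_pos rfl]
        have : ∀ u, (if u = p ∧ v = v then (3:ℝ)⁻¹ else 0) = if u = p then (3:ℝ)⁻¹ else 0 := by
          intro u; simp
        rw [Finset.sum_congr rfl (fun u _ => this u), Finset.sum_ite_eq' _ p (fun _ => (3:ℝ)⁻¹),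
          if_pos hpm]
      · rw [if_neg hv]
        apply Finset.sum_eq_zero
        intro u _
        rw [if_neg (by tauto)]
    rw [Finset.sum_add_distrib, Finset.sum_add_distrib, e1 q1 p1 hp1m, e1 q2 p2 hp2m,
      e1 q3 p3 hp3m]
    by_cases h1 : v = q1
    · subst h1; rw [if_pos rfl, if_neg hq12, if_neg hq13, muZero_adj G hdy hyq1]; ring
    by_cases h2 : v = q2
    · subst h2; rw [if_neg (Ne.symm hq12), if_pos rfl, if_neg hq23, muZero_adj G hdy hyq2]; ring
    by_cases h3 : v = q3
    · subst h3; rw [if_neg (Ne.symm hq13), if_neg (Ne.symm hq23), if_pos rfl,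
        muZero_adj G hdy hyq3]; ring
    · rw [if_neg h1, if_neg h2, if_neg h3, muZero_nonadj G]
      · ring
      · intro hadj
        have : v ∈ G.neighborFinset y := (SimpleGraph.mem_neighborFinset _ _ _).mpr hadj
        rw [hNy] at this
        simp only [Finset.mem_insert, Finset.mem_singleton] at this
        tauto
  · have expand : ∀ u, ∑ v ∈ G.neighborFinset y,
        (G.dist u v : ℝ) * ((if u = p1 ∧ v = q1 then (3:ℝ)⁻¹ else 0) +
          (if u = p2 ∧ v = q2 then (3:ℝ)⁻¹ else 0) +
          (if u = p3 ∧ v = q3 then (3:ℝ)⁻¹ else 0))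
        = (if u = p1 then (G.dist u q1 : ℝ) * 3⁻¹ else 0) +
          (if u = p2 then (G.dist u q2 : ℝ) * 3⁻¹ else 0) +
          (if u = p3 then (G.dist u q3 : ℝ) * 3⁻¹ else 0) := by
      intro u
      have : ∀ v, (G.dist u v : ℝ) * ((if u = p1 ∧ v = q1 then (3:ℝ)⁻¹ else 0) +
          (if u = p2 ∧ v = q2 then (3:ℝ)⁻¹ else 0) +
          (if u = p3 ∧ v = q3 then (3:ℝ)⁻¹ else 0))
          = (if u = p1 ∧ v = q1 then (G.dist u v : ℝ) * 3⁻¹ else 0) +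
            (if u = p2 ∧ v = q2 then (G.dist u v : ℝ) * 3⁻¹ else 0) +
            (if u = p3 ∧ v = q3 then (G.dist u v : ℝ) * 3⁻¹ else 0) := by
        intro v
        split_ifs <;> ring
      rw [Finset.sum_congr rfl (fun v _ => this v), Finset.sum_add_distrib,
        Finset.sum_add_distrib,
        sum_ite_and hq1m (u = p1) (fun v => (G.dist u v : ℝ) * 3⁻¹),
        sum_ite_and hq2m (u = p2) (fun v => (G.dist u v : ℝ) * 3⁻¹),
        sum_ite_and hq3m (u = p3) (fun v => (G.dist u v : ℝ) * 3⁻¹)]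
    rw [Finset.sum_congr rfl (fun u _ => expand u), Finset.sum_add_distrib,
      Finset.sum_add_distrib,
      Finset.sum_ite_eq' _ p1 (fun u => (G.dist u q1 : ℝ) * 3⁻¹),
      Finset.sum_ite_eq' _ p2 (fun u => (G.dist u q2 : ℝ) * 3⁻¹),
      Finset.sum_ite_eq' _ p3 (fun u => (G.dist u q3 : ℝ) * 3⁻¹),
      if_pos hp1m, if_pos hp2m, if_pos hp3m]
    ring

end CubicAux
namespace CubicAux
open SimpleGraph

variable {V : Type*} [DecidableEq V] {G : SimpleGraph V} [∀ v, Fintype (G.neighborSet v)]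

lemma cost_lower_mass {x y : V} (hxy : G.Adj x y) (hdx : G.degree x = 3)
    (hnc : ∀ z, ¬(G.Adj x z ∧ G.Adj y z)) :
    ∀ w ∈ WSet G x y, (1:ℝ) ≤ w := by
  intro w hw
  obtain ⟨π, hpos, hsupp, hm1, _, hweq⟩ := hw
  have key : ∀ u ∈ G.neighborFinset x, ∀ v ∈ G.neighborFinset y,
      π u v ≤ (G.dist u v : ℝ) * π u v := by
    intro u _ v _
    by_cases h0 : π u v = 0
    · rw [h0]; simp
    · obtain ⟨hu, hv⟩ := hsupp u v h0
      have hne : u ≠ v := fun he => hnc u ⟨hu, he ▸ hv⟩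
      have hreach : G.Reachable u v :=
        (hu.symm.reachable.trans (hxy.reachable.trans hv.reachable))
      have h1 : 1 ≤ G.dist u v := hreach.pos_dist_of_ne hne
      have h1' : (1:ℝ) ≤ (G.dist u v : ℝ) := by exact_mod_cast h1
      nlinarith [hpos u v]
  have : (1:ℝ) = ∑ u ∈ G.neighborFinset x, ∑ v ∈ G.neighborFinset y, π u v := by
    rw [Finset.sum_congr rfl (fun u _ => hm1 u), sum_muZero G x hdx]
  rw [hweq, this]
  apply Finset.sum_le_sum
  intro u hu
  exact Finset.sum_le_sum (fun v hv => key u hu v hv)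

lemma cost_lower_dual {x y : V} (hxy : G.Adj x y) (f : V → ℝ)
    (hf : ∀ u v, G.Adj x u → G.Adj y v → f u - f v ≤ (G.dist u v : ℝ)) :
    ∀ w ∈ WSet G x y,
      (∑ u ∈ G.neighborFinset x, f u * muZero G x u)
        - (∑ v ∈ G.neighborFinset y, f v * muZero G y v) ≤ w := by
  intro w hw
  obtain ⟨π, hpos, hsupp, hm1, hm2, hweq⟩ := hw
  have key : ∀ u ∈ G.neighborFinset x, ∀ v ∈ G.neighborFinset y,
      (f u - f v) * π u v ≤ (G.dist u v : ℝ) * π u v := by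
    intro u _ v _
    by_cases h0 : π u v = 0
    · rw [h0]; simp
    · obtain ⟨hu, hv⟩ := hsupp u v h0
      exact mul_le_mul_of_nonneg_right (hf u v hu hv) (hpos u v)
  have step1 : ∑ u ∈ G.neighborFinset x, ∑ v ∈ G.neighborFinset y, (f u - f v) * π u v
      ≤ ∑ u ∈ G.neighborFinset x, ∑ v ∈ G.neighborFinset y, (G.dist u v : ℝ) * π u v :=
    Finset.sum_le_sum (fun u hu => Finset.sum_le_sum (fun v hv => key u hu v hv))
  have step2 : ∑ u ∈ G.neighborFinset x, ∑ v ∈ G.neighborFinset y, (f u - f v) * π u v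
      = (∑ u ∈ G.neighborFinset x, f u * muZero G x u)
        - (∑ v ∈ G.neighborFinset y, f v * muZero G y v) := by
    have e1 : ∀ u, ∑ v ∈ G.neighborFinset y, (f u - f v) * π u v
        = f u * muZero G x u - ∑ v ∈ G.neighborFinset y, f v * π u v := by
      intro u
      have : ∀ v, (f u - f v) * π u v = f u * π u v - f v * π u v := fun v => by ring
      rw [Finset.sum_congr rfl (fun v _ => this v), Finset.sum_sub_distrib,
        ← Finset.mul_sum, hm1 u]
    rw [Finset.sum_congr rfl (fun u _ => e1 u), Finset.sum_sub_distrib]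
    congr 1
    rw [Finset.sum_comm]
    apply Finset.sum_congr rfl
    intro v _
    rw [← Finset.mul_sum, hm2 v]
  rw [hweq, ← step2]
  exact step1

lemma finset_rot (a b c : V) : ({a, b, c} : Finset V) = {c, a, b} := by
  ext t; simp; tauto

lemma finset_swap (a b c : V) : ({a, b, c} : Finset V) = {b, a, c} := by
  ext t; simp; tauto

lemma nbr_decomp1 {x y : V} (hd : G.degree x = 3) (hxy : G.Adj x y) :
    ∃ u w, G.neighborFinset x = {y, u, w} ∧ y ≠ u ∧ y ≠ w ∧ u ≠ w := by
  have hc : (G.neighborFinset x).card = 3 := hd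
  obtain ⟨a, b, c, hab, hac, hbc, hN⟩ := Finset.card_eq_three.mp hc
  have hy : y ∈ G.neighborFinset x := (SimpleGraph.mem_neighborFinset _ _ _).mpr hxy
  rw [hN] at hy
  simp only [Finset.mem_insert, Finset.mem_singleton] at hy
  rcases hy with rfl | rfl | rfl
  · exact ⟨b, c, hN, hab, hac, hbc⟩
  · exact ⟨a, c, by rw [hN, finset_swap], hab.symm, hbc, hac⟩
  · exact ⟨a, b, by rw [hN, finset_rot], hac.symm, hbc.symm, hab⟩

lemma nbr_decomp2 {x y z : V} (hd : G.degree x = 3) (hxy : G.Adj x y) (hxz : G.Adj x z)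
    (hyz : y ≠ z) : ∃ w, G.neighborFinset x = {y, z, w} ∧ w ≠ y ∧ w ≠ z := by
  obtain ⟨u, w, hN, hyu, hyw, huw⟩ := nbr_decomp1 hd hxy
  have hz : z ∈ G.neighborFinset x := (SimpleGraph.mem_neighborFinset _ _ _).mpr hxz
  rw [hN] at hz
  simp only [Finset.mem_insert, Finset.mem_singleton] at hz
  rcases hz with rfl | rfl | rfl
  · exact absurd rfl hyz
  · exact ⟨w, hN, hyw.symm, huw.symm⟩
  · refine ⟨u, ?_, hyu.symm, huw⟩
    rw [hN]
    ext t; simp; tauto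

lemma dist_adj {u v : V} (h : G.Adj u v) : G.dist u v = 1 :=
  SimpleGraph.dist_eq_one_iff_adj.mpr h

lemma dist_ge_two {x y u v : V} (hxy : G.Adj x y) (hu : G.Adj x u) (hv : G.Adj y v)
    (hne : u ≠ v) (hnadj : ¬ G.Adj u v) : 2 ≤ G.dist u v := by
  have hreach : G.Reachable u v :=
    (hu.symm.reachable.trans (hxy.reachable.trans hv.reachable))
  have h1 : 0 < G.dist u v := hreach.pos_dist_of_ne hne
  have h2 : G.dist u v ≠ 1 := fun h => hnadj (SimpleGraph.dist_eq_one_iff_adj.mp h)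
  omega

theorem kappa_eq_zero_iff (hcubic : ∀ v : V, G.degree v = 3) {x y : V} (hxy : G.Adj x y) :
    kappaZero G x y = 0 ↔ Crit G x y := by
  constructor
  · intro hk
    by_contra hnc
    by_cases hA : ∀ z, ¬(G.Adj x z ∧ G.Adj y z)
    · -- then the cross-square must fail
      have hB : ∀ u v, G.Adj x u → G.Adj y v → G.Adj u v → u ≠ y → v = x := by
        by_contra hB
        push_neg at hB
        obtain ⟨u, v, h1, h2, h3, h4, h5⟩ := hB
        exact hnc ⟨hA, u, v, h1, h2, h3, h4, h5⟩
      obtain ⟨u1, u2, hNx, hyu1, hyu2, hu12⟩ := nbr_decomp1 (hcubic x) hxy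
      obtain ⟨v1, v2, hNy, hxv1, hxv2, hv12⟩ := nbr_decomp1 (hcubic y) hxy.symm
      have hadj_u1 : G.Adj x u1 := (SimpleGraph.mem_neighborFinset _ _ _).mp (by rw [hNx]; simp)
      have hadj_u2 : G.Adj x u2 := (SimpleGraph.mem_neighborFinset _ _ _).mp (by rw [hNx]; simp)
      have hadj_v1 : G.Adj y v1 := (SimpleGraph.mem_neighborFinset _ _ _).mp (by rw [hNy]; simp)
      have hadj_v2 : G.Adj y v2 := (SimpleGraph.mem_neighborFinset _ _ _).mp (by rw [hNy]; simp)
      set f : V → ℝ := fun t => if t = u1 ∨ t = u2 then (2:ℝ) else if t = x ∨ t = y then 1 else 0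
        with hf_def
      have hfy : f y = 1 := by simp [hf_def, hyu1, hyu2]
      have hfx : f x = 1 := by simp [hf_def, hadj_u1.ne, hadj_u2.ne]
      have hfu1 : f u1 = 2 := by simp [hf_def]
      have hfu2 : f u2 = 2 := by simp [hf_def, hu12.symm]
      have hvval : ∀ v, G.Adj y v → v ≠ x → f v = 0 := by
        intro v hv hvx
        have h1 : v ≠ u1 := fun h => hA v ⟨h ▸ hadj_u1, hv⟩
        have h2 : v ≠ u2 := fun h => hA v ⟨h ▸ hadj_u2, hv⟩
        simp [hf_def, h1, h2, hvx, hv.ne']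
      have hfv1 : f v1 = 0 := hvval v1 hadj_v1 (fun h => hxv1 h.symm)
      have hfv2 : f v2 = 0 := hvval v2 hadj_v2 (fun h => hxv2 h.symm)
      have hlip : ∀ u v, G.Adj x u → G.Adj y v → f u - f v ≤ (G.dist u v : ℝ) := by
        intro u v hu hv
        have hum : u ∈ ({y, u1, u2} : Finset V) := by
          rw [← hNx]; exact (SimpleGraph.mem_neighborFinset _ _ _).mpr hu
        have hvm : v ∈ ({x, v1, v2} : Finset V) := by
          rw [← hNy]; exact (SimpleGraph.mem_neighborFinset _ _ _).mpr hv
        simp only [Finset.mem_insert, Finset.mem_singleton] at hum hvm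
        have hfu : f u = 1 ∨ f u = 2 := by
          rcases hum with rfl | rfl | rfl
          · exact Or.inl hfy
          · exact Or.inr hfu1
          · exact Or.inr hfu2
        by_cases hvx : v = x
        · have h1 : G.dist u v = 1 := by rw [hvx, SimpleGraph.dist_comm]; exact dist_adj hu
          rw [h1, hvx, hfx]
          rcases hfu with h | h <;> rw [h] <;> norm_num
        · have hfv : f v = 0 := hvval v hv hvx
          rcases hfu with h | h
          · -- u = y
            have huy : u = y := by
              rcases hum with rfl | rfl | rfl
              · rfl
              · rw [hfu1] at h; norm_num at h
              · rw [hfu2] at h; norm_num at h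
            subst huy
            have : G.dist u v = 1 := dist_adj hv
            rw [this, h, hfv]; norm_num
          · -- u is u1 or u2, f u = 2, need dist ≥ 2
            have huy : u ≠ y := by
              intro he; subst he; rw [hfy] at h; norm_num at h
            have hne : u ≠ v := by
              intro he; exact hA u ⟨hu, he ▸ hv⟩
            have hnadj : ¬ G.Adj u v := by
              intro hadj
              exact hvx (hB u v hu hv hadj huy)
            have h2 : 2 ≤ G.dist u v := dist_ge_two hxy hu hv hne hnadj
            have h2' : (2:ℝ) ≤ (G.dist u v : ℝ) := by exact_mod_cast h2
            rw [h, hfv]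
            linarith
      have hdual := cost_lower_dual hxy f hlip
      have hS : (∑ u ∈ G.neighborFinset x, f u * muZero G x u)
          - (∑ v ∈ G.neighborFinset y, f v * muZero G y v) = 4/3 := by
        rw [hNx, hNy, sum3 _ _ _ _ hyu1 hyu2 hu12, sum3 _ _ _ _ hxv1 hxv2 hv12,
          muZero_adj G (hcubic x) hxy, muZero_adj G (hcubic x) hadj_u1,
          muZero_adj G (hcubic x) hadj_u2, muZero_adj G (hcubic y) hxy.symm,
          muZero_adj G (hcubic y) hadj_v1, muZero_adj G (hcubic y) hadj_v2,
          hfy, hfx, hfu1, hfu2, hfv1, hfv2]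
        ring
      have hW : (4/3 : ℝ) ≤ Wone G x y := by
        rw [wone_eq]
        apply le_csInf (wset_nonempty G x y (hcubic x) (hcubic y))
        intro w hw
        rw [← hS]
        exact hdual w hw
      unfold kappaZero at hk
      linarith
    · -- common neighbour exists : Wone ≤ 2/3
      push_neg at hA
      obtain ⟨z, hxz, hyz⟩ := hA
      have hyz' : y ≠ z := hyz.ne
      have hxz' : x ≠ z := hxz.ne
      obtain ⟨u', hNx, hu'y, hu'z⟩ := nbr_decomp2 (hcubic x) hxy hxz hyz'
      obtain ⟨v', hNy, hv'x, hv'z⟩ := nbr_decomp2 (hcubic y) hxy.symm hyz hxz'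
      have hadj_u' : G.Adj x u' := (SimpleGraph.mem_neighborFinset _ _ _).mp (by rw [hNx]; simp)
      have hadj_v' : G.Adj y v' := (SimpleGraph.mem_neighborFinset _ _ _).mp (by rw [hNy]; simp)
      -- pairs (z,z), (y,v'), (u',x) ; p-list (z,y,u') q-list (z,v',x)
      have hNx' : G.neighborFinset x = {z, y, u'} := by rw [hNx, finset_swap]
      have hNy' : G.neighborFinset y = {z, v', x} := by
        rw [hNy]; ext t; simp; tauto
      have hle := wone_le_matching G (hcubic x) (hcubic y) hNx' hNy'
        (hyz'.symm) (hu'z.symm) (Ne.symm hu'y) (Ne.symm hv'z) (Ne.symm hxz') hv'x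
      rw [SimpleGraph.dist_self, dist_adj hadj_v', dist_adj (hadj_u'.symm)] at hle
      norm_num at hle
      unfold kappaZero at hk
      linarith
  · rintro ⟨hnc, u, v, hu, hv, huv, huy, hvx⟩
    have hle : Wone G x y ≤ 1 := by
      obtain ⟨u2, hNx, hu2y, hu2u⟩ := nbr_decomp2 (hcubic x) hxy hu (Ne.symm huy)
      obtain ⟨v2, hNy, hv2x, hv2v⟩ := nbr_decomp2 (hcubic y) hxy.symm hv (Ne.symm hvx)
      have hadj_u2 : G.Adj x u2 := (SimpleGraph.mem_neighborFinset _ _ _).mp (by rw [hNx]; simp)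
      have hadj_v2 : G.Adj y v2 := (SimpleGraph.mem_neighborFinset _ _ _).mp (by rw [hNy]; simp)
      -- pairs (u,v), (y,v2), (u2,x) : p-list (u,y,u2), q-list (v,v2,x)
      have hNx' : G.neighborFinset x = {u, y, u2} := by rw [hNx, finset_swap]
      have hNy' : G.neighborFinset y = {v, v2, x} := by
        rw [hNy]; ext t; simp; tauto
      have hle := wone_le_matching G (hcubic x) (hcubic y) hNx' hNy'
        huy (Ne.symm hu2u) hu2y.symm (Ne.symm hv2v) hvx hv2x
      rw [dist_adj huv, dist_adj hadj_v2, dist_adj (hadj_u2.symm)] at hle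
      norm_num at hle
      exact hle
    have hge : (1:ℝ) ≤ Wone G x y := by
      rw [wone_eq]
      apply le_csInf (wset_nonempty G x y (hcubic x) (hcubic y))
      exact cost_lower_mass hxy (hcubic x) hnc
    unfold kappaZero
    linarith

end CubicAux
namespace CubicAux
open SimpleGraph

variable {V : Type*} [DecidableEq V] {G : SimpleGraph V} [∀ v, Fintype (G.neighborSet v)]

open Classical in
/-- the third neighbour of a degree-3 vertex, besides `p` and `q`. -/
noncomputable def third (G : SimpleGraph V) [∀ v, Fintype (G.neighborSet v)] (v p q : V) : V :=
  if h : ∃ r, G.neighborFinset v = {p, q, r} ∧ r ≠ p ∧ r ≠ q then h.choose else v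

lemma third_spec {v p q : V} (hd : G.degree v = 3) (hp : G.Adj v p) (hq : G.Adj v q)
    (hpq : p ≠ q) :
    G.neighborFinset v = {p, q, third G v p q} ∧ third G v p q ≠ p ∧ third G v p q ≠ q := by
  obtain ⟨w, hN, h1, h2⟩ := nbr_decomp2 hd hp hq hpq
  have hex : ∃ r, G.neighborFinset v = {p, q, r} ∧ r ≠ p ∧ r ≠ q := ⟨w, hN, h1, h2⟩
  unfold third
  rw [dif_pos hex]
  exact hex.choose_spec

lemma third_adj {v p q : V} (hd : G.degree v = 3) (hp : G.Adj v p) (hq : G.Adj v q)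
    (hpq : p ≠ q) : G.Adj v (third G v p q) := by
  have hs := third_spec hd hp hq hpq
  have : third G v p q ∈ G.neighborFinset v := by rw [hs.1]; simp
  exact (SimpleGraph.mem_neighborFinset _ _ _).mp this

lemma mem3 {v x1 x2 x3 t : V} (hN : G.neighborFinset v = {x1, x2, x3}) (h : G.Adj v t) :
    t = x1 ∨ t = x2 ∨ t = x3 := by
  have ht : t ∈ G.neighborFinset v := (SimpleGraph.mem_neighborFinset _ _ _).mpr h
  rw [hN] at ht
  simpa using ht

lemma third_unique {v p q r : V} (hd : G.degree v = 3) (hp : G.Adj v p) (hq : G.Adj v q)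
    (hpq : p ≠ q) (hr : G.Adj v r) (h1 : r ≠ p) (h2 : r ≠ q) : third G v p q = r := by
  have hs := third_spec hd hp hq hpq
  rcases mem3 hs.1 hr with h | h | h
  · exact absurd h h1
  · exact absurd h h2
  · exact h.symm

lemma third_comm {v p q : V} (hd : G.degree v = 3) (hp : G.Adj v p) (hq : G.Adj v q)
    (hpq : p ≠ q) : third G v p q = third G v q p := by
  have hs := third_spec hd hp hq hpq
  exact (third_unique hd hq hp hpq.symm (third_adj hd hp hq hpq) hs.2.2 hs.2.1).symm

/-- A "good square": rungs `A–B`, `C–D`, sides `A–C`, `B–D`. -/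
structure GoodSq (G : SimpleGraph V) (A B C D : V) : Prop where
  ab : G.Adj A B
  cd : G.Adj C D
  ac : G.Adj A C
  bd : G.Adj B D
  ad : A ≠ D
  bc : B ≠ C

lemma dichotomy (hcubic : ∀ v : V, G.degree v = 3)
    (hnc : ∀ x y, G.Adj x y → ∀ z, ¬(G.Adj x z ∧ G.Adj y z))
    (hsq : ∀ x y, G.Adj x y → ∃ u v, G.Adj x u ∧ G.Adj y v ∧ G.Adj u v ∧ u ≠ y ∧ v ≠ x)
    {A B C D : V} (gs : GoodSq G A B C D) :
    G.Adj (third G C A D) (third G D B C) ∨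
      (G.Adj (third G C A D) (third G A B C) ∧ G.Adj (third G D B C) (third G B A D)) := by
  set Cp := third G C A D with hCp
  set Dp := third G D B C with hDp
  set Am := third G A B C with hAm
  set Bm := third G B A D with hBm
  have hCsp := third_spec (hcubic C) gs.ac.symm gs.cd gs.ad
  have hDsp := third_spec (hcubic D) gs.bd.symm gs.cd.symm gs.bc
  have hAsp := third_spec (hcubic A) gs.ab gs.ac gs.bc
  have hBsp := third_spec (hcubic B) gs.ab.symm gs.bd gs.ad
  rw [← hCp] at hCsp
  rw [← hDp] at hDsp
  rw [← hAm] at hAsp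
  rw [← hBm] at hBsp
  have hadjCCp : G.Adj C Cp := third_adj (hcubic C) gs.ac.symm gs.cd gs.ad
  have hadjDDp : G.Adj D Dp := third_adj (hcubic D) gs.bd.symm gs.cd.symm gs.bc
  have hadjAAm : G.Adj A Am := third_adj (hcubic A) gs.ab gs.ac gs.bc
  have hadjBBm : G.Adj B Bm := third_adj (hcubic B) gs.ab.symm gs.bd gs.ad
  have hCB : ¬ G.Adj C B := fun h => hnc B D gs.bd C ⟨h.symm, gs.cd.symm⟩
  have hDA : ¬ G.Adj D A := fun h => hnc A C gs.ac D ⟨h.symm, gs.cd⟩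
  by_cases hext : G.Adj Cp Dp
  · exact Or.inl hext
  right
  have step1 : Cp = Bm ∨ G.Adj Cp Am := by
    obtain ⟨u, v, hu, hv, huv, huy, hvx⟩ := hsq C Cp hadjCCp
    have hCpB : G.Adj Cp B → Cp = Bm := by
      intro h
      rcases mem3 hBsp.1 h.symm with h' | h' | h'
      · exact absurd h' hCsp.2.1
      · exact absurd h' hCsp.2.2
      · exact h'
    rcases mem3 hCsp.1 hu with rfl | rfl | rfl
    · -- u = A
      rcases mem3 hAsp.1 huv with rfl | rfl | rfl
      · exact Or.inl (hCpB hv)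
      · exact absurd rfl hvx
      · exact Or.inr hv
    · -- u = D
      rcases mem3 hDsp.1 huv with rfl | rfl | rfl
      · exact Or.inl (hCpB hv)
      · exact absurd rfl hvx
      · exact absurd hv hext
    · exact absurd rfl huy
  have step2 : Dp = Am ∨ G.Adj Dp Bm := by
    obtain ⟨u, v, hu, hv, huv, huy, hvx⟩ := hsq D Dp hadjDDp
    have hDpA : G.Adj Dp A → Dp = Am := by
      intro h
      rcases mem3 hAsp.1 h.symm with h' | h' | h'
      · exact absurd h' hDsp.2.1
      · exact absurd h' hDsp.2.2
      · exact h'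
    rcases mem3 hDsp.1 hu with rfl | rfl | rfl
    · -- u = B
      rcases mem3 hBsp.1 huv with rfl | rfl | rfl
      · exact Or.inl (hDpA hv)
      · exact absurd rfl hvx
      · exact Or.inr hv
    · -- u = C
      rcases mem3 hCsp.1 huv with rfl | rfl | rfl
      · exact Or.inl (hDpA hv)
      · exact absurd rfl hvx
      · exact absurd hv.symm hext
    · exact absurd rfl huy
  rcases step1 with h1 | h1
  · rcases step2 with h2 | h2
    · -- α-case : Cp = Bm, Dp = Am. Refute.
      exfalso
      have hCpB' : G.Adj Cp B := by rw [h1]; exact hadjBBm.symm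
      have hCB' : C ≠ B := Ne.symm gs.bc
      set Z := third G Cp C B with hZ
      have hZsp := third_spec (hcubic Cp) hadjCCp.symm hCpB' hCB'
      rw [← hZ] at hZsp
      have hadjCpZ : G.Adj Cp Z := third_adj (hcubic Cp) hadjCCp.symm hCpB' hCB'
      obtain ⟨u, v, hu, hv, huv, huZ, hvCp⟩ := hsq Cp Z hadjCpZ
      have hZA : ¬ G.Adj Z A := by
        intro h
        rcases mem3 hAsp.1 h.symm with h' | h' | h'
        · exact hZsp.2.2 h'
        · exact hZsp.2.1 h'
        · rw [h', ← h2] at hadjCpZ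
          exact hext hadjCpZ
      have hZD : ¬ G.Adj Z D := by
        intro h
        rcases mem3 hDsp.1 h.symm with h' | h' | h'
        · exact hZsp.2.2 h'
        · exact hZsp.2.1 h'
        · rw [h'] at hadjCpZ
          exact hext hadjCpZ
      rcases mem3 hZsp.1 hu with rfl | rfl | rfl
      · -- u = C
        rcases mem3 hCsp.1 huv with rfl | rfl | rfl
        · exact hZA hv
        · exact hZD hv
        · exact hvCp rfl
      · -- u = B
        rcases mem3 hBsp.1 huv with rfl | rfl | rfl
        · exact hZA hv
        · exact hZD hv
        · exact hvCp h1.symm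
      · exact huZ rfl
    · rw [← h1] at h2
      exact absurd h2.symm hext
  · rcases step2 with h2 | h2
    · rw [← h2] at h1
      exact absurd h1 hext
    · exact ⟨h1, h2⟩

end CubicAux
namespace CubicAux
open SimpleGraph

variable {V : Type*} [DecidableEq V] {G : SimpleGraph V} [∀ v, Fintype (G.neighborSet v)]

lemma nbhd_eq {v a b c : V} (hd : G.degree v = 3) (h1 : G.Adj v a) (h2 : G.Adj v b)
    (h3 : G.Adj v c) (hab : a ≠ b) (hac : a ≠ c) (hbc : b ≠ c) :
    G.neighborFinset v = {a, b, c} := by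
  have hsub : ({a, b, c} : Finset V) ⊆ G.neighborFinset v := by
    intro t ht
    simp only [Finset.mem_insert, Finset.mem_singleton] at ht
    rcases ht with rfl | rfl | rfl
    · exact (SimpleGraph.mem_neighborFinset _ _ _).mpr h1
    · exact (SimpleGraph.mem_neighborFinset _ _ _).mpr h2
    · exact (SimpleGraph.mem_neighborFinset _ _ _).mpr h3
  have hc3 : ({a, b, c} : Finset V).card = 3 := by
    rw [Finset.card_insert_of_notMem (by simp [hab, hac]),
      Finset.card_insert_of_notMem (by simp [hbc]), Finset.card_singleton]
  have hcard : (G.neighborFinset v).card ≤ ({a, b, c} : Finset V).card := by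
    rw [hc3]
    exact le_of_eq hd
  exact (Finset.eq_of_subset_of_card_le hsub hcard).symm

lemma ext_of_prev (hcubic : ∀ v : V, G.degree v = 3)
    (hnc : ∀ x y, G.Adj x y → ∀ z, ¬(G.Adj x z ∧ G.Adj y z))
    (hsq : ∀ x y, G.Adj x y → ∃ u v, G.Adj x u ∧ G.Adj y v ∧ G.Adj u v ∧ u ≠ y ∧ v ≠ x)
    {A B C D : V} (gs : GoodSq G A B C D)
    (hprev : G.Adj (third G A B C) (third G B A D)) :
    G.Adj (third G C A D) (third G D B C) := by
  set Cp := third G C A D with hCp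
  set Dp := third G D B C with hDp
  set Am := third G A B C with hAm
  set Bm := third G B A D with hBm
  have hCsp := third_spec (hcubic C) gs.ac.symm gs.cd gs.ad
  have hDsp := third_spec (hcubic D) gs.bd.symm gs.cd.symm gs.bc
  have hAsp := third_spec (hcubic A) gs.ab gs.ac gs.bc
  have hBsp := third_spec (hcubic B) gs.ab.symm gs.bd gs.ad
  rw [← hCp] at hCsp
  rw [← hDp] at hDsp
  rw [← hAm] at hAsp
  rw [← hBm] at hBsp
  have hadjCCp : G.Adj C Cp := third_adj (hcubic C) gs.ac.symm gs.cd gs.ad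
  have hadjDDp : G.Adj D Dp := third_adj (hcubic D) gs.bd.symm gs.cd.symm gs.bc
  have hadjAAm : G.Adj A Am := third_adj (hcubic A) gs.ab gs.ac gs.bc
  have hadjBBm : G.Adj B Bm := third_adj (hcubic B) gs.ab.symm gs.bd gs.ad
  by_contra hext
  rcases dichotomy hcubic hnc hsq gs with h | ⟨hCpAm, hDpBm⟩
  · exact hext h
  rw [← hCp, ← hAm] at hCpAm
  rw [← hDp, ← hBm] at hDpBm
  have hCpBm_ne : Cp ≠ Bm := fun h => hext (h ▸ hDpBm).symm
  have hDpAm_ne : Dp ≠ Am := fun h => hext (by rw [h]; exact hCpAm)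
  have hAmsp : G.neighborFinset Am = {A, Cp, Bm} :=
    nbhd_eq (hcubic Am) hadjAAm.symm hCpAm.symm hprev
      (Ne.symm hCsp.2.1) (Ne.symm hBsp.2.1) hCpBm_ne
  have hBmsp : G.neighborFinset Bm = {B, Dp, Am} :=
    nbhd_eq (hcubic Bm) hadjBBm.symm hDpBm.symm hprev.symm
      (Ne.symm hDsp.2.1) (Ne.symm hAsp.2.1) hDpAm_ne
  have hCAm_ne : C ≠ Am := Ne.symm hAsp.2.2
  set W := third G Cp C Am with hW
  have hWsp := third_spec (hcubic Cp) hadjCCp.symm hCpAm hCAm_ne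
  rw [← hW] at hWsp
  have hadjCpW : G.Adj Cp W := third_adj (hcubic Cp) hadjCCp.symm hCpAm hCAm_ne
  have hWB : W ≠ B := by
    intro h
    have hadjCpB : G.Adj Cp B := h ▸ hadjCpW
    rcases mem3 hBsp.1 hadjCpB.symm with h' | h' | h'
    · exact hCsp.2.1 h'
    · exact hCsp.2.2 h'
    · exact hCpBm_ne h'
  have hWA : ¬ G.Adj W A := by
    intro h
    rcases mem3 hAsp.1 h.symm with h' | h' | h'
    · exact hWB h'
    · exact hWsp.2.1 h'
    · exact hWsp.2.2 h'
  have hWD : ¬ G.Adj W D := by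
    intro h
    rcases mem3 hDsp.1 h.symm with h' | h' | h'
    · exact hWB h'
    · exact hWsp.2.1 h'
    · exact hext (h' ▸ hadjCpW)
  have hWBm : ¬ G.Adj W Bm := by
    intro h
    rcases mem3 hBmsp h.symm with h' | h' | h'
    · exact hWB h'
    · exact hext (h' ▸ hadjCpW)
    · exact hWsp.2.2 h'
  obtain ⟨u, v, hu, hv, huv, huW, hvCp⟩ := hsq Cp W hadjCpW
  rcases mem3 hWsp.1 hu with rfl | rfl | rfl
  · -- u = C
    rcases mem3 hCsp.1 huv with rfl | rfl | rfl
    · exact hWA hv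
    · exact hWD hv
    · exact hvCp rfl
  · -- u = Am
    rcases mem3 hAmsp huv with rfl | rfl | rfl
    · exact hWA hv
    · exact hvCp rfl
    · exact hWBm hv
  · exact huW rfl

lemma seed_exists (hcubic : ∀ v : V, G.degree v = 3)
    (hnc : ∀ x y, G.Adj x y → ∀ z, ¬(G.Adj x z ∧ G.Adj y z))
    (hsq : ∀ x y, G.Adj x y → ∃ u v, G.Adj x u ∧ G.Adj y v ∧ G.Adj u v ∧ u ≠ y ∧ v ≠ x)
    (hconn : G.Connected) :
    ∃ A B C D, GoodSq G A B C D ∧ G.Adj (third G A B C) (third G B A D) := by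
  obtain ⟨x0⟩ := hconn.nonempty
  have h3 : (G.neighborFinset x0).card = 3 := hcubic x0
  obtain ⟨y0, hy0⟩ := Finset.card_pos.mp (by rw [h3]; norm_num)
  have hxy : G.Adj x0 y0 := (SimpleGraph.mem_neighborFinset _ _ _).mp hy0
  obtain ⟨u, v, hu, hv, huv, huy, hvx⟩ := hsq x0 y0 hxy
  have gs0 : GoodSq G x0 u y0 v := ⟨hu, hv, hxy, huv, Ne.symm hvx, huy⟩
  by_cases hp : G.Adj (third G x0 u y0) (third G u x0 v)
  · exact ⟨x0, u, y0, v, gs0, hp⟩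
  have gsR : GoodSq G y0 v x0 u := ⟨hv, hu, hxy.symm, huv.symm, Ne.symm huy, hvx⟩
  have c1 : third G x0 y0 u = third G x0 u y0 :=
    third_comm (hcubic x0) hxy hu (Ne.symm huy)
  have c2 : third G u v x0 = third G u x0 v :=
    third_comm (hcubic u) huv hu.symm hvx
  rcases dichotomy hcubic hnc hsq gsR with h | ⟨hd1, hd2⟩
  · rw [c1, c2] at h
    exact absurd h hp
  · have gsT : GoodSq G x0 y0 u v := ⟨hxy, huv, hu, hv, Ne.symm hvx, Ne.symm huy⟩
    have c3 : third G y0 v x0 = third G y0 x0 v :=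
      third_comm (hcubic y0) hv hxy.symm hvx
    rw [c3] at hd1
    exact ⟨x0, y0, u, v, gsT, hd1⟩

end CubicAux
namespace CubicAux
open SimpleGraph

variable {V : Type*} [DecidableEq V] {G : SimpleGraph V} [∀ v, Fintype (G.neighborSet v)]

section Rigidity

variable (a b : ℕ → V)
  (nba : ∀ k, G.neighborFinset (a (k+1)) = {a k, b (k+1), a (k+2)})
  (had : ∀ k, a k ≠ b (k+1)) (hbc : ∀ k, b k ≠ a (k+1))
  (ha2a : ∀ k, a (k+2) ≠ a k) (ha2b : ∀ k, a (k+2) ≠ b (k+1))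
  (j p0 : ℕ) (hp0 : 0 < p0)
  (hper : ∀ k, a (k + p0) = a k ∧ b (k + p0) = b k)
  (hnt : ∀ t, 0 < t → t < j →
    ∀ k, a (k+t) ≠ a k ∧ a (k+t) ≠ b k ∧ b (k+t) ≠ a k ∧ b (k+t) ≠ b k)
  (hj : 3 ≤ j)

include nba had ha2a ha2b hnt hj in
lemma L1step : ∀ k, a (k+1+j) = a (k+1) →
    a (k+2+j) = a (k+2) ∧ b (k+1+j) = b (k+1) ∧ a (k+j) = a k := by
  intro k hc
  have h1 : G.neighborFinset (a (k+1)) = {a k, b (k+1), a (k+2)} := nba k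
  have h2 : G.neighborFinset (a (k+1)) = {a (k+j), b (k+1+j), a (k+2+j)} := by
    have h := nba (k+j)
    rw [show k+j+1 = k+1+j from by omega, show k+j+2 = k+2+j from by omega, hc] at h
    exact h
  have hmem : ∀ t : V, t ∈ ({a (k+j), b (k+1+j), a (k+2+j)} : Finset V) →
      t = a k ∨ t = b (k+1) ∨ t = a (k+2) := by
    intro t ht
    rw [← h2, h1] at ht
    simpa using ht
  have e1 : a (k+j) = a k := by
    rcases hmem (a (k+j)) (by simp) with h | h | h
    · exact h
    · exfalso
      refine (hnt (j-1) (by omega) (by omega) (k+1)).2.1 ?_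
      rw [show k+1+(j-1) = k+j from by omega]
      exact h
    · exfalso
      refine (hnt (j-2) (by omega) (by omega) (k+2)).1 ?_
      rw [show k+2+(j-2) = k+j from by omega]
      exact h
  have e3 : b (k+1+j) = b (k+1) := by
    rcases hmem (b (k+1+j)) (by simp) with h | h | h
    · exfalso
      rw [e1.symm] at h
      exact (had (k+j)) (by rw [show k+j+1 = k+1+j from by omega]; exact h.symm)
    · exact h
    · exfalso
      refine (hnt (j-1) (by omega) (by omega) (k+2)).2.2.1 ?_
      rw [show k+2+(j-1) = k+1+j from by omega]
      exact h
  have e2 : a (k+2+j) = a (k+2) := by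
    rcases hmem (a (k+2+j)) (by simp) with h | h | h
    · exfalso
      rw [e1.symm] at h
      exact (ha2a (k+j)) (by rw [show k+j+2 = k+2+j from by omega]; exact h)
    · exfalso
      rw [e3.symm] at h
      exact (ha2b (k+j)) (by
        rw [show k+j+2 = k+2+j from by omega, show k+j+1 = k+1+j from by omega]; exact h)
    · exact h
  exact ⟨e2, e3, e1⟩

include nba had ha2a ha2b hnt hj hper hp0 in
lemma L1glob (k0 : ℕ) (hcol : a (k0 + j) = a k0) :
    ∀ k, a (k + j) = a k ∧ b (k + j) = b k := by
  have hmult : ∀ (N k : ℕ), a (k + N * p0) = a k ∧ b (k + N * p0) = b k := by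
    intro N
    induction N with
    | zero => simp
    | succ n ih =>
      intro k
      have h1 := hper (k + n * p0)
      rw [show k + (n+1) * p0 = k + n * p0 + p0 from by ring]
      exact ⟨h1.1.trans (ih k).1, h1.2.trans (ih k).2⟩
  set k1 := k0 + p0 with hk1
  have hcol1 : a (k1 + j) = a k1 := by
    have h1 : a (k1 + j) = a (k0 + j) := by
      rw [show k1 + j = (k0 + j) + 1 * p0 from by omega]
      exact (hmult 1 (k0+j)).1
    have h2 : a k1 = a k0 := by
      rw [show k1 = k0 + 1 * p0 from by omega]
      exact (hmult 1 k0).1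
    rw [h1, h2, hcol]
  obtain ⟨k2, hk2⟩ : ∃ t, k1 = t + 1 := ⟨k0 + p0 - 1, by omega⟩
  have hInd : ∀ m, a (k1 + m + j) = a (k1 + m) := by
    intro m
    induction m with
    | zero => simpa using hcol1
    | succ n ih =>
      have := (L1step a b nba had ha2a ha2b j hnt hj (k2 + n)
        (by rw [show k2 + n + 1 = k1 + n from by omega]; exact ih)).1
      rw [show k2 + n + 2 = k1 + (n+1) from by omega] at this
      exact this
  have hIndb : ∀ m, b (k1 + m + j) = b (k1 + m) := by
    intro m
    rcases m with _ | n
    · have := (L1step a b nba had ha2a ha2b j hnt hj k2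
        (by rw [show k2 + 1 = k1 + 0 from by omega]; simpa using hcol1)).2.1
      rw [show k2 + 1 = k1 + 0 from by omega] at this
      exact this
    · have := (L1step a b nba had ha2a ha2b j hnt hj (k2 + n + 1)
        (by rw [show k2 + n + 1 + 1 = k1 + (n+1) from by omega]; exact hInd (n+1))).2.1
      rw [show k2 + n + 1 + 1 = k1 + (n+1) from by omega] at this
      exact this
  intro k
  have hK : k + k1 * p0 ≥ k1 := by
    have h := Nat.le_mul_of_pos_right k1 hp0
    omega
  set m := k + k1 * p0 - k1 with hm
  constructor
  · calc a (k + j) = a (k + j + k1 * p0) := ((hmult k1 (k+j)).1).symm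
    _ = a (k1 + m + j) := by rw [show k + j + k1 * p0 = k1 + m + j from by omega]
    _ = a (k1 + m) := hInd m
    _ = a (k + k1 * p0) := by rw [show k1 + m = k + k1 * p0 from by omega]
    _ = a k := (hmult k1 k).1
  · calc b (k + j) = b (k + j + k1 * p0) := ((hmult k1 (k+j)).2).symm
    _ = b (k1 + m + j) := by rw [show k + j + k1 * p0 = k1 + m + j from by omega]
    _ = b (k1 + m) := hIndb m
    _ = b (k + k1 * p0) := by rw [show k1 + m = k + k1 * p0 from by omega]
    _ = b k := (hmult k1 k).2

end Rigidity
end CubicAux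
namespace CubicAux
open SimpleGraph

variable {V : Type*} [DecidableEq V] {G : SimpleGraph V} [∀ v, Fintype (G.neighborSet v)]

section Rigidity2

variable (a b : ℕ → V)
  (nba : ∀ k, G.neighborFinset (a (k+1)) = {a k, b (k+1), a (k+2)})
  (nbb : ∀ k, G.neighborFinset (b (k+1)) = {b k, a (k+1), b (k+2)})
  (had : ∀ k, a k ≠ b (k+1))
  (ha2a : ∀ k, a (k+2) ≠ a k) (ha2b : ∀ k, a (k+2) ≠ b (k+1))
  (j p0 : ℕ) (hp0 : 0 < p0)
  (hper : ∀ k, a (k + p0) = a k ∧ b (k + p0) = b k)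
  (hnt : ∀ t, 0 < t → t < j →
    ∀ k, a (k+t) ≠ a k ∧ a (k+t) ≠ b k ∧ b (k+t) ≠ a k ∧ b (k+t) ≠ b k)
  (hj : 3 ≤ j)

include nba nbb had ha2a ha2b hnt hj in
lemma L2step : ∀ k, a (k+1+j) = b (k+1) →
    a (k+2+j) = b (k+2) ∧ b (k+1+j) = a (k+1) ∧ a (k+j) = b k := by
  intro k hc
  have h1 : G.neighborFinset (b (k+1)) = {b k, a (k+1), b (k+2)} := nbb k
  have h2 : G.neighborFinset (b (k+1)) = {a (k+j), b (k+1+j), a (k+2+j)} := by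
    have h := nba (k+j)
    rw [show k+j+1 = k+1+j from by omega, show k+j+2 = k+2+j from by omega, hc] at h
    exact h
  have hmem : ∀ t : V, t ∈ ({a (k+j), b (k+1+j), a (k+2+j)} : Finset V) →
      t = b k ∨ t = a (k+1) ∨ t = b (k+2) := by
    intro t ht
    rw [← h2, h1] at ht
    simpa using ht
  have e1 : a (k+j) = b k := by
    rcases hmem (a (k+j)) (by simp) with h | h | h
    · exact h
    · exfalso
      refine (hnt (j-1) (by omega) (by omega) (k+1)).1 ?_
      rw [show k+1+(j-1) = k+j from by omega]
      exact h
    · exfalso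
      refine (hnt (j-2) (by omega) (by omega) (k+2)).2.1 ?_
      rw [show k+2+(j-2) = k+j from by omega]
      exact h
  have e3 : b (k+1+j) = a (k+1) := by
    rcases hmem (b (k+1+j)) (by simp) with h | h | h
    · exfalso
      rw [e1.symm] at h
      exact (had (k+j)) (by rw [show k+j+1 = k+1+j from by omega]; exact h.symm)
    · exact h
    · exfalso
      refine (hnt (j-1) (by omega) (by omega) (k+2)).2.2.2 ?_
      rw [show k+2+(j-1) = k+1+j from by omega]
      exact h
  have e2 : a (k+2+j) = b (k+2) := by
    rcases hmem (a (k+2+j)) (by simp) with h | h | h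
    · exfalso
      rw [e1.symm] at h
      exact (ha2a (k+j)) (by rw [show k+j+2 = k+2+j from by omega]; exact h)
    · exfalso
      rw [e3.symm] at h
      exact (ha2b (k+j)) (by
        rw [show k+j+2 = k+2+j from by omega, show k+j+1 = k+1+j from by omega]; exact h)
    · exact h
  exact ⟨e2, e3, e1⟩

include nba nbb had ha2a ha2b hnt hj hper hp0 in
lemma L2glob (k0 : ℕ) (hcol : a (k0 + j) = b k0) :
    ∀ k, a (k + j) = b k ∧ b (k + j) = a k := by
  have hmult : ∀ (N k : ℕ), a (k + N * p0) = a k ∧ b (k + N * p0) = b k := by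
    intro N
    induction N with
    | zero => simp
    | succ n ih =>
      intro k
      have h1 := hper (k + n * p0)
      rw [show k + (n+1) * p0 = k + n * p0 + p0 from by ring]
      exact ⟨h1.1.trans (ih k).1, h1.2.trans (ih k).2⟩
  set k1 := k0 + p0 with hk1
  have hcol1 : a (k1 + j) = b k1 := by
    have h1 : a (k1 + j) = a (k0 + j) := by
      rw [show k1 + j = (k0 + j) + 1 * p0 from by omega]
      exact (hmult 1 (k0+j)).1
    have h2 : b k1 = b k0 := by
      rw [show k1 = k0 + 1 * p0 from by omega]
      exact (hmult 1 k0).2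
    rw [h1, h2, hcol]
  obtain ⟨k2, hk2⟩ : ∃ t, k1 = t + 1 := ⟨k0 + p0 - 1, by omega⟩
  have hInd : ∀ m, a (k1 + m + j) = b (k1 + m) := by
    intro m
    induction m with
    | zero => simpa using hcol1
    | succ n ih =>
      have := (L2step a b nba nbb had ha2a ha2b j hnt hj (k2 + n)
        (by rw [show k2 + n + 1 = k1 + n from by omega]; exact ih)).1
      rw [show k2 + n + 2 = k1 + (n+1) from by omega] at this
      exact this
  have hIndb : ∀ m, b (k1 + m + j) = a (k1 + m) := by
    intro m
    rcases m with _ | n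
    · have := (L2step a b nba nbb had ha2a ha2b j hnt hj k2
        (by rw [show k2 + 1 = k1 + 0 from by omega]; simpa using hcol1)).2.1
      rw [show k2 + 1 = k1 + 0 from by omega] at this
      exact this
    · have := (L2step a b nba nbb had ha2a ha2b j hnt hj (k2 + n + 1)
        (by rw [show k2 + n + 1 + 1 = k1 + (n+1) from by omega]; exact hInd (n+1))).2.1
      rw [show k2 + n + 1 + 1 = k1 + (n+1) from by omega] at this
      exact this
  intro k
  have hK : k + k1 * p0 ≥ k1 := by
    have h := Nat.le_mul_of_pos_right k1 hp0
    omega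
  set m := k + k1 * p0 - k1 with hm
  constructor
  · calc a (k + j) = a (k + j + k1 * p0) := ((hmult k1 (k+j)).1).symm
    _ = a (k1 + m + j) := by rw [show k + j + k1 * p0 = k1 + m + j from by omega]
    _ = b (k1 + m) := hInd m
    _ = b (k + k1 * p0) := by rw [show k1 + m = k + k1 * p0 from by omega]
    _ = b k := (hmult k1 k).2
  · calc b (k + j) = b (k + j + k1 * p0) := ((hmult k1 (k+j)).2).symm
    _ = b (k1 + m + j) := by rw [show k + j + k1 * p0 = k1 + m + j from by omega]
    _ = a (k1 + m) := hIndb m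
    _ = a (k + k1 * p0) := by rw [show k1 + m = k + k1 * p0 from by omega]
    _ = a k := (hmult k1 k).1

end Rigidity2
end CubicAux
namespace CubicAux
open SimpleGraph

variable {V : Type*} [DecidableEq V] {G : SimpleGraph V} [∀ v, Fintype (G.neighborSet v)]

theorem ladder_exists [Fintype V] (hcubic : ∀ v : V, G.degree v = 3)
    (hnc : ∀ x y, G.Adj x y → ∀ z, ¬(G.Adj x z ∧ G.Adj y z))
    (hsq : ∀ x y, G.Adj x y → ∃ u v, G.Adj x u ∧ G.Adj y v ∧ G.Adj u v ∧ u ≠ y ∧ v ≠ x)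
    (hconn : G.Connected) :
    (∃ (n : ℕ) (a b : ℕ → V), 4 ≤ n ∧
      (∀ k, G.neighborFinset (a (k+1)) = {a k, b (k+1), a (k+2)}) ∧
      (∀ k, G.neighborFinset (b (k+1)) = {b k, a (k+1), b (k+2)}) ∧
      (∀ k, G.Adj (a k) (b k)) ∧ (∀ k, G.Adj (a k) (a (k+1))) ∧
      (∀ k, G.Adj (b k) (b (k+1))) ∧
      (∀ k, a (k + n) = a k ∧ b (k + n) = b k) ∧
      (∀ t, 0 < t → t < n →
        ∀ k, a (k+t) ≠ a k ∧ a (k+t) ≠ b k ∧ b (k+t) ≠ a k ∧ b (k+t) ≠ b k)) ∨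
    (∃ (m : ℕ) (a : ℕ → V), 3 ≤ m ∧
      (∀ k, G.neighborFinset (a (k+1)) = {a k, a (k+1+m), a (k+2)}) ∧
      (∀ k, G.Adj (a k) (a (k+1))) ∧ (∀ k, G.Adj (a k) (a (k+m))) ∧
      (∀ k, a (k + 2*m) = a k) ∧
      (∀ t, 0 < t → t < 2*m → ∀ k, a (k+t) ≠ a k)) := by
  classical
  obtain ⟨A0, B0, C0, D0, gs0, hprev0⟩ := seed_exists hcubic hnc hsq hconn
  set Φ : V × V × V × V → V × V × V × V := fun s =>
    (s.2.2.1, s.2.2.2, third G s.2.2.1 s.1 s.2.2.2, third G s.2.2.2 s.2.1 s.2.2.1) with hPhi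
  set F : (V × V × V × V) → ℕ → V × V × V × V :=
    fun s0 k => Nat.rec s0 (fun _ t => Φ t) k with hF
  have hFsucc : ∀ s0 k, F s0 (k+1) = Φ (F s0 k) := fun s0 k => rfl
  -- the invariant
  set Inv : V × V × V × V → Prop := fun s =>
    GoodSq G s.1 s.2.1 s.2.2.1 s.2.2.2 ∧
      G.Adj (third G s.1 s.2.1 s.2.2.1) (third G s.2.1 s.1 s.2.2.2) with hInvDef
  have hInvStep : ∀ s, Inv s → Inv (Φ s) := by
    rintro ⟨A, B, C, D⟩ ⟨gs, hprev⟩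
    have hext := ext_of_prev hcubic hnc hsq gs hprev
    have hCsp := third_spec (hcubic C) gs.ac.symm gs.cd gs.ad
    have hDsp := third_spec (hcubic D) gs.bd.symm gs.cd.symm gs.bc
    have hadjCCp : G.Adj C (third G C A D) := third_adj (hcubic C) gs.ac.symm gs.cd gs.ad
    have hadjDDp : G.Adj D (third G D B C) := third_adj (hcubic D) gs.bd.symm gs.cd.symm gs.bc
    constructor
    · exact ⟨gs.cd, hext, hadjCCp, hadjDDp, Ne.symm hDsp.2.2, Ne.symm hCsp.2.2⟩
    · show G.Adj (third G C D (third G C A D)) (third G D C (third G D B C))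
      have e1 : third G C D (third G C A D) = A :=
        third_unique (hcubic C) gs.cd hadjCCp (Ne.symm hCsp.2.2) gs.ac.symm gs.ad
          (Ne.symm hCsp.2.1)
      have e2 : third G D C (third G D B C) = B :=
        third_unique (hcubic D) gs.cd.symm hadjDDp (Ne.symm hDsp.2.2) gs.bd.symm gs.bc
          (Ne.symm hDsp.2.1)
      rw [e1, e2]
      exact gs.ab
  have hInvAll : ∀ s0, Inv s0 → ∀ k, Inv (F s0 k) := by
    intro s0 h0 k
    induction k with
    | zero => exact h0
    | succ n ih => exact hInvStep _ ih
  -- pigeonhole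
  have hInv0 : Inv (A0, B0, C0, D0) := ⟨gs0, hprev0⟩
  obtain ⟨i, l, hne, heq⟩ :=
    Finite.exists_ne_map_eq_of_infinite (F (A0, B0, C0, D0))
  have hEx : ∃ i l, i < l ∧ F (A0, B0, C0, D0) i = F (A0, B0, C0, D0) l := by
    rcases hne.lt_or_gt with h | h
    · exact ⟨i, l, h, heq⟩
    · exact ⟨l, i, h, heq.symm⟩
  clear heq hne
  obtain ⟨i, l, hil, heq⟩ := hEx
  set s1 : V × V × V × V := F (A0, B0, C0, D0) i with hs1
  have hshift : ∀ k, F s1 k = F (A0, B0, C0, D0) (k + i) := by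
    intro k
    induction k with
    | zero =>
      show s1 = F (A0, B0, C0, D0) (0 + i)
      rw [Nat.zero_add]
    | succ n ih =>
      rw [hFsucc, ih, show n + 1 + i = (n + i) + 1 from by omega, hFsucc]
  set p0 := l - i with hp0def
  have hp0 : 0 < p0 := by omega
  have hbase : F s1 p0 = F s1 0 := by
    rw [hshift p0, hshift 0, show p0 + i = l from by omega, Nat.zero_add]
    exact heq.symm.trans hs1
  have hper0 : ∀ k, F s1 (k + p0) = F s1 k := by
    intro k
    induction k with
    | zero => simpa using hbase
    | succ n ih =>
      rw [show n + 1 + p0 = (n + p0) + 1 from by omega, hFsucc, ih, hFsucc]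
  have hInvs : ∀ k, Inv (F s1 k) := by
    intro k
    rw [hshift]
    exact hInvAll _ hInv0 (k + i)
  -- the two vertex sequences
  set a : ℕ → V := fun k => (F s1 k).1 with ha
  set b : ℕ → V := fun k => (F s1 k).2.1 with hb
  have hc1 : ∀ k, (F s1 k).2.2.1 = a (k+1) := fun k => rfl
  have hc2 : ∀ k, (F s1 k).2.2.2 = b (k+1) := fun k => rfl
  have gsk : ∀ k, GoodSq G (a k) (b k) (a (k+1)) (b (k+1)) := by
    intro k
    have h := (hInvs k).1
    rwa [hc1, hc2] at h
  have ha3 : ∀ k, a (k+2) = third G (a (k+1)) (a k) (b (k+1)) := fun k => rfl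
  have hb3 : ∀ k, b (k+2) = third G (b (k+1)) (b k) (a (k+1)) := fun k => rfl
  have spec_a : ∀ k, G.neighborFinset (a (k+1)) = {a k, b (k+1), a (k+2)} ∧
      a (k+2) ≠ a k ∧ a (k+2) ≠ b (k+1) := by
    intro k
    have h := third_spec (hcubic (a (k+1))) ((gsk k).ac.symm) ((gsk k).cd) ((gsk k).ad)
    rwa [← ha3 k] at h
  have spec_b : ∀ k, G.neighborFinset (b (k+1)) = {b k, a (k+1), b (k+2)} ∧
      b (k+2) ≠ b k ∧ b (k+2) ≠ a (k+1) := by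
    intro k
    have h := third_spec (hcubic (b (k+1))) ((gsk k).bd.symm) ((gsk k).cd.symm) ((gsk k).bc)
    rwa [← hb3 k] at h
  have hper : ∀ k, a (k + p0) = a k ∧ b (k + p0) = b k := by
    intro k
    constructor
    · show (F s1 (k+p0)).1 = (F s1 k).1
      rw [hper0 k]
    · show (F s1 (k+p0)).2.1 = (F s1 k).2.1
      rw [hper0 k]
  -- minimal collision distance
  have hPex : ∃ t, 0 < t ∧ ∃ k,
      (a (k+t) = a k ∨ a (k+t) = b k ∨ b (k+t) = a k ∨ b (k+t) = b k) :=
    ⟨p0, hp0, 0, Or.inl (by simpa using (hper 0).1)⟩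
  have hjP := Nat.find_spec hPex
  set j := Nat.find hPex with hjdef
  have hnt : ∀ t, 0 < t → t < j →
      ∀ k, a (k+t) ≠ a k ∧ a (k+t) ≠ b k ∧ b (k+t) ≠ a k ∧ b (k+t) ≠ b k := by
    intro t ht htj k
    have h := Nat.find_min hPex htj
    push_neg at h
    exact h ht k
  obtain ⟨k0, hk0⟩ := hjP.2
  have hj3 : 3 ≤ j := by
    by_contra hlt
    have h0 : 0 < j := hjP.1
    have hcase : j = 1 ∨ j = 2 := by omega
    rcases hcase with h1 | h2
    · rw [h1] at hk0
      rcases hk0 with h | h | h | h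
      · exact ((gsk k0).ac.ne) h.symm
      · exact ((gsk k0).bc) h.symm
      · exact ((gsk k0).ad) h.symm
      · exact ((gsk k0).bd.ne) h.symm
    · rw [h2] at hk0
      rcases hk0 with h | h | h | h
      · exact (spec_a k0).2.1 h
      · refine hnc (a k0) (b k0) ((gsk k0).ab) (a (k0+1)) ⟨(gsk k0).ac, ?_⟩
        have hx := (gsk (k0+1)).ac
        rw [show k0+1+1 = k0+2 from rfl, h] at hx
        exact hx.symm
      · refine hnc (a k0) (b k0) ((gsk k0).ab) (b (k0+1)) ⟨?_, (gsk k0).bd⟩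
        have hx := (gsk (k0+1)).bd
        rw [show k0+1+1 = k0+2 from rfl, h] at hx
        exact hx.symm
      · exact (spec_b k0).2.1 h
  have nbaL : ∀ k, G.neighborFinset (a (k+1)) = {a k, b (k+1), a (k+2)} :=
    fun k => (spec_a k).1
  have nbbL : ∀ k, G.neighborFinset (b (k+1)) = {b k, a (k+1), b (k+2)} :=
    fun k => (spec_b k).1
  have hadL : ∀ k, a k ≠ b (k+1) := fun k => (gsk k).ad
  have hbcL : ∀ k, b k ≠ a (k+1) := fun k => (gsk k).bc
  have ha2aL : ∀ k, a (k+2) ≠ a k := fun k => (spec_a k).2.1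
  have ha2bL : ∀ k, a (k+2) ≠ b (k+1) := fun k => (spec_a k).2.2
  have hb2bL : ∀ k, b (k+2) ≠ b k := fun k => (spec_b k).2.1
  have hb2aL : ∀ k, b (k+2) ≠ a (k+1) := fun k => (spec_b k).2.2
  have hperS : ∀ k, b (k + p0) = b k ∧ a (k + p0) = a k := fun k => ⟨(hper k).2, (hper k).1⟩
  have hntS : ∀ t, 0 < t → t < j →
      ∀ k, b (k+t) ≠ b k ∧ b (k+t) ≠ a k ∧ a (k+t) ≠ b k ∧ a (k+t) ≠ a k := by
    intro t h1 h2 k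
    have h := hnt t h1 h2 k
    tauto
  have hdisj : (∀ k, a (k + j) = a k ∧ b (k + j) = b k) ∨
      (∀ k, a (k + j) = b k ∧ b (k + j) = a k) := by
    rcases hk0 with h | h | h | h
    · exact Or.inl (L1glob a b nbaL hadL ha2aL ha2bL j p0 hp0 hper hnt hj3 k0 h)
    · exact Or.inr (L2glob a b nbaL nbbL hadL ha2aL ha2bL j p0 hp0 hper hnt hj3 k0 h)
    · have h' := L2glob b a nbbL nbaL hbcL hb2bL hb2aL j p0 hp0 hperS hntS hj3 k0 h
      exact Or.inr (fun k => ⟨(h' k).2, (h' k).1⟩)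
    · have h' := L1glob b a nbbL hbcL hb2bL hb2aL j p0 hp0 hperS hntS hj3 k0 h
      exact Or.inl (fun k => ⟨(h' k).2, (h' k).1⟩)
  rcases hdisj with hP | hM
  · -- prism case
    left
    have hj4 : 4 ≤ j := by
      by_contra hlt
      have hj3' : j = 3 := by omega
      have h30 : a 3 = a 0 := by
        have := (hP 0).1
        rwa [show 0 + j = 3 from by omega] at this
      have h1 : G.Adj (a 2) (a 0) := by
        have h2 := (gsk 2).ac
        rw [show (2:ℕ)+1 = 3 from rfl, h30] at h2
        exact h2
      exact hnc (a 0) (a 1) ((gsk 0).ac) (a 2) ⟨h1.symm, (gsk 1).ac⟩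
    exact ⟨j, a, b, hj4, nbaL, nbbL, fun k => (gsk k).ab, fun k => (gsk k).ac,
      fun k => (gsk k).bd, hP, hnt⟩
  · -- möbius case
    right
    refine ⟨j, a, hj3, ?_, fun k => (gsk k).ac, ?_, ?_, ?_⟩
    · intro k
      have h := nbaL k
      rwa [← (hM (k+1)).1] at h
    · intro k
      have h : a (k + j) = b k := (hM k).1
      rw [h]
      exact (gsk k).ab
    · intro k
      have e1 : a (k + 2*j) = b (k + j) := by
        rw [show k + 2*j = (k+j) + j from by ring]
        exact (hM (k+j)).1
      rw [e1]
      exact (hM k).2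
    · intro t ht ht2 k hcon
      rcases Nat.lt_trichotomy t j with hlt | rfl | hgt
      · exact (hnt t ht hlt k).1 hcon
      · rw [(hM k).1] at hcon
        exact ((gsk k).ab.ne') hcon
      · have hr : 0 < t - j ∧ t - j < j := by omega
        have e : a (k + t) = b (k + (t - j)) := by
          rw [show k + t = (k + (t-j)) + j from by omega]
          exact (hM (k + (t-j))).1
        rw [e] at hcon
        exact (hnt (t-j) hr.1 hr.2 k).2.2.1 hcon

end CubicAux
namespace CubicAux
open SimpleGraph

variable {V : Type*} [DecidableEq V] {G : SimpleGraph V} [∀ v, Fintype (G.neighborSet v)]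

lemma natCast_pred_eq_neg_one {n : ℕ} [NeZero n] (hn : 1 < n) :
    ((n - 1 : ℕ) : ZMod n) = -1 := by
  have h : ((n - 1 : ℕ) : ZMod n) + 1 = 0 := by
    have : ((n - 1 : ℕ) : ZMod n) + ((1 : ℕ) : ZMod n) = ((n - 1 + 1 : ℕ) : ZMod n) := by
      push_cast
      ring
    rw [show ((1:ℕ) : ZMod n) = 1 from by push_cast; ring] at this
    rw [this, show n - 1 + 1 = n from by omega, ZMod.natCast_self]
  linear_combination h

lemma prism_iso (hconn : G.Connected) (n : ℕ) (a b : ℕ → V) (hn : 4 ≤ n)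
    (nba : ∀ k, G.neighborFinset (a (k+1)) = {a k, b (k+1), a (k+2)})
    (nbb : ∀ k, G.neighborFinset (b (k+1)) = {b k, a (k+1), b (k+2)})
    (hab : ∀ k, G.Adj (a k) (b k)) (haa : ∀ k, G.Adj (a k) (a (k+1)))
    (hbb : ∀ k, G.Adj (b k) (b (k+1)))
    (hper : ∀ k, a (k + n) = a k ∧ b (k + n) = b k)
    (hsep : ∀ t, 0 < t → t < n →
      ∀ k, a (k+t) ≠ a k ∧ a (k+t) ≠ b k ∧ b (k+t) ≠ a k ∧ b (k+t) ≠ b k) :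
    Nonempty (G ≃g prismGraph n) := by
  haveI : NeZero n := ⟨by omega⟩
  haveI : Fact (1 < n) := ⟨by omega⟩
  have hmult : ∀ (N k : ℕ), a (k + N * n) = a k ∧ b (k + N * n) = b k := by
    intro N
    induction N with
    | zero => simp
    | succ m ih =>
      intro k
      have h1 := hper (k + m * n)
      rw [show k + (m+1) * n = k + m * n + n from by ring]
      exact ⟨h1.1.trans (ih k).1, h1.2.trans (ih k).2⟩
  have hmod : ∀ k, a k = a (k % n) ∧ b k = b (k % n) := by
    intro k
    constructor
    · conv_lhs => rw [show k = k % n + (k / n) * n from by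
        rw [Nat.mul_comm, Nat.mod_add_div]]
      exact (hmult (k / n) (k % n)).1
    · conv_lhs => rw [show k = k % n + (k / n) * n from by
        rw [Nat.mul_comm, Nat.mod_add_div]]
      exact (hmult (k / n) (k % n)).2
  have hcong : ∀ s t, s % n = t % n → a s = a t ∧ b s = b t := by
    intro s t h
    exact ⟨(hmod s).1.trans (h ▸ (hmod t).1.symm), (hmod s).2.trans (h ▸ (hmod t).2.symm)⟩
  -- global injectivity facts
  have haa_ne : ∀ s t, a s = a t → s % n = t % n := by
    intro s t h
    by_contra hne
    have h1 : a (s % n) = a (t % n) := ((hmod s).1.symm.trans h).trans (hmod t).1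
    have hs := Nat.mod_lt s (show 0 < n by omega)
    have ht := Nat.mod_lt t (show 0 < n by omega)
    rcases Nat.lt_or_ge (s % n) (t % n) with hlt | hge
    · exact (hsep (t % n - s % n) (by omega) (by omega) (s % n)).1
        (by rw [show s % n + (t % n - s % n) = t % n from by omega]; exact h1.symm)
    · have hlt2 : t % n < s % n := by omega
      exact (hsep (s % n - t % n) (by omega) (by omega) (t % n)).1
        (by rw [show t % n + (s % n - t % n) = s % n from by omega]; exact h1)
  have hbb_ne : ∀ s t, b s = b t → s % n = t % n := by
    intro s t h
    by_contra hne
    have h1 : b (s % n) = b (t % n) := ((hmod s).2.symm.trans h).trans (hmod t).2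
    have hs := Nat.mod_lt s (show 0 < n by omega)
    have ht := Nat.mod_lt t (show 0 < n by omega)
    rcases Nat.lt_or_ge (s % n) (t % n) with hlt | hge
    · exact (hsep (t % n - s % n) (by omega) (by omega) (s % n)).2.2.2
        (by rw [show s % n + (t % n - s % n) = t % n from by omega]; exact h1.symm)
    · have hlt2 : t % n < s % n := by omega
      exact (hsep (s % n - t % n) (by omega) (by omega) (t % n)).2.2.2
        (by rw [show t % n + (s % n - t % n) = s % n from by omega]; exact h1)
  have hab_ne : ∀ s t, a s ≠ b t := by
    intro s t h
    have h1 : a (s % n) = b (t % n) := ((hmod s).1.symm.trans h).trans (hmod t).2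
    have hs := Nat.mod_lt s (show 0 < n by omega)
    have ht := Nat.mod_lt t (show 0 < n by omega)
    rcases Nat.lt_trichotomy (s % n) (t % n) with hlt | heq | hgt
    · exact (hsep (t % n - s % n) (by omega) (by omega) (s % n)).2.2.1
        (by rw [show s % n + (t % n - s % n) = t % n from by omega]; exact h1.symm)
    · rw [heq] at h1
      exact (hab (t % n)).ne h1
    · exact (hsep (s % n - t % n) (by omega) (by omega) (t % n)).2.1
        (by rw [show t % n + (s % n - t % n) = s % n from by omega]; exact h1)
  -- the map
  set φ : ZMod n × Bool → V := fun p => cond p.2 (b p.1.val) (a p.1.val) with hphi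
  have hphiF : ∀ i : ZMod n, φ (i, false) = a i.val := fun i => rfl
  have hphiT : ∀ i : ZMod n, φ (i, true) = b i.val := fun i => rfl
  have hinj : Function.Injective φ := by
    rintro ⟨i, c⟩ ⟨i', c'⟩ h
    have hvi := ZMod.val_lt i
    have hvi' := ZMod.val_lt i'
    cases c <;> cases c'
    · rw [hphiF, hphiF] at h
      have := haa_ne _ _ h
      rw [Nat.mod_eq_of_lt hvi, Nat.mod_eq_of_lt hvi'] at this
      rw [ZMod.val_injective n this]
    · exact absurd (hphiF i ▸ hphiT i' ▸ h) (hab_ne _ _)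
    · exact absurd ((hphiT i ▸ hphiF i' ▸ h).symm) (hab_ne _ _)
    · rw [hphiT, hphiT] at h
      have := hbb_ne _ _ h
      rw [Nat.mod_eq_of_lt hvi, Nat.mod_eq_of_lt hvi'] at this
      rw [ZMod.val_injective n this]
  have hclose : ∀ u w, G.Adj u w → (∃ s, u = a s ∨ u = b s) → ∃ s, w = a s ∨ w = b s := by
    rintro u w hadj ⟨s, rfl | rfl⟩
    · have hNa : G.neighborFinset (a s) = {a (s+n-1), b (s+n), a (s+n+1)} := by
        have h := nba (s+n-1)
        rw [show s+n-1+1 = s+n from by omega, show s+n-1+2 = s+n+1 from by omega,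
          (hper s).1] at h
        exact h
      rcases mem3 hNa hadj with h | h | h
      · exact ⟨s+n-1, Or.inl h⟩
      · exact ⟨s+n, Or.inr h⟩
      · exact ⟨s+n+1, Or.inl h⟩
    · have hNb : G.neighborFinset (b s) = {b (s+n-1), a (s+n), b (s+n+1)} := by
        have h := nbb (s+n-1)
        rw [show s+n-1+1 = s+n from by omega, show s+n-1+2 = s+n+1 from by omega,
          (hper s).2] at h
        exact h
      rcases mem3 hNb hadj with h | h | h
      · exact ⟨s+n-1, Or.inr h⟩
      · exact ⟨s+n, Or.inl h⟩
      · exact ⟨s+n+1, Or.inr h⟩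
  have hsurj : Function.Surjective φ := by
    intro v
    have hwalk : ∀ (u v' : V) (w : G.Walk u v'), (∃ s, u = a s ∨ u = b s) →
        ∃ s, v' = a s ∨ v' = b s := by
      intro u v' w
      induction w with
      | nil => exact id
      | cons h p ih => exact fun hu => ih (hclose _ _ h hu)
    obtain ⟨w⟩ := hconn (a 0) v
    obtain ⟨s, hs | hs⟩ := hwalk _ _ w ⟨0, Or.inl rfl⟩
    · refine ⟨((s : ZMod n), false), ?_⟩
      rw [hphiF, hs]
      exact ((hcong _ _ (by rw [ZMod.val_natCast]; exact Nat.mod_mod_of_dvd _ dvd_rfl)).1)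
    · refine ⟨((s : ZMod n), true), ?_⟩
      rw [hphiT, hs]
      exact ((hcong _ _ (by rw [ZMod.val_natCast]; exact Nat.mod_mod_of_dvd _ dvd_rfl)).2)
  -- index conversion helpers
  have hvaladd1 : ∀ i : ZMod n, a ((i+1).val) = a (i.val + 1) ∧ b ((i+1).val) = b (i.val + 1) := by
    intro i
    apply hcong
    rw [ZMod.val_add, ZMod.val_one]
    exact Nat.mod_mod_of_dvd _ dvd_rfl
  have hfwd : ∀ p q, (prismGraph n).Adj p q → G.Adj (φ p) (φ q) := by
    have key : ∀ (i i' : ZMod n) (c : Bool), i' = i + 1 →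
        G.Adj (φ (i, c)) (φ (i', c)) := by
      intro i i' c hii
      subst hii
      cases c
      · rw [hphiF, hphiF, (hvaladd1 i).1]
        exact haa i.val
      · rw [hphiT, hphiT, (hvaladd1 i).2]
        exact hbb i.val
    have keyr : ∀ (i : ZMod n) (c c' : Bool), c ≠ c' → G.Adj (φ (i, c)) (φ (i, c')) := by
      intro i c c' hcc
      cases c <;> cases c'
      · exact absurd rfl hcc
      · exact hab i.val
      · exact (hab i.val).symm
      · exact absurd rfl hcc
    rintro ⟨i, c⟩ ⟨i', c'⟩ hadj
    rw [prismGraph, SimpleGraph.fromRel_adj] at hadj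
    obtain ⟨hne, h | h⟩ := hadj
    · rcases h with ⟨h1, h2⟩ | ⟨h1, h2⟩
      · have : c = c' := h1
        subst this
        exact key i i' c h2
      · have : i = i' := h1
        subst this
        exact keyr i c c' h2
    · rcases h with ⟨h1, h2⟩ | ⟨h1, h2⟩
      · have : c' = c := h1
        subst this
        exact (key i' i c' h2).symm
      · have : i' = i := h1
        subst this
        exact (keyr i' c' c h2).symm
  -- neighborhoods of image vertices
  have hNa : ∀ i : ZMod n, G.neighborFinset (a i.val) =
      {a (i.val+n-1), b (i.val+n), a (i.val+n+1)} := by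
    intro i
    have h := nba (i.val+n-1)
    rw [show i.val+n-1+1 = i.val+n from by omega, show i.val+n-1+2 = i.val+n+1 from by omega,
      (hper i.val).1] at h
    exact h
  have hNb : ∀ i : ZMod n, G.neighborFinset (b i.val) =
      {b (i.val+n-1), a (i.val+n), b (i.val+n+1)} := by
    intro i
    have h := nbb (i.val+n-1)
    rw [show i.val+n-1+1 = i.val+n from by omega, show i.val+n-1+2 = i.val+n+1 from by omega,
      (hper i.val).2] at h
    exact h
  -- recovering the ZMod index from an equation between sequence values
  have hrecover : ∀ (i' : ZMod n) (s : ℕ), i'.val % n = s % n → i' = ((s : ℕ) : ZMod n) := by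
    intro i' s h
    have h2 : ((i'.val : ℕ) : ZMod n) = ((s : ℕ) : ZMod n) := by
      rw [ZMod.natCast_eq_natCast_iff]
      exact h
    rw [← h2, ZMod.natCast_val, ZMod.cast_id]
  have hcast_sub1 : ∀ i : ZMod n, ((i.val + n - 1 : ℕ) : ZMod n) = i - 1 := by
    intro i
    rw [show i.val + n - 1 = i.val + (n-1) from by omega]
    push_cast
    rw [natCast_pred_eq_neg_one (by omega), ZMod.natCast_val, ZMod.cast_id]
    ring
  have hcast_add0 : ∀ i : ZMod n, ((i.val + n : ℕ) : ZMod n) = i := by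
    intro i
    push_cast
    rw [ZMod.natCast_self, ZMod.natCast_val, ZMod.cast_id]
    ring
  have hcast_add1 : ∀ i : ZMod n, ((i.val + n + 1 : ℕ) : ZMod n) = i + 1 := by
    intro i
    push_cast
    rw [ZMod.natCast_self, ZMod.natCast_val, ZMod.cast_id]
    ring
  have hone_ne : (1 : ZMod n) ≠ 0 := one_ne_zero
  have hAdjPrism1 : ∀ i : ZMod n, ∀ c : Bool, (prismGraph n).Adj (i, c) (i+1, c) := by
    intro i c
    rw [prismGraph, SimpleGraph.fromRel_adj]
    constructor
    · intro h
      have : i = i + 1 := congrArg Prod.fst h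
      exact hone_ne (by linear_combination this.symm)
    · exact Or.inl (Or.inl ⟨rfl, rfl⟩)
  have hAdjPrismR : ∀ i : ZMod n, ∀ c c' : Bool, c ≠ c' → (prismGraph n).Adj (i, c) (i, c') := by
    intro i c c' hcc
    rw [prismGraph, SimpleGraph.fromRel_adj]
    constructor
    · intro h
      exact hcc (congrArg Prod.snd h)
    · exact Or.inl (Or.inr ⟨rfl, hcc⟩)
  have hba_ne : ∀ s t, b s ≠ a t := fun s t h => hab_ne t s h.symm
  have hbwd : ∀ p q, G.Adj (φ p) (φ q) → (prismGraph n).Adj p q := by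
    rintro ⟨i, c⟩ ⟨i', c'⟩ hadj
    cases c
    · rw [hphiF] at hadj
      rcases mem3 (hNa i) hadj with h | h | h
      · -- φ q = a (i.val+n-1)
        cases c'
        · rw [hphiF] at h
          have hre := hrecover i' _ (haa_ne _ _ h)
          rw [hcast_sub1] at hre
          rw [hre]
          have hA := hAdjPrism1 (i-1) false
          rw [sub_add_cancel] at hA
          exact hA.symm
        · rw [hphiT] at h
          exact absurd h (hba_ne _ _)
      · -- φ q = b (i.val+n)
        cases c'
        · rw [hphiF] at h
          exact absurd h (hab_ne _ _)
        · rw [hphiT] at h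
          have hre := hrecover i' _ (hbb_ne _ _ h)
          rw [hcast_add0] at hre
          rw [hre]
          exact hAdjPrismR i false true (by simp)
      · -- φ q = a (i.val+n+1)
        cases c'
        · rw [hphiF] at h
          have hre := hrecover i' _ (haa_ne _ _ h)
          rw [hcast_add1] at hre
          rw [hre]
          exact hAdjPrism1 i false
        · rw [hphiT] at h
          exact absurd h (hba_ne _ _)
    · rw [hphiT] at hadj
      rcases mem3 (hNb i) hadj with h | h | h
      · cases c'
        · rw [hphiF] at h
          exact absurd h (hab_ne _ _)
        · rw [hphiT] at h
          have hre := hrecover i' _ (hbb_ne _ _ h)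
          rw [hcast_sub1] at hre
          rw [hre]
          have hA := hAdjPrism1 (i-1) true
          rw [sub_add_cancel] at hA
          exact hA.symm
      · cases c'
        · rw [hphiF] at h
          have hre := hrecover i' _ (haa_ne _ _ h)
          rw [hcast_add0] at hre
          rw [hre]
          exact hAdjPrismR i true false (by simp)
        · rw [hphiT] at h
          exact absurd h (hba_ne _ _)
      · cases c'
        · rw [hphiF] at h
          exact absurd h (hab_ne _ _)
        · rw [hphiT] at h
          have hre := hrecover i' _ (hbb_ne _ _ h)
          rw [hcast_add1] at hre
          rw [hre]
          exact hAdjPrism1 i true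
  exact ⟨(SimpleGraph.Iso.symm ⟨Equiv.ofBijective φ ⟨hinj, hsurj⟩, fun {p q} => ⟨hbwd p q, hfwd p q⟩⟩)⟩

end CubicAux
namespace CubicAux
open SimpleGraph

variable {V : Type*} [DecidableEq V] {G : SimpleGraph V} [∀ v, Fintype (G.neighborSet v)]

lemma mobius_iso (hconn : G.Connected) (m : ℕ) (a : ℕ → V) (hm : 3 ≤ m)
    (nbs : ∀ k, G.neighborFinset (a (k+1)) = {a k, a (k+1+m), a (k+2)})
    (haa : ∀ k, G.Adj (a k) (a (k+1))) (ham : ∀ k, G.Adj (a k) (a (k+m)))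
    (hper : ∀ k, a (k + 2*m) = a k)
    (hsep : ∀ t, 0 < t → t < 2*m → ∀ k, a (k+t) ≠ a k) :
    Nonempty (G ≃g mobiusLadder m) := by
  set n := 2*m with hn
  haveI : NeZero n := ⟨by omega⟩
  haveI : Fact (1 < n) := ⟨by omega⟩
  have hmlt : m < n := by omega
  have hmult : ∀ (N k : ℕ), a (k + N * n) = a k := by
    intro N
    induction N with
    | zero => simp
    | succ q ih =>
      intro k
      have h1 := hper (k + q * n)
      rw [show k + (q+1) * n = k + q * n + 2*m from by rw [hn]; ring]
      exact h1.trans (ih k)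
  have hmod : ∀ k, a k = a (k % n) := by
    intro k
    conv_lhs => rw [show k = k % n + (k / n) * n from by
      rw [Nat.mul_comm, Nat.mod_add_div]]
    exact hmult (k / n) (k % n)
  have hcong : ∀ s t, s % n = t % n → a s = a t := by
    intro s t h
    exact (hmod s).trans (h ▸ (hmod t).symm)
  have ha_ne : ∀ s t, a s = a t → s % n = t % n := by
    intro s t h
    by_contra hne
    have h1 : a (s % n) = a (t % n) := ((hmod s).symm.trans h).trans (hmod t)
    have hs := Nat.mod_lt s (show 0 < n by omega)
    have ht := Nat.mod_lt t (show 0 < n by omega)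
    rcases Nat.lt_or_ge (s % n) (t % n) with hlt | hge
    · exact (hsep (t % n - s % n) (by omega) (by omega) (s % n))
        (by rw [show s % n + (t % n - s % n) = t % n from by omega]; exact h1.symm)
    · have hlt2 : t % n < s % n := by omega
      exact (hsep (s % n - t % n) (by omega) (by omega) (t % n))
        (by rw [show t % n + (s % n - t % n) = s % n from by omega]; exact h1)
  set φ : ZMod (2*m) → V := fun i => a i.val with hphi
  have hinj : Function.Injective φ := by
    intro i i' h
    have hvi : i.val < n := ZMod.val_lt i
    have hvi' : i'.val < n := ZMod.val_lt i'
    have := ha_ne _ _ h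
    rw [Nat.mod_eq_of_lt hvi, Nat.mod_eq_of_lt hvi'] at this
    exact ZMod.val_injective _ this
  have hNa : ∀ s, G.neighborFinset (a s) = {a (s+n-1), a (s+n+m), a (s+n+1)} := by
    intro s
    have h := nbs (s+n-1)
    rw [show s+n-1+1 = s+n from by omega, show s+n-1+2 = s+n+1 from by omega,
      hper s] at h
    exact h
  have hsurj : Function.Surjective φ := by
    intro v
    have hclose : ∀ u w, G.Adj u w → (∃ s, u = a s) → ∃ s, w = a s := by
      rintro u w hadj ⟨s, rfl⟩
      rcases mem3 (hNa s) hadj with h | h | h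
      · exact ⟨s+n-1, h⟩
      · exact ⟨s+n+m, h⟩
      · exact ⟨s+n+1, h⟩
    have hwalk : ∀ (u v' : V) (w : G.Walk u v'), (∃ s, u = a s) → ∃ s, v' = a s := by
      intro u v' w
      induction w with
      | nil => exact id
      | cons h p ih => exact fun hu => ih (hclose _ _ h hu)
    obtain ⟨w⟩ := hconn (a 0) v
    obtain ⟨s, hs⟩ := hwalk _ _ w ⟨0, rfl⟩
    refine ⟨((s : ZMod (2*m))), ?_⟩
    show a ((s : ZMod (2*m)).val) = v
    rw [hs]
    exact hcong _ _ (by rw [ZMod.val_natCast]; exact Nat.mod_mod_of_dvd _ dvd_rfl)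
  have hvaladd1 : ∀ i : ZMod (2*m), a ((i+1).val) = a (i.val + 1) := by
    intro i
    apply hcong
    rw [ZMod.val_add, ZMod.val_one]
    exact Nat.mod_mod_of_dvd _ dvd_rfl
  have hvaladdm : ∀ i : ZMod (2*m), a ((i + (m : ZMod (2*m))).val) = a (i.val + m) := by
    intro i
    apply hcong
    rw [ZMod.val_add, ZMod.val_natCast, Nat.mod_eq_of_lt hmlt]
    exact Nat.mod_mod_of_dvd _ dvd_rfl
  have hfwd : ∀ p q, (mobiusLadder m).Adj p q → G.Adj (φ p) (φ q) := by
    have key1 : ∀ p : ZMod (2*m), G.Adj (φ p) (φ (p+1)) := by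
      intro p
      show G.Adj (a p.val) (a ((p+1).val))
      rw [hvaladd1]
      exact haa p.val
    have key2 : ∀ p : ZMod (2*m), G.Adj (φ p) (φ (p + (m : ZMod (2*m)))) := by
      intro p
      show G.Adj (a p.val) (a ((p + (m : ZMod (2*m))).val))
      rw [hvaladdm]
      exact ham p.val
    rintro p q hadj
    rw [mobiusLadder, SimpleGraph.fromRel_adj] at hadj
    obtain ⟨hne, (h | h) | (h | h)⟩ := hadj
    · rw [h]; exact key1 p
    · rw [h]; exact key2 p
    · rw [h]; exact (key1 q).symm
    · rw [h]; exact (key2 q).symm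
  have hmne : ((m : ℕ) : ZMod (2*m)) ≠ 0 := by
    intro h
    rw [ZMod.natCast_eq_zero_iff] at h
    have := Nat.le_of_dvd (by omega) h
    omega
  have hone_ne : (1 : ZMod (2*m)) ≠ 0 := one_ne_zero
  have hAdj1 : ∀ p : ZMod (2*m), (mobiusLadder m).Adj p (p+1) := by
    intro p
    rw [mobiusLadder, SimpleGraph.fromRel_adj]
    exact ⟨fun h => hone_ne (by linear_combination -h), Or.inl (Or.inl rfl)⟩
  have hAdjm : ∀ p : ZMod (2*m), (mobiusLadder m).Adj p (p + (m : ZMod (2*m))) := by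
    intro p
    rw [mobiusLadder, SimpleGraph.fromRel_adj]
    exact ⟨fun h => hmne (by linear_combination -h), Or.inl (Or.inr rfl)⟩
  have hrecover : ∀ (q : ZMod (2*m)) (s : ℕ), q.val % n = s % n → q = ((s : ℕ) : ZMod (2*m)) := by
    intro q s h
    have h2 : ((q.val : ℕ) : ZMod (2*m)) = ((s : ℕ) : ZMod (2*m)) := by
      rw [ZMod.natCast_eq_natCast_iff]
      exact h
    rw [← h2, ZMod.natCast_val, ZMod.cast_id]
  have hbwd : ∀ p q, G.Adj (φ p) (φ q) → (mobiusLadder m).Adj p q := by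
    intro p q hadj
    have hadj' : G.Adj (a p.val) (a q.val) := hadj
    have hcast0 : ((n : ℕ) : ZMod (2*m)) = 0 := by
      show ((2*m : ℕ) : ZMod (2*m)) = 0
      exact ZMod.natCast_self (2*m)
    have hp : ((p.val : ℕ) : ZMod (2*m)) = p := by rw [ZMod.natCast_val, ZMod.cast_id]
    rcases mem3 (hNa p.val) hadj' with h | h | h
    · have hre := hrecover q _ (ha_ne _ _ h)
      have : q = p - 1 := by
        rw [hre, show p.val + n - 1 = p.val + (n-1) from by omega]
        push_cast
        rw [natCast_pred_eq_neg_one (show 1 < n by omega), hp]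
        ring
      rw [this]
      have hA := hAdj1 (p-1)
      rw [sub_add_cancel] at hA
      exact hA.symm
    · have hre := hrecover q _ (ha_ne _ _ h)
      have : q = p + (m : ZMod (2*m)) := by
        rw [hre]
        push_cast
        rw [hcast0, hp]
        ring
      rw [this]
      exact hAdjm p
    · have hre := hrecover q _ (ha_ne _ _ h)
      have : q = p + 1 := by
        rw [hre]
        push_cast
        rw [hcast0, hp]
        ring
      rw [this]
      exact hAdj1 p
  exact ⟨(SimpleGraph.Iso.symm ⟨Equiv.ofBijective φ ⟨hinj, hsurj⟩,
    fun {p q} => ⟨hbwd p q, hfwd p q⟩⟩)⟩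

end CubicAux
namespace CubicAux
open SimpleGraph

lemma cast_ne_cast {N a b : ℕ} (ha : a < N) (hb : b < N) (hab : a ≠ b) :
    ((a : ℕ) : ZMod N) ≠ ((b : ℕ) : ZMod N) := by
  intro h
  have h2 := (ZMod.natCast_eq_natCast_iff a b N).mp h
  rw [Nat.ModEq, Nat.mod_eq_of_lt ha, Nat.mod_eq_of_lt hb] at h2
  exact hab h2

lemma prism_adj_elim {n : ℕ} {p q : ZMod n × Bool} (h : (prismGraph n).Adj p q) :
    q = (p.1 + 1, p.2) ∨ q = (p.1 - 1, p.2) ∨ q = (p.1, !p.2) := by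
  rw [prismGraph, SimpleGraph.fromRel_adj] at h
  obtain ⟨hne, h | h⟩ := h
  · rcases h with ⟨h1, h2⟩ | ⟨h1, h2⟩
    · left
      rw [Prod.ext_iff]
      exact ⟨h2, h1.symm⟩
    · right; right
      rw [Prod.ext_iff]
      refine ⟨h1.symm, ?_⟩
      revert h2
      cases p.2 <;> cases q.2 <;> simp
  · rcases h with ⟨h1, h2⟩ | ⟨h1, h2⟩
    · right; left
      rw [Prod.ext_iff]
      refine ⟨by rw [h2]; ring, h1⟩
    · right; right
      rw [Prod.ext_iff]
      refine ⟨h1, ?_⟩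
      revert h2
      cases p.2 <;> cases q.2 <;> simp

lemma prism_ne_aux {n : ℕ} (hn : 4 ≤ n) :
    (1 : ZMod n) ≠ 0 ∧ (3 : ZMod n) ≠ 0 := by
  constructor
  · have := cast_ne_cast (N := n) (a := 1) (b := 0) (by omega) (by omega) (by omega)
    push_cast at this
    exact this
  · have := cast_ne_cast (N := n) (a := 3) (b := 0) (by omega) (by omega) (by omega)
    push_cast at this
    exact this

lemma prism_nc {n : ℕ} (hn : 4 ≤ n) :
    ∀ p q, (prismGraph n).Adj p q → ∀ z, ¬((prismGraph n).Adj p z ∧ (prismGraph n).Adj q z) := by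
  obtain ⟨h10, h30⟩ := prism_ne_aux hn
  rintro ⟨i, c⟩ q hpq z ⟨hz1, hz2⟩
  rcases prism_adj_elim hpq with rfl | rfl | rfl <;>
    rcases prism_adj_elim hz1 with rfl | rfl | rfl <;>
      rcases prism_adj_elim hz2 with h | h | h <;>
        clear hpq hz1 hz2 <;>
          rw [Prod.ext_iff] at h <;>
            obtain ⟨ha, hb⟩ := h <;>
              simp only [] at ha hb <;>
                first
                  | (exact h10 (by linear_combination ha))
                  | (exact h10 (by linear_combination -ha))
                  | (exact h30 (by linear_combination ha))
                  | (exact h30 (by linear_combination -ha))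
                  | (simp at hb)

lemma prism_adj_add1 {n : ℕ} (h10 : (1 : ZMod n) ≠ 0) (i : ZMod n) (c : Bool) :
    (prismGraph n).Adj (i, c) (i + 1, c) := by
  rw [prismGraph, SimpleGraph.fromRel_adj]
  refine ⟨?_, Or.inl (Or.inl ⟨rfl, rfl⟩)⟩
  intro h
  rw [Prod.ext_iff] at h
  exact h10 (by linear_combination -h.1)

lemma prism_adj_flip {n : ℕ} (i : ZMod n) (c : Bool) :
    (prismGraph n).Adj (i, c) (i, !c) := by
  rw [prismGraph, SimpleGraph.fromRel_adj]
  refine ⟨?_, Or.inl (Or.inr ⟨rfl, by cases c <;> simp⟩)⟩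
  intro h
  rw [Prod.ext_iff] at h
  have := h.2
  simp at this

lemma prism_sq {n : ℕ} (hn : 4 ≤ n) :
    ∀ p q, (prismGraph n).Adj p q → ∃ u v, (prismGraph n).Adj p u ∧ (prismGraph n).Adj q v ∧
      (prismGraph n).Adj u v ∧ u ≠ q ∧ v ≠ p := by
  obtain ⟨h10, h30⟩ := prism_ne_aux hn
  rintro ⟨i, c⟩ q hpq
  rcases prism_adj_elim hpq with rfl | rfl | rfl
  · refine ⟨(i, !c), (i+1, !c), prism_adj_flip i c, prism_adj_flip (i+1) c,
      prism_adj_add1 h10 i (!c), ?_, ?_⟩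
    · intro h
      rw [Prod.ext_iff] at h
      have := h.2
      simp at this
    · intro h
      rw [Prod.ext_iff] at h
      have := h.2
      simp at this
  · refine ⟨(i, !c), (i-1, !c), prism_adj_flip i c, prism_adj_flip (i-1) c, ?_, ?_, ?_⟩
    · have h := prism_adj_add1 h10 (i-1) (!c)
      rw [sub_add_cancel] at h
      exact h.symm
    · intro h
      rw [Prod.ext_iff] at h
      have := h.2
      simp at this
    · intro h
      rw [Prod.ext_iff] at h
      have := h.2
      simp at this
  · refine ⟨(i+1, c), (i+1, !c), prism_adj_add1 h10 i c, prism_adj_add1 h10 i (!c),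
      prism_adj_flip (i+1) c, ?_, ?_⟩
    · intro h
      rw [Prod.ext_iff] at h
      exact h10 (by linear_combination h.1)
    · intro h
      rw [Prod.ext_iff] at h
      exact h10 (by linear_combination h.1)

-- Möbius ladder facts
lemma mobius_kk {k : ℕ} :
    ((k : ℕ) : ZMod (2*k)) + ((k : ℕ) : ZMod (2*k)) = 0 := by
  have h : ((k + k : ℕ) : ZMod (2*k)) = 0 := by
    rw [show k + k = 2*k from by ring, ZMod.natCast_self]
  push_cast at h
  exact h

lemma mobius_adj_elim {k : ℕ} {p q : ZMod (2*k)} (h : (mobiusLadder k).Adj p q) :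
    q = p + 1 ∨ q = p - 1 ∨ q = p + ((k : ℕ) : ZMod (2*k)) := by
  rw [mobiusLadder, SimpleGraph.fromRel_adj] at h
  obtain ⟨hne, (h | h) | (h | h)⟩ := h
  · exact Or.inl h
  · exact Or.inr (Or.inr h)
  · exact Or.inr (Or.inl (by rw [h]; ring))
  · refine Or.inr (Or.inr ?_)
    have hkk := mobius_kk (k := k)
    rw [h]
    linear_combination -hkk

lemma mobius_ne_aux {k : ℕ} (hk : 3 ≤ k) :
    (1 : ZMod (2*k)) ≠ 0 ∧ (3 : ZMod (2*k)) ≠ 0 ∧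
    ((k : ℕ) : ZMod (2*k)) ≠ 0 ∧ ((k : ℕ) : ZMod (2*k)) ≠ 1 ∧
    ((k : ℕ) : ZMod (2*k)) ≠ 2 ∧ ((k : ℕ) : ZMod (2*k)) + 1 ≠ 0 ∧
    ((k : ℕ) : ZMod (2*k)) + 2 ≠ 0 := by
  refine ⟨?_, ?_, ?_, ?_, ?_, ?_, ?_⟩
  · have := cast_ne_cast (N := 2*k) (a := 1) (b := 0) (by omega) (by omega) (by omega)
    push_cast at this; exact this
  · have := cast_ne_cast (N := 2*k) (a := 3) (b := 0) (by omega) (by omega) (by omega)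
    push_cast at this; exact this
  · have := cast_ne_cast (N := 2*k) (a := k) (b := 0) (by omega) (by omega) (by omega)
    push_cast at this; exact this
  · have := cast_ne_cast (N := 2*k) (a := k) (b := 1) (by omega) (by omega) (by omega)
    push_cast at this; exact this
  · have := cast_ne_cast (N := 2*k) (a := k) (b := 2) (by omega) (by omega) (by omega)
    push_cast at this; exact this
  · have := cast_ne_cast (N := 2*k) (a := k+1) (b := 0) (by omega) (by omega) (by omega)
    push_cast at this
    intro h
    exact this (by linear_combination h)
  · have := cast_ne_cast (N := 2*k) (a := k+2) (b := 0) (by omega) (by omega) (by omega)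
    push_cast at this
    intro h
    exact this (by linear_combination h)

lemma mobius_nc {k : ℕ} (hk : 3 ≤ k) :
    ∀ p q, (mobiusLadder k).Adj p q →
      ∀ z, ¬((mobiusLadder k).Adj p z ∧ (mobiusLadder k).Adj q z) := by
  obtain ⟨h10, h30, hk0, hk1, hk2, hkp1, hkp2⟩ := mobius_ne_aux hk
  have hkk := mobius_kk (k := k)
  rintro p q hpq z ⟨hz1, hz2⟩
  rcases mobius_adj_elim hpq with rfl | rfl | rfl <;>
    rcases mobius_adj_elim hz1 with rfl | rfl | rfl <;>
      rcases mobius_adj_elim hz2 with h | h | h <;>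
        first
          | (exact h10 (by linear_combination h))
          | (exact h10 (by linear_combination -h))
          | (exact h30 (by linear_combination h))
          | (exact h30 (by linear_combination -h))
          | (exact hk0 (by linear_combination h))
          | (exact hk0 (by linear_combination -h))
          | (exact hk0 (by linear_combination h + hkk))
          | (exact hk0 (by linear_combination -h + hkk))
          | (exact hk1 (by linear_combination h))
          | (exact hk1 (by linear_combination -h))
          | (exact hk2 (by linear_combination h))
          | (exact hk2 (by linear_combination -h))
          | (exact hkp1 (by linear_combination h))
          | (exact hkp1 (by linear_combination -h))
          | (exact hkp2 (by linear_combination h))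
          | (exact hkp2 (by linear_combination -h))
          | (exact h10 (by linear_combination h + hkk))
          | (exact h10 (by linear_combination -h + hkk))
          | (exact h30 (by linear_combination h + hkk))
          | (exact h30 (by linear_combination -h + hkk))
          | (exact hk2 (by linear_combination h + hkk))
          | (exact hk2 (by linear_combination -h + hkk))
          | (exact hkp2 (by linear_combination h + hkk))
          | (exact hkp2 (by linear_combination -h + hkk))
          | (exact h10 (by linear_combination h - hkk))
          | (exact h10 (by linear_combination -h - hkk))
          | (exact h30 (by linear_combination h - hkk))
          | (exact h30 (by linear_combination -h - hkk))
          | (exact hk0 (by linear_combination h - hkk))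
          | (exact hk0 (by linear_combination -h - hkk))
          | (exact hk1 (by linear_combination h - hkk))
          | (exact hk1 (by linear_combination -h - hkk))
          | (exact hk2 (by linear_combination h - hkk))
          | (exact hk2 (by linear_combination -h - hkk))
          | (exact hkp1 (by linear_combination h - hkk))
          | (exact hkp1 (by linear_combination -h - hkk))

lemma mobius_adj_add1 {k : ℕ} (h10 : (1 : ZMod (2*k)) ≠ 0) (p : ZMod (2*k)) :
    (mobiusLadder k).Adj p (p + 1) := by
  rw [mobiusLadder, SimpleGraph.fromRel_adj]
  exact ⟨fun h => h10 (by linear_combination -h), Or.inl (Or.inl rfl)⟩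

lemma mobius_adj_addk {k : ℕ} (hk0 : ((k : ℕ) : ZMod (2*k)) ≠ 0) (p : ZMod (2*k)) :
    (mobiusLadder k).Adj p (p + ((k : ℕ) : ZMod (2*k))) := by
  rw [mobiusLadder, SimpleGraph.fromRel_adj]
  exact ⟨fun h => hk0 (by linear_combination -h), Or.inl (Or.inr rfl)⟩

lemma mobius_sq {k : ℕ} (hk : 3 ≤ k) :
    ∀ p q, (mobiusLadder k).Adj p q → ∃ u v, (mobiusLadder k).Adj p u ∧
      (mobiusLadder k).Adj q v ∧ (mobiusLadder k).Adj u v ∧ u ≠ q ∧ v ≠ p := by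
  obtain ⟨h10, h30, hk0, hk1, hk2, hkp1, hkp2⟩ := mobius_ne_aux hk
  intro p q hpq
  rcases mobius_adj_elim hpq with rfl | rfl | rfl
  · refine ⟨p + ((k : ℕ) : ZMod (2*k)), p + 1 + ((k : ℕ) : ZMod (2*k)),
      mobius_adj_addk hk0 p, mobius_adj_addk hk0 (p+1), ?_, ?_, ?_⟩
    · have h := mobius_adj_add1 h10 (p + ((k : ℕ) : ZMod (2*k)))
      have e : p + ((k : ℕ) : ZMod (2*k)) + 1 = p + 1 + ((k : ℕ) : ZMod (2*k)) := by ring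
      rw [e] at h
      exact h
    · exact fun h => hk1 (by linear_combination h)
    · exact fun h => hkp1 (by linear_combination h)
  · refine ⟨p + ((k : ℕ) : ZMod (2*k)), p - 1 + ((k : ℕ) : ZMod (2*k)),
      mobius_adj_addk hk0 p, mobius_adj_addk hk0 (p-1), ?_, ?_, ?_⟩
    · have h := mobius_adj_add1 h10 (p - 1 + ((k : ℕ) : ZMod (2*k)))
      have e : p - 1 + ((k : ℕ) : ZMod (2*k)) + 1 = p + ((k : ℕ) : ZMod (2*k)) := by ring
      rw [e] at h
      exact h.symm
    · exact fun h => hkp1 (by linear_combination h)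
    · exact fun h => hk1 (by linear_combination h)
  · refine ⟨p + 1, p + ((k : ℕ) : ZMod (2*k)) + 1,
      mobius_adj_add1 h10 p, mobius_adj_add1 h10 _, ?_, ?_, ?_⟩
    · have h := mobius_adj_addk hk0 (p+1)
      have e : p + 1 + ((k : ℕ) : ZMod (2*k)) = p + ((k : ℕ) : ZMod (2*k)) + 1 := by ring
      rw [e] at h
      exact h
    · exact fun h => hk1 (by linear_combination -h)
    · exact fun h => hkp1 (by linear_combination h)

end CubicAux
open CubicAux in
/-- A (finite, connected) simple 3-regular graph has `κ₀(x,y) = 0` on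
every edge iff it is isomorphic to a prism graph `Y n` with `n ≥ 4` or to a Möbius
ladder `M k` with `k ≥ 3`. -/
theorem cubic_ollivier_zero_iff_prism_or_mobius {V : Type*} [Fintype V]
    (G : SimpleGraph V) [∀ v, Fintype (G.neighborSet v)]
    (hconn : G.Connected) (hcubic : ∀ v : V, G.degree v = 3) :
    (∀ x y : V, G.Adj x y → kappaZero G x y = 0) ↔
      ((∃ n : ℕ, 4 ≤ n ∧ Nonempty (G ≃g prismGraph n)) ∨
        (∃ k : ℕ, 3 ≤ k ∧ Nonempty (G ≃g mobiusLadder k))) := by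
  classical
  constructor
  · intro hk
    have hcrit : ∀ x y, G.Adj x y → Crit G x y :=
      fun x y hxy => (kappa_eq_zero_iff hcubic hxy).mp (hk x y hxy)
    have hnc : ∀ x y, G.Adj x y → ∀ z, ¬(G.Adj x z ∧ G.Adj y z) :=
      fun x y h => (hcrit x y h).1
    have hsq : ∀ x y, G.Adj x y →
        ∃ u v, G.Adj x u ∧ G.Adj y v ∧ G.Adj u v ∧ u ≠ y ∧ v ≠ x :=
      fun x y h => (hcrit x y h).2
    rcases ladder_exists hcubic hnc hsq hconn with
      ⟨n, a, b, hn, nba, nbb, hab, haa, hbb, hper, hsep⟩ |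
      ⟨m, a, hm, nbs, haa, ham, hper, hsep⟩
    · exact Or.inl ⟨n, hn, prism_iso hconn n a b hn nba nbb hab haa hbb hper hsep⟩
    · exact Or.inr ⟨m, hm, mobius_iso hconn m a hm nbs haa ham hper hsep⟩
  · intro h x y hxy
    rw [kappa_eq_zero_iff hcubic hxy]
    rcases h with ⟨n, hn, ⟨e⟩⟩ | ⟨k, hk3, ⟨e⟩⟩
    · have hexy : (prismGraph n).Adj (e x) (e y) := e.map_rel_iff.mpr hxy
      constructor
      · rintro z ⟨h1, h2⟩
        exact prism_nc hn (e x) (e y) hexy (e z)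
          ⟨e.map_rel_iff.mpr h1, e.map_rel_iff.mpr h2⟩
      · obtain ⟨u', v', hu, hv, huv, huq, hvp⟩ := prism_sq hn (e x) (e y) hexy
        refine ⟨e.symm u', e.symm v', ?_, ?_, ?_, ?_, ?_⟩
        · have h2 := e.map_rel_iff (a := x) (b := e.symm u')
          rw [e.apply_symm_apply] at h2
          exact h2.mp hu
        · have h2 := e.map_rel_iff (a := y) (b := e.symm v')
          rw [e.apply_symm_apply] at h2
          exact h2.mp hv
        · have h2 := e.map_rel_iff (a := e.symm u') (b := e.symm v')
          rw [e.apply_symm_apply, e.apply_symm_apply] at h2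
          exact h2.mp huv
        · intro hcon
          apply huq
          rw [← hcon, e.apply_symm_apply]
        · intro hcon
          apply hvp
          rw [← hcon, e.apply_symm_apply]
    · have hexy : (mobiusLadder k).Adj (e x) (e y) := e.map_rel_iff.mpr hxy
      constructor
      · rintro z ⟨h1, h2⟩
        exact mobius_nc hk3 (e x) (e y) hexy (e z)
          ⟨e.map_rel_iff.mpr h1, e.map_rel_iff.mpr h2⟩
      · obtain ⟨u', v', hu, hv, huv, huq, hvp⟩ := mobius_sq hk3 (e x) (e y) hexy
        refine ⟨e.symm u', e.symm v', ?_, ?_, ?_, ?_, ?_⟩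
        · have h2 := e.map_rel_iff (a := x) (b := e.symm u')
          rw [e.apply_symm_apply] at h2
          exact h2.mp hu
        · have h2 := e.map_rel_iff (a := y) (b := e.symm v')
          rw [e.apply_symm_apply] at h2
          exact h2.mp hv
        · have h2 := e.map_rel_iff (a := e.symm u') (b := e.symm v')
          rw [e.apply_symm_apply, e.apply_symm_apply] at h2
          exact h2.mp huv
        · intro hcon
          apply huq
          rw [← hcon, e.apply_symm_apply]
        · intro hcon
          apply hvp
          rw [← hcon, e.apply_symm_apply]
end

section
/- Let G be a simple 3-regular graph with κ₀(x,y) ≥ 0 for all edges xy and κ₀(x,y) > 0 for at least one edge xy. Then G is isomorphic to the complete graph K_4 or to the prism graph Y_3; conversely both K_4 and Y_3 have this property. -/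
open Finset

variable {V : Type*}

open SimpleGraph

set_option maxHeartbeats 2000000


section Basic

variable (G : SimpleGraph V) [∀ v, Fintype (G.neighborSet v)]

lemma muZero_of_adj {x z : V} (h : G.Adj x z) : muZero G x z = 1 / (G.degree x : ℝ) := by
  unfold muZero; exact if_pos h

lemma muZero_of_not_adj {x z : V} (h : ¬ G.Adj x z) : muZero G x z = 0 := by
  unfold muZero; exact if_neg h

lemma muZero_nonneg (x z : V) : 0 ≤ muZero G x z := by
  unfold muZero; split
  · positivity
  · exact le_rfl

/-- The coupling set. -/
def WSet (x y : V) : Set ℝ := {w : ℝ | ∃ π : V → V → ℝ,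
    (∀ u v, 0 ≤ π u v) ∧
    (∀ u v, π u v ≠ 0 → G.Adj x u ∧ G.Adj y v) ∧
    (∀ u, ∑ v ∈ G.neighborFinset y, π u v = muZero G x u) ∧
    (∀ v, ∑ u ∈ G.neighborFinset x, π u v = muZero G y v) ∧
    w = ∑ u ∈ G.neighborFinset x, ∑ v ∈ G.neighborFinset y, (G.dist u v : ℝ) * π u v}

lemma wone_eq (x y : V) : Wone G x y = sInf (WSet G x y) := rfl

lemma wset_bddBelow (x y : V) : BddBelow (WSet G x y) := by
  refine ⟨0, ?_⟩
  rintro w ⟨π, hpos, -, -, -, rfl⟩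
  have : ∀ u ∈ G.neighborFinset x, 0 ≤ ∑ v ∈ G.neighborFinset y, (G.dist u v : ℝ) * π u v := by
    intro u _
    refine Finset.sum_nonneg fun v _ => mul_nonneg (by positivity) (hpos u v)
  exact Finset.sum_nonneg this

lemma sum_muZero (x : V) (hx : G.degree x ≠ 0) :
    ∑ u ∈ G.neighborFinset x, muZero G x u = 1 := by
  rw [Finset.sum_congr rfl (fun u hu => muZero_of_adj G ((mem_neighborFinset _ _ _).1 hu)),
    Finset.sum_const, card_neighborFinset_eq_degree, nsmul_eq_mul]
  field_simp

lemma wset_nonempty (x y : V) (hx : G.degree x ≠ 0) (hy : G.degree y ≠ 0) :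
    (WSet G x y).Nonempty := by
  refine ⟨_, fun u v => muZero G x u * muZero G y v, ?_, ?_, ?_, ?_, rfl⟩
  · intro u v
    exact mul_nonneg (muZero_nonneg G _ _) (muZero_nonneg G _ _)
  · intro u v h
    simp only [ne_eq, mul_eq_zero, not_or] at h
    constructor
    · by_contra hadj
      exact h.1 (muZero_of_not_adj G hadj)
    · by_contra hadj
      exact h.2 (muZero_of_not_adj G hadj)
  · intro u
    rw [← Finset.mul_sum, sum_muZero G y hy, mul_one]
  · intro v
    rw [Finset.sum_congr rfl (fun u _ => mul_comm _ _), ← Finset.mul_sum,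
      sum_muZero G x hx, mul_one]

end Basic

section Bounds

variable (G : SimpleGraph V) [∀ v, Fintype (G.neighborSet v)]

/-- Dual (Kantorovich) lower bound for `Wone`. -/
lemma wone_lower (x y : V) (hx : G.degree x = 3) (hy : G.degree y = 3)
    (f : V → ℝ)
    (hf : ∀ u ∈ G.neighborFinset x, ∀ v ∈ G.neighborFinset y,
      f u - f v ≤ (G.dist u v : ℝ)) :
    (∑ u ∈ G.neighborFinset x, f u - ∑ v ∈ G.neighborFinset y, f v) / 3 ≤ Wone G x y := by
  rw [wone_eq]
  apply le_csInf (wset_nonempty G x y (by omega) (by omega))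
  rintro w ⟨π, hpos, hsupp, hm1, hm2, rfl⟩
  have key : ∑ u ∈ G.neighborFinset x, ∑ v ∈ G.neighborFinset y, (f u - f v) * π u v
      ≤ ∑ u ∈ G.neighborFinset x, ∑ v ∈ G.neighborFinset y, (G.dist u v : ℝ) * π u v := by
    refine Finset.sum_le_sum fun u hu => Finset.sum_le_sum fun v hv => ?_
    rcases eq_or_ne (π u v) 0 with h | h
    · simp [h]
    · exact mul_le_mul_of_nonneg_right
        (hf u hu v hv) (hpos u v)
  refine le_trans ?_ key
  have expand : ∑ u ∈ G.neighborFinset x, ∑ v ∈ G.neighborFinset y, (f u - f v) * π u v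
      = ∑ u ∈ G.neighborFinset x, f u * muZero G x u
        - ∑ v ∈ G.neighborFinset y, f v * muZero G y v := by
    have h1 : ∀ u ∈ G.neighborFinset x,
        ∑ v ∈ G.neighborFinset y, (f u - f v) * π u v
        = f u * muZero G x u - ∑ v ∈ G.neighborFinset y, f v * π u v := by
      intro u _
      rw [← hm1 u, Finset.mul_sum, ← Finset.sum_sub_distrib]
      exact Finset.sum_congr rfl fun v _ => by ring
    rw [Finset.sum_congr rfl h1, Finset.sum_sub_distrib]
    congr 1
    rw [Finset.sum_comm]
    refine Finset.sum_congr rfl fun v _ => ?_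
    rw [← Finset.mul_sum, hm2 v]
  rw [expand]
  have hmu : ∀ z w : V, G.degree z = 3 → w ∈ G.neighborFinset z →
      muZero G z w = 1/3 := by
    intro z w hz hw
    rw [muZero_of_adj G ((mem_neighborFinset _ _ _).1 hw), hz]
    norm_num
  have e1 : ∑ u ∈ G.neighborFinset x, f u * muZero G x u
      = (∑ u ∈ G.neighborFinset x, f u) * (1/3) := by
    rw [Finset.sum_mul]
    exact Finset.sum_congr rfl fun u hu => by rw [hmu x u hx hu]
  have e2 : ∑ v ∈ G.neighborFinset y, f v * muZero G y v
      = (∑ v ∈ G.neighborFinset y, f v) * (1/3) := by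
    rw [Finset.sum_mul]
    exact Finset.sum_congr rfl fun v hv => by rw [hmu y v hy hv]
  rw [e1, e2]
  linarith

end Bounds

section Upper

variable (G : SimpleGraph V) [∀ v, Fintype (G.neighborSet v)]

lemma degree_eq_three_of_nf [DecidableEq V] {x u1 u2 u3 : V} (hx : G.neighborFinset x = {u1, u2, u3})
    (h12 : u1 ≠ u2) (h13 : u1 ≠ u3) (h23 : u2 ≠ u3) : G.degree x = 3 := by
  classical
  rw [← card_neighborFinset_eq_degree, hx]
  rw [Finset.card_insert_of_notMem (by simp [h12, h13]),
    Finset.card_insert_of_notMem (by simp [h23]), Finset.card_singleton]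

lemma wone_upper [DecidableEq V] (x y u1 u2 u3 v1 v2 v3 : V)
    (hx : G.neighborFinset x = {u1, u2, u3}) (hy : G.neighborFinset y = {v1, v2, v3})
    (hu12 : u1 ≠ u2) (hu13 : u1 ≠ u3) (hu23 : u2 ≠ u3)
    (hv12 : v1 ≠ v2) (hv13 : v1 ≠ v3) (hv23 : v2 ≠ v3) :
    Wone G x y ≤ ((G.dist u1 v1 : ℝ) + (G.dist u2 v2 : ℝ) + (G.dist u3 v3 : ℝ)) / 3 := by
  classical
  have hdx : G.degree x = 3 := degree_eq_three_of_nf G hx hu12 hu13 hu23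
  have hdy : G.degree y = 3 := degree_eq_three_of_nf G hy hv12 hv13 hv23
  have a1 : G.Adj x u1 := by rw [← mem_neighborFinset, hx]; simp
  have a2 : G.Adj x u2 := by rw [← mem_neighborFinset, hx]; simp
  have a3 : G.Adj x u3 := by rw [← mem_neighborFinset, hx]; simp
  have b1 : G.Adj y v1 := by rw [← mem_neighborFinset, hy]; simp
  have b2 : G.Adj y v2 := by rw [← mem_neighborFinset, hy]; simp
  have b3 : G.Adj y v3 := by rw [← mem_neighborFinset, hy]; simp
  set π : V → V → ℝ := fun u v =>
    ((if u = u1 ∧ v = v1 then (1:ℝ) else 0) + (if u = u2 ∧ v = v2 then 1 else 0)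
      + (if u = u3 ∧ v = v3 then 1 else 0)) / 3 with hπ
  have nu1 : u1 ∉ ({u2, u3} : Finset V) := by
    simp only [Finset.mem_insert, Finset.mem_singleton]
    rintro (h | h); exacts [hu12 h, hu13 h]
  have nu2 : u2 ∉ ({u3} : Finset V) := by
    simp only [Finset.mem_singleton]; exact hu23
  have nv1 : v1 ∉ ({v2, v3} : Finset V) := by
    simp only [Finset.mem_insert, Finset.mem_singleton]
    rintro (h | h); exacts [hv12 h, hv13 h]
  have nv2 : v2 ∉ ({v3} : Finset V) := by
    simp only [Finset.mem_singleton]; exact hv23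
  have hcost : ∑ u ∈ G.neighborFinset x, ∑ v ∈ G.neighborFinset y, (G.dist u v : ℝ) * π u v
      = ((G.dist u1 v1 : ℝ) + (G.dist u2 v2 : ℝ) + (G.dist u3 v3 : ℝ)) / 3 := by
    rw [hx, hy]
    simp only [Finset.sum_insert nu1, Finset.sum_insert nu2, Finset.sum_singleton,
      Finset.sum_insert nv1, Finset.sum_insert nv2]
    simp only [hπ, hu12, hu13, hu23, hv12, hv13, hv23, hu12.symm, hu13.symm, hu23.symm,
      hv12.symm, hv13.symm, hv23.symm]
    simp only [and_true, and_false, false_and, if_true, if_false, ite_true, ite_false,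
      eq_self_iff_true, true_and, if_neg (fun h : False => h), ne_eq]
    ring
  have hmem : ((G.dist u1 v1 : ℝ) + (G.dist u2 v2 : ℝ) + (G.dist u3 v3 : ℝ)) / 3
      ∈ WSet G x y := by
    refine ⟨π, ?_, ?_, ?_, ?_, hcost.symm⟩
    · intro u v
      simp only [hπ]
      have : ∀ p : Prop, ∀ inst : Decidable p, (0:ℝ) ≤ if p then 1 else 0 := by
        intro p inst; split <;> norm_num
      positivity
    · intro u v h
      simp only [hπ] at h
      have hor : (u = u1 ∧ v = v1) ∨ (u = u2 ∧ v = v2) ∨ (u = u3 ∧ v = v3) := by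
        by_contra hc
        push_neg at hc
        rw [if_neg, if_neg, if_neg] at h
        · simp at h
        · tauto
        · tauto
        · tauto
      rcases hor with ⟨rfl, rfl⟩ | ⟨rfl, rfl⟩ | ⟨rfl, rfl⟩
      exacts [⟨a1, b1⟩, ⟨a2, b2⟩, ⟨a3, b3⟩]
    · intro u
      rw [hy]
      simp only [Finset.sum_insert nv1, Finset.sum_insert nv2, Finset.sum_singleton]
      by_cases h1 : u = u1
      · subst h1
        rw [muZero_of_adj G a1, hdx]
        simp [hπ, hu12, hu13, hv12.symm, hv13.symm]
      · by_cases h2 : u = u2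
        · subst h2
          rw [muZero_of_adj G a2, hdx]
          simp [hπ, hu12.symm, hu23, hv12, hv23.symm]
        · by_cases h3 : u = u3
          · subst h3
            rw [muZero_of_adj G a3, hdx]
            simp [hπ, hu13.symm, hu23.symm, hv13, hv23]
          · have : ¬ G.Adj x u := by
              rw [← mem_neighborFinset, hx]; simp [h1, h2, h3]
            rw [muZero_of_not_adj G this]
            simp [hπ, h1, h2, h3]
    · intro v
      rw [hx]
      simp only [Finset.sum_insert nu1, Finset.sum_insert nu2, Finset.sum_singleton]
      by_cases h1 : v = v1
      · subst h1
        rw [muZero_of_adj G b1, hdy]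
        simp [hπ, hv12, hv13, hu12.symm, hu13.symm]
      · by_cases h2 : v = v2
        · subst h2
          rw [muZero_of_adj G b2, hdy]
          simp [hπ, hv12.symm, hv23, hu12, hu23.symm]
        · by_cases h3 : v = v3
          · subst h3
            rw [muZero_of_adj G b3, hdy]
            simp [hπ, hv13.symm, hv23.symm, hu13, hu23]
          · have : ¬ G.Adj y v := by
              rw [← mem_neighborFinset, hy]; simp [h1, h2, h3]
            rw [muZero_of_not_adj G this]
            simp [hπ, h1, h2, h3]
  exact csInf_le (wset_bddBelow G x y) hmem

end Upper

section Tools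

variable (G : SimpleGraph V) [∀ v, Fintype (G.neighborSet v)]

lemma dist_real_le_one {u v : V} (h : G.Adj u v) : (G.dist u v : ℝ) ≤ 1 := by
  rw [SimpleGraph.dist_eq_one_iff_adj.2 h]; norm_num

lemma dist_real_eqzero {u : V} : (G.dist u u : ℝ) = 0 := by
  rw [SimpleGraph.dist_self]; norm_num

lemma dist_real_ge_one (hconn : G.Connected) {u v : V} (h : u ≠ v) :
    (1 : ℝ) ≤ (G.dist u v : ℝ) := by
  have := hconn.pos_dist_of_ne h
  exact_mod_cast this

lemma dist_real_ge_two (hconn : G.Connected) {u v : V} (h : u ≠ v) (hna : ¬ G.Adj u v) :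
    (2 : ℝ) ≤ (G.dist u v : ℝ) := by
  have h0 := hconn.pos_dist_of_ne h
  have h1 : G.dist u v ≠ 1 := fun hh => hna (SimpleGraph.dist_eq_one_iff_adj.1 hh)
  have : 2 ≤ G.dist u v := by omega
  exact_mod_cast this

lemma dist_real_nonneg {u v : V} : (0 : ℝ) ≤ (G.dist u v : ℝ) := by positivity

/-- eq-or-adj pairs bound distances by 1. -/
lemma dist_real_le_one_of_eq_or_adj {u v : V} (h : u = v ∨ G.Adj u v) :
    (G.dist u v : ℝ) ≤ 1 := by
  rcases h with rfl | h
  · rw [dist_real_eqzero]; norm_num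
  · exact dist_real_le_one G h

lemma kappa_nonneg_of_matching [DecidableEq V] (x y u1 u2 u3 v1 v2 v3 : V)
    (hx : G.neighborFinset x = {u1, u2, u3}) (hy : G.neighborFinset y = {v1, v2, v3})
    (hu12 : u1 ≠ u2) (hu13 : u1 ≠ u3) (hu23 : u2 ≠ u3)
    (hv12 : v1 ≠ v2) (hv13 : v1 ≠ v3) (hv23 : v2 ≠ v3)
    (h1 : u1 = v1 ∨ G.Adj u1 v1) (h2 : u2 = v2 ∨ G.Adj u2 v2)
    (h3 : u3 = v3 ∨ G.Adj u3 v3) :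
    0 ≤ kappaZero G x y := by
  have := wone_upper G x y u1 u2 u3 v1 v2 v3 hx hy hu12 hu13 hu23 hv12 hv13 hv23
  have b1 := dist_real_le_one_of_eq_or_adj G h1
  have b2 := dist_real_le_one_of_eq_or_adj G h2
  have b3 := dist_real_le_one_of_eq_or_adj G h3
  unfold kappaZero
  linarith

lemma kappa_pos_of_matching [DecidableEq V] (x y u1 u2 u3 v1 v2 v3 : V)
    (hx : G.neighborFinset x = {u1, u2, u3}) (hy : G.neighborFinset y = {v1, v2, v3})
    (hu12 : u1 ≠ u2) (hu13 : u1 ≠ u3) (hu23 : u2 ≠ u3)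
    (hv12 : v1 ≠ v2) (hv13 : v1 ≠ v3) (hv23 : v2 ≠ v3)
    (h1 : u1 = v1 ∨ G.Adj u1 v1) (h2 : u2 = v2)
    (h3 : u3 = v3 ∨ G.Adj u3 v3) :
    0 < kappaZero G x y := by
  have := wone_upper G x y u1 u2 u3 v1 v2 v3 hx hy hu12 hu13 hu23 hv12 hv13 hv23
  have b1 := dist_real_le_one_of_eq_or_adj G h1
  have b2 : (G.dist u2 v2 : ℝ) = 0 := h2 ▸ dist_real_eqzero G
  have b3 := dist_real_le_one_of_eq_or_adj G h3
  unfold kappaZero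
  linarith

lemma mem_of_closed (hconn : G.Connected) (S : Finset V)
    (hcl : ∀ u ∈ S, ∀ v, G.Adj u v → v ∈ S) {s0 : V} (hs0 : s0 ∈ S) (v : V) : v ∈ S := by
  obtain ⟨w⟩ := hconn.preconnected s0 v
  clear hconn
  induction w with
  | nil => exact hs0
  | cons h p ih => exact ih (hcl _ hs0 _ h)

lemma nf_eq_of_three [DecidableEq V] {x y c a : V} (hdeg : G.degree x = 3)
    (h1 : G.Adj x y) (h2 : G.Adj x c) (h3 : G.Adj x a)
    (n1 : y ≠ c) (n2 : y ≠ a) (n3 : c ≠ a) :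
    G.neighborFinset x = {y, c, a} := by
  have hsub : ({y, c, a} : Finset V) ⊆ G.neighborFinset x := by
    intro v hv
    simp only [Finset.mem_insert, Finset.mem_singleton] at hv
    rcases hv with rfl | rfl | rfl <;> rwa [mem_neighborFinset]
  have hcard : ({y, c, a} : Finset V).card = 3 := by
    rw [Finset.card_insert_of_notMem (by simp [n1, n2]),
      Finset.card_insert_of_notMem (by simp only [Finset.mem_singleton]; exact n3),
      Finset.card_singleton]
  have := Finset.eq_of_subset_of_card_le hsub
    (by rw [card_neighborFinset_eq_degree, hdeg, hcard])
  exact this.symm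

lemma adj_iff_of_nf [DecidableEq V] {x y c a : V} (hx : G.neighborFinset x = {y, c, a}) (v : V) :
    G.Adj x v ↔ (v = y ∨ v = c ∨ v = a) := by
  rw [← mem_neighborFinset, hx]
  simp

/-- extract the two other neighbors of a degree-3 vertex. -/
lemma exists_other_two [DecidableEq V] {x y : V} (hdeg : G.degree x = 3) (hy : G.Adj x y) :
    ∃ c a : V, G.neighborFinset x = {y, c, a} ∧ y ≠ c ∧ y ≠ a ∧ c ≠ a := by
  have hcard : (G.neighborFinset x).card = 3 := by rwa [card_neighborFinset_eq_degree]
  obtain ⟨p, q, r, hpq, hpr, hqr, hs⟩ := Finset.card_eq_three.1 hcard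
  have hy' : y ∈ G.neighborFinset x := by rwa [mem_neighborFinset]
  rw [hs] at hy'
  simp only [Finset.mem_insert, Finset.mem_singleton] at hy'
  rcases hy' with rfl | rfl | rfl
  · exact ⟨q, r, hs, hpq, hpr, hqr⟩
  · refine ⟨p, r, ?_, hpq.symm, hqr, hpr⟩
    rw [hs]; ext v; simp only [Finset.mem_insert, Finset.mem_singleton]; tauto
  · refine ⟨p, q, ?_, hpr.symm, hqr.symm, hpq⟩
    rw [hs]; ext v; simp only [Finset.mem_insert, Finset.mem_singleton]; tauto

end Tools

section Forward

set_option linter.unusedSectionVars false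

variable (G : SimpleGraph V) [∀ v, Fintype (G.neighborSet v)]

/-- The workhorse negative-curvature lemma. -/
lemma kappa_neg_master [DecidableEq V] (hconn : G.Connected) (x a p q : V)
    (hdx : G.degree x = 3) (hda : G.degree a = 3)
    (hx : G.neighborFinset x = {p, q, a})
    (hpq : p ≠ q) (hap : a ≠ p) (haq : a ≠ q)
    (hsep : ∀ v, G.Adj a v → v ≠ x →
      (v ≠ p ∧ ¬ G.Adj p v ∧ v ≠ q ∧ ¬ G.Adj q v)) :
    kappaZero G x a < 0 := by
  classical
  have hpx : G.Adj x p := by rw [← mem_neighborFinset, hx]; simp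
  have hqx : G.Adj x q := by rw [← mem_neighborFinset, hx]; simp
  have hax : G.Adj x a := by rw [← mem_neighborFinset, hx]; simp
  have hxa : G.Adj a x := hax.symm
  set f : V → ℝ := fun v => if v = p ∨ v = q then 2 else if v = x ∨ v = a then 1 else 0
    with hfdef
  have fp : f p = 2 := by simp [hfdef]
  have fq : f q = 2 := by simp [hfdef]
  have fa : f a = 1 := by simp [hfdef, hap, haq]
  have hxp : x ≠ p := fun h => G.irrefl (h ▸ hpx)
  have hxq : x ≠ q := fun h => G.irrefl (h ▸ hqx)
  have fx : f x = 1 := by simp [hfdef, hxp, hxq]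
  have fv0 : ∀ v, G.Adj a v → v ≠ x → f v = 0 := by
    intro v hv hvx
    obtain ⟨h1, -, h3, -⟩ := hsep v hv hvx
    have h4 : v ≠ a := fun h => G.irrefl (h ▸ hv)
    simp [hfdef, h1, h3, hvx, h4]
  have hf : ∀ u ∈ G.neighborFinset x, ∀ v ∈ G.neighborFinset a,
      f u - f v ≤ (G.dist u v : ℝ) := by
    intro u hu v hv
    rw [mem_neighborFinset] at hv
    have hu' : u = p ∨ u = q ∨ u = a := by rw [hx] at hu; simpa using hu
    have hva : v ≠ a := fun h => G.irrefl (h ▸ hv)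
    rcases hu' with rfl | rfl | rfl
    · by_cases hvx : v = x
      · subst hvx
        rw [fp, fx]
        have := dist_real_ge_one G hconn (Ne.symm hxp)
        linarith
      · obtain ⟨h1, h2, -, -⟩ := hsep v hv hvx
        rw [fp, fv0 v hv hvx]
        have := dist_real_ge_two G hconn (Ne.symm h1) h2
        linarith
    · by_cases hvx : v = x
      · subst hvx
        rw [fq, fx]
        have := dist_real_ge_one G hconn (Ne.symm hxq)
        linarith
      · obtain ⟨-, -, h3, h4⟩ := hsep v hv hvx
        rw [fq, fv0 v hv hvx]
        have := dist_real_ge_two G hconn (Ne.symm h3) h4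
        linarith
    · by_cases hvx : v = x
      · subst hvx
        rw [fa, fx]
        norm_num
        try positivity
      · rw [fa, fv0 v hv hvx]
        have := dist_real_ge_one G hconn (Ne.symm hva)
        linarith
  have hsum1 : ∑ u ∈ G.neighborFinset x, f u = 5 := by
    rw [hx, Finset.sum_insert (by
        simp only [Finset.mem_insert, Finset.mem_singleton, not_or]
        exact ⟨hpq, fun h => hap h.symm⟩),
      Finset.sum_insert (by
        simp only [Finset.mem_singleton]
        exact fun h => haq h.symm),
      Finset.sum_singleton, fp, fq, fa]
    norm_num
  have hsum2 : ∑ v ∈ G.neighborFinset a, f v = 1 := by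
    have hxmem : x ∈ G.neighborFinset a := by rwa [mem_neighborFinset]
    rw [← Finset.insert_erase hxmem, Finset.sum_insert (Finset.notMem_erase _ _), fx]
    have hz : ∀ v ∈ (G.neighborFinset a).erase x, f v = 0 := by
      intro v hv
      exact fv0 v ((mem_neighborFinset _ _ _).1 (Finset.mem_of_mem_erase hv))
        (Finset.ne_of_mem_erase hv)
    rw [Finset.sum_eq_zero hz]
    norm_num
  have hlow := wone_lower G x a hdx hda f hf
  rw [hsum1, hsum2] at hlow
  unfold kappaZero
  norm_num at hlow ⊢
  linarith

/-- A positively curved edge lies in a triangle. -/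
lemma common_neighbor_of_kappa_pos (hconn : G.Connected) (x y : V)
    (hdx : G.degree x = 3) (hdy : G.degree y = 3) (hadj : G.Adj x y)
    (hk : 0 < kappaZero G x y) : ∃ c, G.Adj x c ∧ G.Adj y c := by
  classical
  by_contra hc
  push_neg at hc
  set f : V → ℝ := fun v => if G.Adj y v then 0 else 1 with hfdef
  have hf : ∀ u ∈ G.neighborFinset x, ∀ v ∈ G.neighborFinset y,
      f u - f v ≤ (G.dist u v : ℝ) := by
    intro u hu v hv
    rw [mem_neighborFinset] at hu hv
    have fv : f v = 0 := by simp [hfdef, hv]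
    rw [fv]
    by_cases h : G.Adj y u
    · have fu : f u = 0 := by simp [hfdef, h]
      rw [fu]
      have : (0:ℝ) ≤ (G.dist u v : ℝ) := dist_real_nonneg G
      linarith
    · have fu : f u = 1 := by simp [hfdef, h]
      rw [fu]
      have huv : u ≠ v := fun hh => h (hh ▸ hv)
      have := dist_real_ge_one G hconn huv
      linarith
  have hsum1 : ∑ u ∈ G.neighborFinset x, f u = 3 := by
    have : ∀ u ∈ G.neighborFinset x, f u = 1 := by
      intro u hu
      rw [mem_neighborFinset] at hu
      have : ¬ G.Adj y u := fun h => hc u hu h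
      simp [hfdef, this]
    rw [Finset.sum_congr rfl this, Finset.sum_const, card_neighborFinset_eq_degree, hdx]
    norm_num
  have hsum2 : ∑ v ∈ G.neighborFinset y, f v = 0 := by
    refine Finset.sum_eq_zero fun v hv => ?_
    rw [mem_neighborFinset] at hv
    simp [hfdef, hv]
  have hlow := wone_lower G x y hdx hdy f hf
  rw [hsum1, hsum2] at hlow
  unfold kappaZero at hk
  norm_num at hlow
  linarith

end Forward

section Forward2

set_option linter.unusedSectionVars false

variable (G : SimpleGraph V) [∀ v, Fintype (G.neighborSet v)]

lemma exists_third [DecidableEq V] {r p q : V} (hdeg : G.degree r = 3)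
    (h1 : G.Adj r p) (h2 : G.Adj r q) (hpq : p ≠ q) :
    ∃ w, G.neighborFinset r = {p, q, w} ∧ w ≠ p ∧ w ≠ q := by
  have hcard : (G.neighborFinset r).card = 3 := by rwa [card_neighborFinset_eq_degree]
  have hsub : ({p, q} : Finset V) ⊆ G.neighborFinset r := by
    intro v hv
    simp only [Finset.mem_insert, Finset.mem_singleton] at hv
    rcases hv with rfl | rfl <;> rwa [mem_neighborFinset]
  have hc2 : ({p, q} : Finset V).card = 2 := by
    rw [Finset.card_insert_of_notMem (by simpa using hpq), Finset.card_singleton]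
  have hcd : ((G.neighborFinset r) \ {p, q}).card = 1 := by
    rw [Finset.card_sdiff_of_subset hsub, hcard, hc2]
  obtain ⟨w, hw⟩ := Finset.card_eq_one.1 hcd
  have hwmem : w ∈ (G.neighborFinset r) \ {p, q} := hw ▸ Finset.mem_singleton_self w
  rw [Finset.mem_sdiff, Finset.mem_insert, Finset.mem_singleton] at hwmem
  obtain ⟨hwN, hwpq⟩ := hwmem
  push_neg at hwpq
  refine ⟨w, ?_, hwpq.1, hwpq.2⟩
  have hsub2 : ({p, q, w} : Finset V) ⊆ G.neighborFinset r := by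
    intro v hv
    simp only [Finset.mem_insert, Finset.mem_singleton] at hv
    rcases hv with rfl | rfl | rfl
    · rwa [mem_neighborFinset]
    · rwa [mem_neighborFinset]
    · exact hwN
  have hc3 : ({p, q, w} : Finset V).card = 3 := by
    rw [Finset.card_insert_of_notMem (by
        simp only [Finset.mem_insert, Finset.mem_singleton, not_or]
        exact ⟨hpq, fun h => hwpq.1 h.symm⟩),
      Finset.card_insert_of_notMem (by
        simp only [Finset.mem_singleton]
        exact fun h => hwpq.2 h.symm),
      Finset.card_singleton]
  exact (Finset.eq_of_subset_of_card_le hsub2 (by rw [hcard, hc3])).symm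

/-- Subcase A : an edge (p,q) contained in two triangles forces `K₄`. -/
lemma subcaseA [DecidableEq V] (hconn : G.Connected) (hcubic : ∀ v : V, G.degree v = 3)
    (hnn : ∀ x y : V, G.Adj x y → 0 ≤ kappaZero G x y)
    (p q r s : V) (hpq : G.Adj p q) (hrp : G.Adj r p) (hrq : G.Adj r q)
    (hsp : G.Adj s p) (hsq : G.Adj s q) (hrs : r ≠ s) :
    G.Adj r s := by
  by_contra hadj_rs
  have hqr : q ≠ r := hrq.ne'
  have hqs : q ≠ s := hsq.ne'
  have hNp : G.neighborFinset p = {q, r, s} :=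
    nf_eq_of_three G (hcubic p) hpq hrp.symm hsp.symm hqr hqs hrs
  have hNq : G.neighborFinset q = {p, r, s} :=
    nf_eq_of_three G (hcubic q) hpq.symm hrq.symm hsq.symm hrp.ne' hsp.ne' hrs
  obtain ⟨w, hNr, hwp, hwq⟩ := exists_third G (hcubic r) hrp hrq (hpq.ne)
  obtain ⟨u, hNs, hup, huq⟩ := exists_third G (hcubic s) hsp hsq (hpq.ne)
  have hwr : G.Adj r w := by rw [← mem_neighborFinset, hNr]; simp
  have hus : G.Adj s u := by rw [← mem_neighborFinset, hNs]; simp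
  have hws : w ≠ s := fun h => hadj_rs (h ▸ hwr)
  have hur : u ≠ r := fun h => hadj_rs (h ▸ hus).symm
  by_cases hwu : w = u
  · -- A2a : w = u, w adjacent to both r and s; third neighbor t of w
    subst hwu
    have hwsadj : G.Adj w s := hus.symm
    obtain ⟨t, hNw, htr, hts⟩ := exists_third G (hcubic w) hwr.symm hwsadj hrs
    have hwt : G.Adj w t := by rw [← mem_neighborFinset, hNw]; simp
    -- t ∉ {p, q}
    have htp : t ≠ p := by
      rintro rfl
      have : w ∈ G.neighborFinset t := by rw [mem_neighborFinset]; exact hwt.symm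
      rw [hNp] at this
      simp only [Finset.mem_insert, Finset.mem_singleton] at this
      rcases this with rfl | rfl | rfl
      · exact hwq rfl
      · exact G.irrefl hwr.symm
      · exact hws rfl
    have htq : t ≠ q := by
      rintro rfl
      have : w ∈ G.neighborFinset t := by rw [mem_neighborFinset]; exact hwt.symm
      rw [hNq] at this
      simp only [Finset.mem_insert, Finset.mem_singleton] at this
      rcases this with rfl | rfl | rfl
      · exact hwp rfl
      · exact G.irrefl hwr.symm
      · exact hws rfl
    have hsep : ∀ v, G.Adj t v → v ≠ w →
        (v ≠ r ∧ ¬ G.Adj r v ∧ v ≠ s ∧ ¬ G.Adj s v) := by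
      intro v htv hvw
      have hvr : v ≠ r := by
        rintro rfl
        have : t ∈ G.neighborFinset v := by rw [mem_neighborFinset]; exact htv.symm
        rw [hNr] at this
        simp only [Finset.mem_insert, Finset.mem_singleton] at this
        rcases this with rfl | rfl | rfl
        · exact htp rfl
        · exact htq rfl
        · exact G.irrefl hwt.symm
      have hvs : v ≠ s := by
        rintro rfl
        have : t ∈ G.neighborFinset v := by rw [mem_neighborFinset]; exact htv.symm
        rw [hNs] at this
        simp only [Finset.mem_insert, Finset.mem_singleton] at this
        rcases this with rfl | rfl | rfl
        · exact htp rfl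
        · exact htq rfl
        · exact G.irrefl hwt.symm
      refine ⟨hvr, ?_, hvs, ?_⟩
      · intro hrv
        have : v ∈ G.neighborFinset r := by rwa [mem_neighborFinset]
        rw [hNr] at this
        simp only [Finset.mem_insert, Finset.mem_singleton] at this
        rcases this with rfl | rfl | rfl
        · -- v = p : then t ~ p, so t ∈ N(p) = {q,r,s}
          have : t ∈ G.neighborFinset v := by rw [mem_neighborFinset]; exact htv.symm
          rw [hNp] at this
          simp only [Finset.mem_insert, Finset.mem_singleton] at this
          rcases this with rfl | rfl | rfl
          · exact htq rfl
          · exact htr rfl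
          · exact hts rfl
        · -- v = q
          have : t ∈ G.neighborFinset v := by rw [mem_neighborFinset]; exact htv.symm
          rw [hNq] at this
          simp only [Finset.mem_insert, Finset.mem_singleton] at this
          rcases this with rfl | rfl | rfl
          · exact htp rfl
          · exact htr rfl
          · exact hts rfl
        · exact hvw rfl
      · intro hsv
        have : v ∈ G.neighborFinset s := by rwa [mem_neighborFinset]
        rw [hNs] at this
        simp only [Finset.mem_insert, Finset.mem_singleton] at this
        rcases this with rfl | rfl | rfl
        · have : t ∈ G.neighborFinset v := by rw [mem_neighborFinset]; exact htv.symm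
          rw [hNp] at this
          simp only [Finset.mem_insert, Finset.mem_singleton] at this
          rcases this with rfl | rfl | rfl
          · exact htq rfl
          · exact htr rfl
          · exact hts rfl
        · have : t ∈ G.neighborFinset v := by rw [mem_neighborFinset]; exact htv.symm
          rw [hNq] at this
          simp only [Finset.mem_insert, Finset.mem_singleton] at this
          rcases this with rfl | rfl | rfl
          · exact htp rfl
          · exact htr rfl
          · exact hts rfl
        · exact hvw rfl
    have hneg := kappa_neg_master G hconn w t r s (hcubic w) (hcubic t) hNw hrs
      htr hts hsep
    exact absurd (hnn w t hwt) (not_le.2 hneg)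
  · -- A2b : w ≠ u, consider edge (r, w)
    have hsep : ∀ v, G.Adj w v → v ≠ r →
        (v ≠ p ∧ ¬ G.Adj p v ∧ v ≠ q ∧ ¬ G.Adj q v) := by
      intro v hwv hvr
      have hvp : v ≠ p := by
        rintro rfl
        have : w ∈ G.neighborFinset v := by rw [mem_neighborFinset]; exact hwv.symm
        rw [hNp] at this
        simp only [Finset.mem_insert, Finset.mem_singleton] at this
        rcases this with rfl | rfl | rfl
        · exact hwq rfl
        · exact G.irrefl hwr.symm
        · exact hws rfl
      have hvq : v ≠ q := by
        rintro rfl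
        have : w ∈ G.neighborFinset v := by rw [mem_neighborFinset]; exact hwv.symm
        rw [hNq] at this
        simp only [Finset.mem_insert, Finset.mem_singleton] at this
        rcases this with rfl | rfl | rfl
        · exact hwp rfl
        · exact G.irrefl hwr.symm
        · exact hws rfl
      have hwNs : ¬ G.Adj s w := by
        intro h
        have : w ∈ G.neighborFinset s := by rwa [mem_neighborFinset]
        rw [hNs] at this
        simp only [Finset.mem_insert, Finset.mem_singleton] at this
        rcases this with rfl | rfl | rfl
        · exact hwp rfl
        · exact hwq rfl
        · exact hwu rfl
      refine ⟨hvp, ?_, hvq, ?_⟩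
      · intro hpv
        have : v ∈ G.neighborFinset p := by rwa [mem_neighborFinset]
        rw [hNp] at this
        simp only [Finset.mem_insert, Finset.mem_singleton] at this
        rcases this with rfl | rfl | rfl
        · -- v = q : w ~ q impossible
          have : w ∈ G.neighborFinset v := by rw [mem_neighborFinset]; exact hwv.symm
          rw [hNq] at this
          simp only [Finset.mem_insert, Finset.mem_singleton] at this
          rcases this with rfl | rfl | rfl
          · exact hwp rfl
          · exact G.irrefl hwr.symm
          · exact hws rfl
        · exact hvr rfl
        · exact hwNs hwv.symm
      · intro hqv
        have : v ∈ G.neighborFinset q := by rwa [mem_neighborFinset]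
        rw [hNq] at this
        simp only [Finset.mem_insert, Finset.mem_singleton] at this
        rcases this with rfl | rfl | rfl
        · exact hvp rfl
        · exact hvr rfl
        · exact hwNs hwv.symm
    have hneg := kappa_neg_master G hconn r w p q (hcubic r) (hcubic w) hNr
      hpq.ne hwp hwq hsep
    exact absurd (hnn r w hwr) (not_le.2 hneg)

end Forward2

section Forward3

set_option linter.unusedSectionVars false

variable (G : SimpleGraph V) [∀ v, Fintype (G.neighborSet v)]

/-- Step B1 : in the one-triangle configuration, the outer vertex `a` must be adjacent
to `b` or `z`. -/
lemma stepB1 [DecidableEq V] (hconn : G.Connected) (hcubic : ∀ v : V, G.degree v = 3)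
    (hnn : ∀ x y : V, G.Adj x y → 0 ≤ kappaZero G x y)
    (x y c a b z : V) (hyc : G.Adj y c)
    (hNx : G.neighborFinset x = {y, c, a})
    (hNy : G.neighborFinset y = {x, c, b})
    (hNc : G.neighborFinset c = {x, y, z})
    (hay : a ≠ y) (hac : a ≠ c) (hab : a ≠ b) (haz : a ≠ z) :
    G.Adj a b ∨ G.Adj a z := by
  by_contra hcon
  push_neg at hcon
  obtain ⟨nab, naz⟩ := hcon
  have hxa : G.Adj x a := (adj_iff_of_nf G hNx a).2 (Or.inr (Or.inr rfl))
  have hax : a ≠ x := hxa.ne'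
  have nya : ¬ G.Adj y a := by
    intro h
    rcases (adj_iff_of_nf G hNy a).1 h with rfl | rfl | rfl
    exacts [hax rfl, hac rfl, hab rfl]
  have nca : ¬ G.Adj c a := by
    intro h
    rcases (adj_iff_of_nf G hNc a).1 h with rfl | rfl | rfl
    exacts [hax rfl, hay rfl, haz rfl]
  have hsep : ∀ v, G.Adj a v → v ≠ x →
      (v ≠ y ∧ ¬ G.Adj y v ∧ v ≠ c ∧ ¬ G.Adj c v) := by
    intro v hav hvx
    have hvy : v ≠ y := by rintro rfl; exact nya hav.symm
    have hvc : v ≠ c := by rintro rfl; exact nca hav.symm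
    refine ⟨hvy, ?_, hvc, ?_⟩
    · intro hyv
      rcases (adj_iff_of_nf G hNy v).1 hyv with rfl | rfl | rfl
      exacts [hvx rfl, hvc rfl, nab hav]
    · intro hcv
      rcases (adj_iff_of_nf G hNc v).1 hcv with rfl | rfl | rfl
      exacts [hvx rfl, hvy rfl, naz hav]
  have hneg := kappa_neg_master G hconn x a y c (hcubic x) (hcubic a) hNx
    hyc.ne hay hac hsep
  exact absurd (hnn x a hxa) (not_le.2 hneg)

/-- Step B2 : the path configuration `a ~ b ~ z`, `¬ a ~ z` is impossible. -/
lemma stepB2 [DecidableEq V] (hconn : G.Connected) (hcubic : ∀ v : V, G.degree v = 3)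
    (hnn : ∀ x y : V, G.Adj x y → 0 ≤ kappaZero G x y)
    (x y c a b z : V)
    (hNx : G.neighborFinset x = {y, c, a})
    (hNy : G.neighborFinset y = {x, c, b})
    (hNc : G.neighborFinset c = {x, y, z})
    (hay : a ≠ y) (hac : a ≠ c) (hbx : b ≠ x) (hbc : b ≠ c)
    (hzx : z ≠ x) (hzy : z ≠ y) (hab_ne : a ≠ b) (haz_ne : a ≠ z) (hbz_ne : b ≠ z)
    (hab : G.Adj a b) (hbz : G.Adj b z) (hnaz : ¬ G.Adj a z) : False := by
  have hxy : G.Adj x y := (adj_iff_of_nf G hNx y).2 (Or.inl rfl)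
  have hxc : G.Adj x c := (adj_iff_of_nf G hNx c).2 (Or.inr (Or.inl rfl))
  have hyc : G.Adj y c := (adj_iff_of_nf G hNy c).2 (Or.inr (Or.inl rfl))
  have hxa : G.Adj x a := (adj_iff_of_nf G hNx a).2 (Or.inr (Or.inr rfl))
  have hyb : G.Adj y b := (adj_iff_of_nf G hNy b).2 (Or.inr (Or.inr rfl))
  have hcz : G.Adj c z := (adj_iff_of_nf G hNc z).2 (Or.inr (Or.inr rfl))
  have hax : a ≠ x := hxa.ne'
  have hby : b ≠ y := hyb.ne'
  have hzc : z ≠ c := hcz.ne'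
  have nya : ¬ G.Adj y a := by
    intro h
    rcases (adj_iff_of_nf G hNy a).1 h with rfl | rfl | rfl
    exacts [hax rfl, hac rfl, hab_ne rfl]
  have nca : ¬ G.Adj c a := by
    intro h
    rcases (adj_iff_of_nf G hNc a).1 h with rfl | rfl | rfl
    exacts [hax rfl, hay rfl, haz_ne rfl]
  have nxb : ¬ G.Adj x b := by
    intro h
    rcases (adj_iff_of_nf G hNx b).1 h with rfl | rfl | rfl
    exacts [hby rfl, hbc rfl, hab_ne rfl]
  have ncb : ¬ G.Adj c b := by
    intro h
    rcases (adj_iff_of_nf G hNc b).1 h with rfl | rfl | rfl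
    exacts [hbx rfl, hby rfl, hbz_ne rfl]
  have nxz : ¬ G.Adj x z := by
    intro h
    rcases (adj_iff_of_nf G hNx z).1 h with rfl | rfl | rfl
    exacts [hzy rfl, hzc rfl, haz_ne rfl.symm]
  have nyz : ¬ G.Adj y z := by
    intro h
    rcases (adj_iff_of_nf G hNy z).1 h with rfl | rfl | rfl
    exacts [hzx rfl, hzc rfl, hbz_ne rfl.symm]
  -- neighborhood of b
  have hNb : G.neighborFinset b = {y, a, z} :=
    nf_eq_of_three G (hcubic b) hyb.symm hab.symm hbz
      (fun h => hay h.symm) hzy.symm haz_ne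
  -- third neighbor of a
  obtain ⟨w, hNa, hwx, hwb⟩ := exists_third G (hcubic a) hxa.symm hab hbx.symm
  have haw : G.Adj a w := (adj_iff_of_nf G hNa w).2 (Or.inr (Or.inr rfl))
  have hwa : w ≠ a := haw.ne'
  have hwy : w ≠ y := by rintro rfl; exact nya haw.symm
  have hwc : w ≠ c := by rintro rfl; exact nca haw.symm
  have hwz : w ≠ z := by rintro rfl; exact hnaz haw
  -- w is adjacent to z
  have hwz_adj : G.Adj w z := by
    by_contra nwz
    have hsep : ∀ v, G.Adj w v → v ≠ a →
        (v ≠ x ∧ ¬ G.Adj x v ∧ v ≠ b ∧ ¬ G.Adj b v) := by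
      intro v hwv hva
      have nwx : ¬ G.Adj w x := by
        intro h
        rcases (adj_iff_of_nf G hNx w).1 h.symm with rfl | rfl | rfl
        exacts [hwy rfl, hwc rfl, hwa rfl]
      have nwy : ¬ G.Adj w y := by
        intro h
        rcases (adj_iff_of_nf G hNy w).1 h.symm with rfl | rfl | rfl
        exacts [hwx rfl, hwc rfl, hwb rfl]
      have nwc : ¬ G.Adj w c := by
        intro h
        rcases (adj_iff_of_nf G hNc w).1 h.symm with rfl | rfl | rfl
        exacts [hwx rfl, hwy rfl, hwz rfl]
      have nwb : ¬ G.Adj w b := by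
        intro h
        rcases (adj_iff_of_nf G hNb w).1 h.symm with rfl | rfl | rfl
        exacts [hwy rfl, hwa rfl, hwz rfl]
      have hvx : v ≠ x := by rintro rfl; exact nwx hwv
      have hvb : v ≠ b := by rintro rfl; exact nwb hwv
      refine ⟨hvx, ?_, hvb, ?_⟩
      · intro hxv
        rcases (adj_iff_of_nf G hNx v).1 hxv with rfl | rfl | rfl
        exacts [nwy hwv, nwc hwv, hva rfl]
      · intro hbv
        rcases (adj_iff_of_nf G hNb v).1 hbv with rfl | rfl | rfl
        exacts [nwy hwv, hva rfl, nwz hwv]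
    have hneg := kappa_neg_master G hconn a w x b (hcubic a) (hcubic w) hNa
      hbx.symm hwx hwb hsep
    exact absurd (hnn a w haw) (not_le.2 hneg)
  -- neighborhood of z
  have hNz : G.neighborFinset z = {c, b, w} :=
    nf_eq_of_three G (hcubic z) hcz.symm hbz.symm hwz_adj.symm
      (fun h => hbc h.symm) (fun h => hwc h.symm) (fun h => hwb h.symm)
  -- third neighbor of w
  obtain ⟨t, hNw, hta, htz⟩ := exists_third G (hcubic w) haw.symm hwz_adj haz_ne
  have hwt : G.Adj w t := (adj_iff_of_nf G hNw t).2 (Or.inr (Or.inr rfl))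
  have nwx : ¬ G.Adj w x := by
    intro h
    rcases (adj_iff_of_nf G hNx w).1 h.symm with rfl | rfl | rfl
    exacts [hwy rfl, hwc rfl, hwa rfl]
  have nwy : ¬ G.Adj w y := by
    intro h
    rcases (adj_iff_of_nf G hNy w).1 h.symm with rfl | rfl | rfl
    exacts [hwx rfl, hwc rfl, hwb rfl]
  have nwc : ¬ G.Adj w c := by
    intro h
    rcases (adj_iff_of_nf G hNc w).1 h.symm with rfl | rfl | rfl
    exacts [hwx rfl, hwy rfl, hwz rfl]
  have nwb : ¬ G.Adj w b := by
    intro h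
    rcases (adj_iff_of_nf G hNb w).1 h.symm with rfl | rfl | rfl
    exacts [hwy rfl, hwa rfl, hwz rfl]
  have htw : t ≠ w := hwt.ne'
  have htx : t ≠ x := by rintro rfl; exact nwx hwt
  have hty : t ≠ y := by rintro rfl; exact nwy hwt
  have htc : t ≠ c := by rintro rfl; exact nwc hwt
  have htb : t ≠ b := by rintro rfl; exact nwb hwt
  -- final contradiction at edge (w, t)
  have hsep : ∀ v, G.Adj t v → v ≠ w →
      (v ≠ a ∧ ¬ G.Adj a v ∧ v ≠ z ∧ ¬ G.Adj z v) := by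
    intro v htv hvw
    have nta : ¬ G.Adj t a := by
      intro h
      rcases (adj_iff_of_nf G hNa t).1 h.symm with rfl | rfl | rfl
      exacts [htx rfl, htb rfl, htw rfl]
    have ntz : ¬ G.Adj t z := by
      intro h
      rcases (adj_iff_of_nf G hNz t).1 h.symm with rfl | rfl | rfl
      exacts [htc rfl, htb rfl, htw rfl]
    have ntx : ¬ G.Adj t x := by
      intro h
      rcases (adj_iff_of_nf G hNx t).1 h.symm with rfl | rfl | rfl
      exacts [hty rfl, htc rfl, hta rfl]
    have ntb : ¬ G.Adj t b := by
      intro h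
      rcases (adj_iff_of_nf G hNb t).1 h.symm with rfl | rfl | rfl
      exacts [hty rfl, hta rfl, htz rfl]
    have ntc : ¬ G.Adj t c := by
      intro h
      rcases (adj_iff_of_nf G hNc t).1 h.symm with rfl | rfl | rfl
      exacts [htx rfl, hty rfl, htz rfl]
    have hva : v ≠ a := by rintro rfl; exact nta htv
    have hvz : v ≠ z := by rintro rfl; exact ntz htv
    refine ⟨hva, ?_, hvz, ?_⟩
    · intro hav
      rcases (adj_iff_of_nf G hNa v).1 hav with rfl | rfl | rfl
      exacts [ntx htv, ntb htv, hvw rfl]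
    · intro hzv
      rcases (adj_iff_of_nf G hNz v).1 hzv with rfl | rfl | rfl
      exacts [ntc htv, ntb htv, hvw rfl]
  have hneg := kappa_neg_master G hconn w t a z (hcubic w) (hcubic t) hNw
    haz_ne hta htz hsep
  exact absurd (hnn w t hwt) (not_le.2 hneg)

end Forward3

section FourCase

set_option linter.unusedSectionVars false

variable (G : SimpleGraph V) [∀ v, Fintype (G.neighborSet v)]

lemma fourCase [Fintype V] [DecidableEq V] (hconn : G.Connected) (p q r s : V)
    (hpq : p ≠ q) (hpr : p ≠ r) (hps : p ≠ s) (hqr : q ≠ r) (hqs : q ≠ s) (hrs : r ≠ s)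
    (hNp : G.neighborFinset p = {q, r, s})
    (hNq : G.neighborFinset q = {p, r, s})
    (hNr : G.neighborFinset r = {p, q, s})
    (hNs : G.neighborFinset s = {p, q, r}) :
    Nonempty (G ≃g (⊤ : SimpleGraph (Fin 4))) := by
  set S : Finset V := {p, q, r, s} with hS
  have hmemS : ∀ v, v = p ∨ v = q ∨ v = r ∨ v = s → v ∈ S := by
    intro v hv
    simp only [hS, Finset.mem_insert, Finset.mem_singleton]
    tauto
  have hcl : ∀ u ∈ S, ∀ v, G.Adj u v → v ∈ S := by
    intro u hu v huv
    simp only [hS, Finset.mem_insert, Finset.mem_singleton] at hu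
    apply hmemS
    rcases hu with rfl | rfl | rfl | rfl
    · rcases (adj_iff_of_nf G hNp v).1 huv with rfl | rfl | rfl <;> tauto
    · rcases (adj_iff_of_nf G hNq v).1 huv with rfl | rfl | rfl <;> tauto
    · rcases (adj_iff_of_nf G hNr v).1 huv with rfl | rfl | rfl <;> tauto
    · rcases (adj_iff_of_nf G hNs v).1 huv with rfl | rfl | rfl <;> tauto
  have hall : ∀ v : V, v = p ∨ v = q ∨ v = r ∨ v = s := by
    intro v
    have := mem_of_closed G hconn S hcl (hmemS p (Or.inl rfl)) v
    simpa [hS] using this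
  have hcard : Fintype.card V = 4 := by
    rw [← Finset.card_univ, Finset.eq_univ_iff_forall.2
      (fun v => hmemS v (hall v)) |>.symm, hS]
    rw [Finset.card_insert_of_notMem (by simp [hpq, hpr, hps]),
      Finset.card_insert_of_notMem (by simp [hqr, hqs]),
      Finset.card_insert_of_notMem (by simp [hrs]), Finset.card_singleton]
  have hadj : ∀ u v : V, u ≠ v → G.Adj u v := by
    intro u v huv
    rcases hall u with rfl | rfl | rfl | rfl <;> rcases hall v with rfl | rfl | rfl | rfl <;>
      first
        | exact absurd rfl huv
        | exact (adj_iff_of_nf G hNp v).2 (by tauto)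
        | exact (adj_iff_of_nf G hNq v).2 (by tauto)
        | exact (adj_iff_of_nf G hNr v).2 (by tauto)
        | exact (adj_iff_of_nf G hNs v).2 (by tauto)
  have e : V ≃ Fin 4 := Fintype.equivFinOfCardEq hcard
  refine ⟨⟨e, ?_⟩⟩
  intro u v
  simp only [SimpleGraph.top_adj, ne_eq, EmbeddingLike.apply_eq_iff_eq]
  constructor
  · intro h
    exact hadj u v h
  · intro h hne
    exact G.irrefl (hne ▸ h)

end FourCase

instance : DecidableRel (prismGraph 3).Adj := fun p q =>
  inferInstanceAs (Decidable (p ≠ q ∧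
    (((p.2 = q.2 ∧ q.1 = p.1 + 1) ∨ (p.1 = q.1 ∧ p.2 ≠ q.2)) ∨
      ((q.2 = p.2 ∧ p.1 = q.1 + 1) ∨ (q.1 = p.1 ∧ q.2 ≠ p.2)))))

lemma pcases : ∀ p : ZMod 3 × Bool, p = ((0 : ZMod 3), false) ∨ p = ((1 : ZMod 3), false)
    ∨ p = ((2 : ZMod 3), false) ∨ p = ((0 : ZMod 3), true) ∨ p = ((1 : ZMod 3), true)
    ∨ p = ((2 : ZMod 3), true) := by decide

section SixCase

set_option linter.unusedSectionVars false
set_option maxHeartbeats 1000000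

variable (G : SimpleGraph V) [∀ v, Fintype (G.neighborSet v)]

lemma sixCase [Fintype V] [DecidableEq V] (hconn : G.Connected) (x y c a b z : V)
    (nxy : x ≠ y) (nxc : x ≠ c) (nxa : x ≠ a) (nxb : x ≠ b) (nxz : x ≠ z)
    (nyc : y ≠ c) (nya : y ≠ a) (nyb : y ≠ b) (nyz : y ≠ z)
    (nca : c ≠ a) (ncb : c ≠ b) (ncz : c ≠ z)
    (nab : a ≠ b) (naz : a ≠ z) (nbz : b ≠ z)
    (hNx : G.neighborFinset x = {y, c, a})
    (hNy : G.neighborFinset y = {x, c, b})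
    (hNc : G.neighborFinset c = {x, y, z})
    (hNa : G.neighborFinset a = {x, b, z})
    (hNb : G.neighborFinset b = {y, a, z})
    (hNz : G.neighborFinset z = {c, a, b}) :
    Nonempty (G ≃g prismGraph 3) := by
  have nyx := nxy.symm; have ncx := nxc.symm; have nax := nxa.symm
  have nbx := nxb.symm; have nzx := nxz.symm; have ncy := nyc.symm
  have nay := nya.symm; have nby := nyb.symm; have nzy := nyz.symm
  have nac := nca.symm; have nbc := ncb.symm; have nzc := ncz.symm
  have nba := nab.symm; have nza := naz.symm; have nzb := nbz.symm
  -- every vertex is one of the six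
  have hall : ∀ v : V, v = x ∨ v = y ∨ v = c ∨ v = a ∨ v = b ∨ v = z := by
    intro v
    set S : Finset V := {x, y, c, a, b, z} with hS
    have hmemS : ∀ u, u = x ∨ u = y ∨ u = c ∨ u = a ∨ u = b ∨ u = z → u ∈ S := by
      intro u hu
      simp only [hS, Finset.mem_insert, Finset.mem_singleton]
      tauto
    have hcl : ∀ u ∈ S, ∀ w, G.Adj u w → w ∈ S := by
      intro u hu w huw
      simp only [hS, Finset.mem_insert, Finset.mem_singleton] at hu
      apply hmemS
      rcases hu with rfl | rfl | rfl | rfl | rfl | rfl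
      · have := (adj_iff_of_nf G hNx w).1 huw; tauto
      · have := (adj_iff_of_nf G hNy w).1 huw; tauto
      · have := (adj_iff_of_nf G hNc w).1 huw; tauto
      · have := (adj_iff_of_nf G hNa w).1 huw; tauto
      · have := (adj_iff_of_nf G hNb w).1 huw; tauto
      · have := (adj_iff_of_nf G hNz w).1 huw; tauto
    have := mem_of_closed G hconn S hcl (hmemS x (Or.inl rfl)) v
    simpa [hS] using this
  -- the explicit bijection
  set g : ZMod 3 × Bool → V := fun p =>
    if p = ((0 : ZMod 3), false) then x else if p = ((1 : ZMod 3), false) then y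
    else if p = ((2 : ZMod 3), false) then c else if p = ((0 : ZMod 3), true) then a
    else if p = ((1 : ZMod 3), true) then b else z with hg
  have g0 : g ((0 : ZMod 3), false) = x := by simp only [hg]; simp
  have g1 : g ((1 : ZMod 3), false) = y := by
    simp only [hg]; rw [if_neg (by decide)]; simp
  have g2 : g ((2 : ZMod 3), false) = c := by
    simp only [hg]; rw [if_neg (by decide), if_neg (by decide)]; simp
  have g3 : g ((0 : ZMod 3), true) = a := by
    simp only [hg]
    rw [if_neg (by decide), if_neg (by decide), if_neg (by decide)]; simp
  have g4 : g ((1 : ZMod 3), true) = b := by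
    simp only [hg]
    rw [if_neg (by decide), if_neg (by decide), if_neg (by decide), if_neg (by decide)]
    simp
  have g5 : g ((2 : ZMod 3), true) = z := by
    simp only [hg]
    rw [if_neg (by decide), if_neg (by decide), if_neg (by decide), if_neg (by decide),
      if_neg (by decide)]
  have hinj : Function.Injective g := by
    intro p1 p2 h
    rcases pcases p1 with rfl | rfl | rfl | rfl | rfl | rfl <;>
      rcases pcases p2 with rfl | rfl | rfl | rfl | rfl | rfl <;>
      first
        | rfl
        | (simp only [g0, g1, g2, g3, g4, g5] at h; exact absurd h (by assumption))
  have hsurj : Function.Surjective g := by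
    intro v
    rcases hall v with rfl | rfl | rfl | rfl | rfl | rfl
    exacts [⟨_, g0⟩, ⟨_, g1⟩, ⟨_, g2⟩, ⟨_, g3⟩, ⟨_, g4⟩, ⟨_, g5⟩]
  have hGP : ∀ p1 p2, G.Adj (g p1) (g p2) ↔ (prismGraph 3).Adj p1 p2 := by
    intro p1 p2
    rcases pcases p1 with rfl | rfl | rfl | rfl | rfl | rfl <;>
      rcases pcases p2 with rfl | rfl | rfl | rfl | rfl | rfl <;>
      simp only [g0, g1, g2, g3, g4, g5] <;>
      first
        | (refine iff_of_true ?_ (by decide)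
           first
             | exact (adj_iff_of_nf G hNx _).2 (by tauto)
             | exact (adj_iff_of_nf G hNy _).2 (by tauto)
             | exact (adj_iff_of_nf G hNc _).2 (by tauto)
             | exact (adj_iff_of_nf G hNa _).2 (by tauto)
             | exact (adj_iff_of_nf G hNb _).2 (by tauto)
             | exact (adj_iff_of_nf G hNz _).2 (by tauto))
        | (refine iff_of_false (fun hADJ => ?_) (by decide)
           first
             | (have hd := (adj_iff_of_nf G hNx _).1 hADJ; tauto)
             | (have hd := (adj_iff_of_nf G hNy _).1 hADJ; tauto)
             | (have hd := (adj_iff_of_nf G hNc _).1 hADJ; tauto)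
             | (have hd := (adj_iff_of_nf G hNa _).1 hADJ; tauto)
             | (have hd := (adj_iff_of_nf G hNb _).1 hADJ; tauto)
             | (have hd := (adj_iff_of_nf G hNz _).1 hADJ; tauto))
  let ee : (ZMod 3 × Bool) ≃ V := Equiv.ofBijective g ⟨hinj, hsurj⟩
  refine ⟨⟨ee.symm, ?_⟩⟩
  intro u v
  have hcoe : ∀ p, ee p = g p := fun _ => rfl
  have hu : g (ee.symm u) = u := by rw [← hcoe]; exact ee.apply_symm_apply u
  have hv : g (ee.symm v) = v := by rw [← hcoe]; exact ee.apply_symm_apply v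
  conv_rhs => rw [← hu, ← hv]
  exact (hGP (ee.symm u) (ee.symm v)).symm

end SixCase

section Assembly

set_option linter.unusedSectionVars false

variable (G : SimpleGraph V) [∀ v, Fintype (G.neighborSet v)]

lemma forward_direction [Fintype V] [DecidableEq V] (hconn : G.Connected)
    (hcubic : ∀ v : V, G.degree v = 3)
    (hnn : ∀ x y : V, G.Adj x y → 0 ≤ kappaZero G x y)
    (hpos : ∃ x y : V, G.Adj x y ∧ 0 < kappaZero G x y) :
    Nonempty (G ≃g (⊤ : SimpleGraph (Fin 4))) ∨ Nonempty (G ≃g prismGraph 3) := by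
  obtain ⟨x, y, hxy, hk⟩ := hpos
  obtain ⟨c, hxc, hyc⟩ := common_neighbor_of_kappa_pos G hconn x y (hcubic x) (hcubic y)
    hxy hk
  obtain ⟨a, hNx, hay, hac⟩ := exists_third G (hcubic x) hxy hxc hyc.ne
  obtain ⟨b, hNy, hbx, hbc⟩ := exists_third G (hcubic y) hxy.symm hyc hxc.ne
  obtain ⟨z, hNc, hzx, hzy⟩ := exists_third G (hcubic c) hxc.symm hyc.symm hxy.ne
  have hxa : G.Adj x a := (adj_iff_of_nf G hNx a).2 (by tauto)
  have hyb : G.Adj y b := (adj_iff_of_nf G hNy b).2 (by tauto)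
  have hcz : G.Adj c z := (adj_iff_of_nf G hNc z).2 (by tauto)
  have hax : a ≠ x := hxa.ne'
  have hby : b ≠ y := hyb.ne'
  have hzc : z ≠ c := hcz.ne'
  by_cases h1 : a = b
  · -- subcase A on edge (x, y) : K4
    subst h1
    have hya : G.Adj y a := hyb
    have hacAdj : G.Adj a c :=
      subcaseA G hconn hcubic hnn x y a c hxy hxa.symm hya.symm hxc.symm hyc.symm hac
    have hNa : G.neighborFinset a = {x, y, c} :=
      nf_eq_of_three G (hcubic a) hxa.symm hya.symm hacAdj hxy.ne hxc.ne hyc.ne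
    have hza : z = a := by
      have : a ∈ G.neighborFinset c := by rw [mem_neighborFinset]; exact hacAdj.symm
      rw [hNc] at this
      simp only [Finset.mem_insert, Finset.mem_singleton] at this
      rcases this with rfl | rfl | h
      · exact absurd rfl hax
      · exact absurd rfl hay
      · exact h.symm
    subst hza
    exact Or.inl (fourCase G hconn x y c z hxy.ne hxc.ne hxa.ne hyc.ne hay.symm
      hac.symm hNx hNy hNc hNa)
  · by_cases h2 : a = z
    · exfalso
      subst h2
      have hca : G.Adj c a := hcz
      have hyaAdj : G.Adj y a :=
        subcaseA G hconn hcubic hnn x c y a hxc hxy.symm hyc hxa.symm hca.symm hay.symm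
      have : a ∈ G.neighborFinset y := by rw [mem_neighborFinset]; exact hyaAdj
      rw [hNy] at this
      simp only [Finset.mem_insert, Finset.mem_singleton] at this
      rcases this with rfl | rfl | h
      · exact hax rfl
      · exact hac rfl
      · exact h1 h
    · by_cases h3 : b = z
      · exfalso
        subst h3
        have hcb : G.Adj c b := hcz
        have hxbAdj : G.Adj x b :=
          subcaseA G hconn hcubic hnn y c x b hyc hxy hxc hyb.symm hcb.symm hbx.symm
        have : b ∈ G.neighborFinset x := by rw [mem_neighborFinset]; exact hxbAdj
        rw [hNx] at this
        simp only [Finset.mem_insert, Finset.mem_singleton] at this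
        rcases this with rfl | rfl | h
        · exact hby rfl
        · exact hbc rfl
        · exact h1 h.symm
      · -- case B
        have hNc2 : G.neighborFinset c = {y, x, z} := by
          rw [hNc]; ext v; simp only [Finset.mem_insert, Finset.mem_singleton]; tauto
        have hNx2 : G.neighborFinset x = {c, y, a} := by
          rw [hNx]; ext v; simp only [Finset.mem_insert, Finset.mem_singleton]; tauto
        have hNy2 : G.neighborFinset y = {c, x, b} := by
          rw [hNy]; ext v; simp only [Finset.mem_insert, Finset.mem_singleton]; tauto
        have hA : G.Adj a b ∨ G.Adj a z :=
          stepB1 G hconn hcubic hnn x y c a b z hyc hNx hNy hNc hay hac h1 h2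
        have hB : G.Adj b a ∨ G.Adj b z :=
          stepB1 G hconn hcubic hnn y x c b a z hxc hNy hNx hNc2 hbx hbc
            (fun h => h1 h.symm) h3
        have hC : G.Adj z a ∨ G.Adj z b :=
          stepB1 G hconn hcubic hnn c x y z a b hxy hNc hNx2 hNy2 hzx hzy
            (fun h => h2 h.symm) (fun h => h3 h.symm)
        by_cases hab : G.Adj a b
        · by_cases hbz : G.Adj b z
          · by_cases haz : G.Adj a z
            · -- prism
              have hNa : G.neighborFinset a = {x, b, z} :=
                nf_eq_of_three G (hcubic a) hxa.symm hab haz hbx.symm hzx.symm h3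
              have hNb : G.neighborFinset b = {y, a, z} :=
                nf_eq_of_three G (hcubic b) hyb.symm hab.symm hbz hay.symm hzy.symm h2
              have hNz : G.neighborFinset z = {c, a, b} :=
                nf_eq_of_three G (hcubic z) hcz.symm haz.symm hbz.symm hac.symm hbc.symm h1
              exact Or.inr (sixCase G hconn x y c a b z hxy.ne hxc.ne hxa.ne hbx.symm
                hzx.symm hyc.ne hay.symm hyb.ne hzy.symm hac.symm hbc.symm hcz.ne
                h1 h2 h3 hNx hNy hNc hNa hNb hNz)
            · exact absurd (stepB2 G hconn hcubic hnn x y c a b z hNx hNy hNc hay hac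
                hbx hbc hzx hzy h1 h2 h3 hab hbz haz) not_false
          · -- middle a
            exfalso
            have haz : G.Adj a z := by
              rcases hC with h | h
              · exact h.symm
              · exact absurd h.symm hbz
            exact stepB2 G hconn hcubic hnn y x c b a z hNy hNx hNc2 hbx hbc hay hac
              hzy hzx (fun h => h1 h.symm) h3 h2 hab.symm haz hbz
          -- done
        · -- middle z
          exfalso
          have haz : G.Adj a z := by
            rcases hA with h | h
            · exact absurd h hab
            · exact h
          have hbz : G.Adj b z := by
            rcases hB with h | h
            · exact absurd h.symm hab
            · exact h
          exact stepB2 G hconn hcubic hnn x c y a z b hNx2 hNc hNy hac hay hzx hzy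
            hbx hbc h2 h1 (fun h => h3 h.symm) haz hbz.symm hab

end Assembly

section Converse

set_option linter.unusedSectionVars false

variable (G : SimpleGraph V) [∀ v, Fintype (G.neighborSet v)]

lemma fourStructure [Fintype V] [DecidableEq V] (hconn : G.Connected) (p q r s : V)
    (hpq : p ≠ q) (hpr : p ≠ r) (hps : p ≠ s) (hqr : q ≠ r) (hqs : q ≠ s) (hrs : r ≠ s)
    (hNp : G.neighborFinset p = {q, r, s})
    (hNq : G.neighborFinset q = {p, r, s})
    (hNr : G.neighborFinset r = {p, q, s})
    (hNs : G.neighborFinset s = {p, q, r}) :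
    (∀ u v : V, G.Adj u v → 0 ≤ kappaZero G u v) ∧
      (∃ u v : V, G.Adj u v ∧ 0 < kappaZero G u v) := by
  have apq : G.Adj p q := (adj_iff_of_nf G hNp q).2 (by tauto)
  have apr : G.Adj p r := (adj_iff_of_nf G hNp r).2 (by tauto)
  have aps : G.Adj p s := (adj_iff_of_nf G hNp s).2 (by tauto)
  have aqr : G.Adj q r := (adj_iff_of_nf G hNq r).2 (by tauto)
  have aqs : G.Adj q s := (adj_iff_of_nf G hNq s).2 (by tauto)
  have ars : G.Adj r s := (adj_iff_of_nf G hNr s).2 (by tauto)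
  have hall : ∀ v : V, v = p ∨ v = q ∨ v = r ∨ v = s := by
    intro v
    set S : Finset V := {p, q, r, s} with hS
    have hmemS : ∀ u, u = p ∨ u = q ∨ u = r ∨ u = s → u ∈ S := by
      intro u hu; simp only [hS, Finset.mem_insert, Finset.mem_singleton]; tauto
    have hcl : ∀ u ∈ S, ∀ w, G.Adj u w → w ∈ S := by
      intro u hu w huw
      simp only [hS, Finset.mem_insert, Finset.mem_singleton] at hu
      apply hmemS
      rcases hu with rfl | rfl | rfl | rfl
      · have := (adj_iff_of_nf G hNp w).1 huw; tauto
      · have := (adj_iff_of_nf G hNq w).1 huw; tauto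
      · have := (adj_iff_of_nf G hNr w).1 huw; tauto
      · have := (adj_iff_of_nf G hNs w).1 huw; tauto
    have := mem_of_closed G hconn S hcl (hmemS p (Or.inl rfl)) v
    simpa [hS] using this
  constructor
  · intro u v huv
    have reo : ∀ t w1 w2 w3, G.neighborFinset t = {w1, w2, w3} →
        G.neighborFinset t = {w2, w1, w3} := by
      intro t w1 w2 w3 h
      rw [h]; ext w; simp only [Finset.mem_insert, Finset.mem_singleton]; tauto
    have reo2 : ∀ t w1 w2 w3, G.neighborFinset t = {w1, w2, w3} →
        G.neighborFinset t = {w3, w1, w2} := by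
      intro t w1 w2 w3 h
      rw [h]; ext w; simp only [Finset.mem_insert, Finset.mem_singleton]; tauto
    rcases hall u with hu | hu | hu | hu <;> rcases hall v with hv | hv | hv | hv <;>
      rw [hu, hv] at huv ⊢
    · exact absurd huv (G.irrefl)
    · exact kappa_nonneg_of_matching G p q q r s p r s hNp hNq hqr hqs hrs
        hpr hps hrs (Or.inr apq.symm) (Or.inl rfl) (Or.inl rfl)
    · exact kappa_nonneg_of_matching G p r r q s p q s (reo _ _ _ _ hNp) hNr
        hqr.symm hrs hqs hpq hps hqs (Or.inr apr.symm) (Or.inl rfl) (Or.inl rfl)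
    · exact kappa_nonneg_of_matching G p s s q r p q r (reo2 _ _ _ _ hNp) hNs
        hqs.symm hrs.symm hqr hpq hpr hqr (Or.inr aps.symm) (Or.inl rfl) (Or.inl rfl)
    · exact kappa_nonneg_of_matching G q p p r s q r s hNq hNp hpr hps hrs
        hqr hqs hrs (Or.inr apq) (Or.inl rfl) (Or.inl rfl)
    · exact absurd huv (G.irrefl)
    · exact kappa_nonneg_of_matching G q r r p s q p s (reo _ _ _ _ hNq) (reo _ _ _ _ hNr)
        hpr.symm hrs hps hpq.symm hqs hps (Or.inr aqr.symm) (Or.inl rfl) (Or.inl rfl)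
    · exact kappa_nonneg_of_matching G q s s p r q p r (reo2 _ _ _ _ hNq) (reo _ _ _ _ hNs)
        hps.symm hrs.symm hpr hpq.symm hqr hpr (Or.inr aqs.symm) (Or.inl rfl) (Or.inl rfl)
    · exact kappa_nonneg_of_matching G r p p q s r q s hNr (reo _ _ _ _ hNp) hpq hps hqs
        hqr.symm hrs hqs (Or.inr apr) (Or.inl rfl) (Or.inl rfl)
    · exact kappa_nonneg_of_matching G r q q p s r p s (reo _ _ _ _ hNr) (reo _ _ _ _ hNq)
        hpq.symm hqs hps hpr.symm hrs hps (Or.inr aqr) (Or.inl rfl) (Or.inl rfl)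
    · exact absurd huv (G.irrefl)
    · exact kappa_nonneg_of_matching G r s s p q r p q (reo2 _ _ _ _ hNr) (reo2 _ _ _ _ hNs)
        hps.symm hqs.symm hpq hpr.symm hqr.symm hpq
        (Or.inr ars.symm) (Or.inl rfl) (Or.inl rfl)
    · exact kappa_nonneg_of_matching G s p p q r s q r hNs (reo2 _ _ _ _ hNp) hpq hpr hqr
        hqs.symm hrs.symm hqr (Or.inr aps) (Or.inl rfl) (Or.inl rfl)
    · exact kappa_nonneg_of_matching G s q q p r s p r (reo _ _ _ _ hNs) (reo2 _ _ _ _ hNq)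
        hpq.symm hqr hpr hps.symm hrs.symm hpr (Or.inr aqs) (Or.inl rfl) (Or.inl rfl)
    · exact kappa_nonneg_of_matching G s r r p q s p q (reo2 _ _ _ _ hNs) (reo2 _ _ _ _ hNr)
        hpr.symm hqr.symm hpq hps.symm hqs.symm hpq
        (Or.inr ars) (Or.inl rfl) (Or.inl rfl)
    · exact absurd huv (G.irrefl)
  · exact ⟨p, q, apq, kappa_pos_of_matching G p q q r s p r s hNp hNq hqr hqs hrs
      hpr hps hrs (Or.inr apq.symm) rfl (Or.inl rfl)⟩

end Converse

section Converse2

set_option linter.unusedSectionVars false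
set_option maxHeartbeats 2000000

variable (G : SimpleGraph V) [∀ v, Fintype (G.neighborSet v)]

lemma prismStructure [Fintype V] [DecidableEq V] (hconn : G.Connected) (x y c a b z : V)
    (nxy : x ≠ y) (nxc : x ≠ c) (nxa : x ≠ a) (nxb : x ≠ b) (nxz : x ≠ z)
    (nyc : y ≠ c) (nya : y ≠ a) (nyb : y ≠ b) (nyz : y ≠ z)
    (nca : c ≠ a) (ncb : c ≠ b) (ncz : c ≠ z)
    (nab : a ≠ b) (naz : a ≠ z) (nbz : b ≠ z)
    (hNx : G.neighborFinset x = {y, c, a})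
    (hNy : G.neighborFinset y = {x, c, b})
    (hNc : G.neighborFinset c = {x, y, z})
    (hNa : G.neighborFinset a = {x, b, z})
    (hNb : G.neighborFinset b = {y, a, z})
    (hNz : G.neighborFinset z = {c, a, b}) :
    (∀ u v : V, G.Adj u v → 0 ≤ kappaZero G u v) ∧
      (∃ u v : V, G.Adj u v ∧ 0 < kappaZero G u v) := by
  have nyx := nxy.symm; have ncx := nxc.symm; have nax := nxa.symm
  have nbx := nxb.symm; have nzx := nxz.symm; have ncy := nyc.symm
  have nay := nya.symm; have nby := nyb.symm; have nzy := nyz.symm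
  have nac := nca.symm; have nbc := ncb.symm; have nzc := ncz.symm
  have nba := nab.symm; have nza := naz.symm; have nzb := nbz.symm
  have axy : G.Adj x y := (adj_iff_of_nf G hNx y).2 (by tauto)
  have axc : G.Adj x c := (adj_iff_of_nf G hNx c).2 (by tauto)
  have axa : G.Adj x a := (adj_iff_of_nf G hNx a).2 (by tauto)
  have ayc : G.Adj y c := (adj_iff_of_nf G hNy c).2 (by tauto)
  have ayb : G.Adj y b := (adj_iff_of_nf G hNy b).2 (by tauto)
  have acz : G.Adj c z := (adj_iff_of_nf G hNc z).2 (by tauto)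
  have aab : G.Adj a b := (adj_iff_of_nf G hNa b).2 (by tauto)
  have aaz : G.Adj a z := (adj_iff_of_nf G hNa z).2 (by tauto)
  have abz : G.Adj b z := (adj_iff_of_nf G hNb z).2 (by tauto)
  have hall : ∀ v : V, v = x ∨ v = y ∨ v = c ∨ v = a ∨ v = b ∨ v = z := by
    intro v
    set S : Finset V := {x, y, c, a, b, z} with hS
    have hmemS : ∀ u, u = x ∨ u = y ∨ u = c ∨ u = a ∨ u = b ∨ u = z → u ∈ S := by
      intro u hu; simp only [hS, Finset.mem_insert, Finset.mem_singleton]; tauto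
    have hcl : ∀ u ∈ S, ∀ w, G.Adj u w → w ∈ S := by
      intro u hu w huw
      simp only [hS, Finset.mem_insert, Finset.mem_singleton] at hu
      apply hmemS
      rcases hu with rfl | rfl | rfl | rfl | rfl | rfl
      · have := (adj_iff_of_nf G hNx w).1 huw; tauto
      · have := (adj_iff_of_nf G hNy w).1 huw; tauto
      · have := (adj_iff_of_nf G hNc w).1 huw; tauto
      · have := (adj_iff_of_nf G hNa w).1 huw; tauto
      · have := (adj_iff_of_nf G hNb w).1 huw; tauto
      · have := (adj_iff_of_nf G hNz w).1 huw; tauto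
    have := mem_of_closed G hconn S hcl (hmemS x (Or.inl rfl)) v
    simpa [hS] using this
  have reo : ∀ t w1 w2 w3, G.neighborFinset t = {w1, w2, w3} →
      G.neighborFinset t = {w2, w1, w3} := by
    intro t w1 w2 w3 h
    rw [h]; ext w; simp only [Finset.mem_insert, Finset.mem_singleton]; tauto
  have reo2 : ∀ t w1 w2 w3, G.neighborFinset t = {w1, w2, w3} →
      G.neighborFinset t = {w3, w1, w2} := by
    intro t w1 w2 w3 h
    rw [h]; ext w; simp only [Finset.mem_insert, Finset.mem_singleton]; tauto
  constructor
  · intro u v huv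
    rcases hall u with hu | hu | hu | hu | hu | hu <;>
      rcases hall v with hv | hv | hv | hv | hv | hv <;>
      rw [hu, hv] at huv ⊢
    · exact absurd huv (G.irrefl)
    · exact kappa_nonneg_of_matching G x y y c a x c b hNx hNy
        nyc nya nca nxc nxb ncb
        (Or.inr axy.symm) (Or.inl rfl) (Or.inr aab)
    · exact kappa_nonneg_of_matching G x c c y a x y z (reo _ _ _ _ hNx) hNc
        ncy nca nya nxy nxz nyz
        (Or.inr axc.symm) (Or.inl rfl) (Or.inr aaz)
    · exact kappa_nonneg_of_matching G x a a y c x b z (reo2 _ _ _ _ hNx) hNa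
        nay nac nyc nxb nxz nbz
        (Or.inr axa.symm) (Or.inr ayb) (Or.inr acz)
    · exact absurd ((adj_iff_of_nf G hNx _).1 huv) (by tauto)
    · exact absurd ((adj_iff_of_nf G hNx _).1 huv) (by tauto)
    · exact kappa_nonneg_of_matching G y x x c b y c a hNy hNx
        nxc nxb ncb nyc nya nca
        (Or.inr axy) (Or.inl rfl) (Or.inr aab.symm)
    · exact absurd huv (G.irrefl)
    · exact kappa_nonneg_of_matching G y c c x b y x z (reo _ _ _ _ hNy) (reo _ _ _ _ hNc)
        ncx ncb nxb nyx nyz nxz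
        (Or.inr ayc.symm) (Or.inl rfl) (Or.inr abz)
    · exact absurd ((adj_iff_of_nf G hNy _).1 huv) (by tauto)
    · exact kappa_nonneg_of_matching G y b b x c y a z (reo2 _ _ _ _ hNy) hNb
        nbx nbc nxc nya nyz naz
        (Or.inr ayb.symm) (Or.inr axa) (Or.inr acz)
    · exact absurd ((adj_iff_of_nf G hNy _).1 huv) (by tauto)
    · exact kappa_nonneg_of_matching G c x x y z c y a hNc (reo _ _ _ _ hNx)
        nxy nxz nyz ncy nca nya
        (Or.inr axc) (Or.inl rfl) (Or.inr aaz.symm)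
    · exact kappa_nonneg_of_matching G c y y x z c x b (reo _ _ _ _ hNc) (reo _ _ _ _ hNy)
        nyx nyz nxz ncx ncb nxb
        (Or.inr ayc) (Or.inl rfl) (Or.inr abz.symm)
    · exact absurd huv (G.irrefl)
    · exact absurd ((adj_iff_of_nf G hNc _).1 huv) (by tauto)
    · exact absurd ((adj_iff_of_nf G hNc _).1 huv) (by tauto)
    · exact kappa_nonneg_of_matching G c z z x y c a b (reo2 _ _ _ _ hNc) hNz
        nzx nzy nxy nca ncb nab
        (Or.inr acz.symm) (Or.inr axa) (Or.inr ayb)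
    · exact kappa_nonneg_of_matching G a x x b z a y c hNa (reo2 _ _ _ _ hNx)
        nxb nxz nbz nay nac nyc
        (Or.inr axa) (Or.inr ayb.symm) (Or.inr acz.symm)
    · exact absurd ((adj_iff_of_nf G hNa _).1 huv) (by tauto)
    · exact absurd ((adj_iff_of_nf G hNa _).1 huv) (by tauto)
    · exact absurd huv (G.irrefl)
    · exact kappa_nonneg_of_matching G a b b x z a y z (reo _ _ _ _ hNa) (reo _ _ _ _ hNb)
        nbx nbz nxz nay naz nyz
        (Or.inr aab.symm) (Or.inr axy) (Or.inl rfl)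
    · exact kappa_nonneg_of_matching G a z z x b a c b (reo2 _ _ _ _ hNa) (reo _ _ _ _ hNz)
        nzx nzb nxb nac nab ncb
        (Or.inr aaz.symm) (Or.inr axc) (Or.inl rfl)
    · exact absurd ((adj_iff_of_nf G hNb _).1 huv) (by tauto)
    · exact kappa_nonneg_of_matching G b y y a z b x c hNb (reo2 _ _ _ _ hNy)
        nya nyz naz nbx nbc nxc
        (Or.inr ayb) (Or.inr axa.symm) (Or.inr acz.symm)
    · exact absurd ((adj_iff_of_nf G hNb _).1 huv) (by tauto)
    · exact kappa_nonneg_of_matching G b a a y z b x z (reo _ _ _ _ hNb) (reo _ _ _ _ hNa)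
        nay naz nyz nbx nbz nxz
        (Or.inr aab) (Or.inr axy.symm) (Or.inl rfl)
    · exact absurd huv (G.irrefl)
    · exact kappa_nonneg_of_matching G b z z y a b c a (reo2 _ _ _ _ hNb) (reo2 _ _ _ _ hNz)
        nzy nza nya nbc nba nca
        (Or.inr abz.symm) (Or.inr ayc) (Or.inl rfl)
    · exact absurd ((adj_iff_of_nf G hNz _).1 huv) (by tauto)
    · exact absurd ((adj_iff_of_nf G hNz _).1 huv) (by tauto)
    · exact kappa_nonneg_of_matching G z c c a b z x y hNz (reo2 _ _ _ _ hNc)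
        nca ncb nab nzx nzy nxy
        (Or.inr acz) (Or.inr axa.symm) (Or.inr ayb.symm)
    · exact kappa_nonneg_of_matching G z a a c b z x b (reo _ _ _ _ hNz) (reo2 _ _ _ _ hNa)
        nac nab ncb nzx nzb nxb
        (Or.inr aaz) (Or.inr axc.symm) (Or.inl rfl)
    · exact kappa_nonneg_of_matching G z b b c a z y a (reo2 _ _ _ _ hNz) (reo2 _ _ _ _ hNb)
        nbc nba nca nzy nza nya
        (Or.inr abz) (Or.inr ayc.symm) (Or.inl rfl)
    · exact absurd huv (G.irrefl)
  · exact ⟨x, y, axy, kappa_pos_of_matching G x y y c a x c b hNx hNy nyc nya nca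
      nxc nxb ncb (Or.inr axy.symm) rfl (Or.inr aab)⟩

end Converse2

/-- A (finite, connected) simple 3-regular graph has `κ₀ ≥ 0` on every
edge and `κ₀ > 0` on at least one edge iff it is isomorphic to the complete graph `K₄`
or to the prism graph `Y₃`. -/
theorem cubic_ollivier_nonneg_and_pos_iff_K4_or_Y3 {V : Type*} [Fintype V]
    (G : SimpleGraph V) [∀ v, Fintype (G.neighborSet v)]
    (hconn : G.Connected) (hcubic : ∀ v : V, G.degree v = 3) :
    ((∀ x y : V, G.Adj x y → 0 ≤ kappaZero G x y) ∧
        (∃ x y : V, G.Adj x y ∧ 0 < kappaZero G x y)) ↔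
      (Nonempty (G ≃g (⊤ : SimpleGraph (Fin 4))) ∨ Nonempty (G ≃g prismGraph 3)) := by
  classical
  constructor
  · rintro ⟨hnn, hpos⟩
    exact forward_direction G hconn hcubic hnn hpos
  · rintro (h | h)
    · -- K4 case
      obtain ⟨e⟩ := h
      have hadj_iff : ∀ u v : V, G.Adj u v ↔ u ≠ v := by
        intro u v
        rw [← e.map_rel_iff]
        simp only [SimpleGraph.top_adj, ne_eq, EmbeddingLike.apply_eq_iff_eq]
      set p := e.symm 0 with hp
      set q := e.symm 1 with hq
      set r := e.symm 2 with hr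
      set s := e.symm 3 with hs
      have hinj := e.toEquiv.symm.injective
      have hpq : p ≠ q := fun h => absurd (hinj h) (by decide)
      have hpr : p ≠ r := fun h => absurd (hinj h) (by decide)
      have hps : p ≠ s := fun h => absurd (hinj h) (by decide)
      have hqr : q ≠ r := fun h => absurd (hinj h) (by decide)
      have hqs : q ≠ s := fun h => absurd (hinj h) (by decide)
      have hrs : r ≠ s := fun h => absurd (hinj h) (by decide)
      have hNp : G.neighborFinset p = {q, r, s} :=
        nf_eq_of_three G (hcubic p) ((hadj_iff p q).2 hpq) ((hadj_iff p r).2 hpr)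
          ((hadj_iff p s).2 hps) hqr hqs hrs
      have hNq : G.neighborFinset q = {p, r, s} :=
        nf_eq_of_three G (hcubic q) ((hadj_iff q p).2 hpq.symm) ((hadj_iff q r).2 hqr)
          ((hadj_iff q s).2 hqs) hpr hps hrs
      have hNr : G.neighborFinset r = {p, q, s} :=
        nf_eq_of_three G (hcubic r) ((hadj_iff r p).2 hpr.symm) ((hadj_iff r q).2 hqr.symm)
          ((hadj_iff r s).2 hrs) hpq hps hqs
      have hNs : G.neighborFinset s = {p, q, r} :=
        nf_eq_of_three G (hcubic s) ((hadj_iff s p).2 hps.symm) ((hadj_iff s q).2 hqs.symm)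
          ((hadj_iff s r).2 hrs.symm) hpq hpr hqr
      exact fourStructure G hconn p q r s hpq hpr hps hqr hqs hrs hNp hNq hNr hNs
    · -- prism case
      obtain ⟨e⟩ := h
      have hAdj : ∀ p q : ZMod 3 × Bool, G.Adj (e.symm p) (e.symm q) ↔
          (prismGraph 3).Adj p q := fun p q => e.symm.map_rel_iff
      have hinj := e.toEquiv.symm.injective
      set x := e.symm ((0 : ZMod 3), false) with hx
      set y := e.symm ((1 : ZMod 3), false) with hy
      set c := e.symm ((2 : ZMod 3), false) with hc
      set a := e.symm ((0 : ZMod 3), true) with ha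
      set b := e.symm ((1 : ZMod 3), true) with hb
      set z := e.symm ((2 : ZMod 3), true) with hz
      have nxy : x ≠ y := fun h => absurd (hinj h) (by decide)
      have nxc : x ≠ c := fun h => absurd (hinj h) (by decide)
      have nxa : x ≠ a := fun h => absurd (hinj h) (by decide)
      have nxb : x ≠ b := fun h => absurd (hinj h) (by decide)
      have nxz : x ≠ z := fun h => absurd (hinj h) (by decide)
      have nyc : y ≠ c := fun h => absurd (hinj h) (by decide)
      have nya : y ≠ a := fun h => absurd (hinj h) (by decide)
      have nyb : y ≠ b := fun h => absurd (hinj h) (by decide)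
      have nyz : y ≠ z := fun h => absurd (hinj h) (by decide)
      have nca : c ≠ a := fun h => absurd (hinj h) (by decide)
      have ncb : c ≠ b := fun h => absurd (hinj h) (by decide)
      have ncz : c ≠ z := fun h => absurd (hinj h) (by decide)
      have nab : a ≠ b := fun h => absurd (hinj h) (by decide)
      have naz : a ≠ z := fun h => absurd (hinj h) (by decide)
      have nbz : b ≠ z := fun h => absurd (hinj h) (by decide)
      have axy : G.Adj x y := (hAdj _ _).2 (by decide)
      have axc : G.Adj x c := (hAdj _ _).2 (by decide)
      have axa : G.Adj x a := (hAdj _ _).2 (by decide)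
      have ayc : G.Adj y c := (hAdj _ _).2 (by decide)
      have ayb : G.Adj y b := (hAdj _ _).2 (by decide)
      have acz : G.Adj c z := (hAdj _ _).2 (by decide)
      have aab : G.Adj a b := (hAdj _ _).2 (by decide)
      have aaz : G.Adj a z := (hAdj _ _).2 (by decide)
      have abz : G.Adj b z := (hAdj _ _).2 (by decide)
      have hNx : G.neighborFinset x = {y, c, a} :=
        nf_eq_of_three G (hcubic x) axy axc axa nyc nya nca
      have hNy : G.neighborFinset y = {x, c, b} :=
        nf_eq_of_three G (hcubic y) axy.symm ayc ayb nxc nxb ncb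
      have hNc : G.neighborFinset c = {x, y, z} :=
        nf_eq_of_three G (hcubic c) axc.symm ayc.symm acz nxy nxz nyz
      have hNa : G.neighborFinset a = {x, b, z} :=
        nf_eq_of_three G (hcubic a) axa.symm aab aaz nxb nxz nbz
      have hNb : G.neighborFinset b = {y, a, z} :=
        nf_eq_of_three G (hcubic b) ayb.symm aab.symm abz nya nyz naz
      have hNz : G.neighborFinset z = {c, a, b} :=
        nf_eq_of_three G (hcubic z) acz.symm aaz.symm abz.symm nca ncb nab
      exact prismStructure G hconn x y c a b z nxy nxc nxa nxb nxz nyc nya nyb nyz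
        nca ncb ncz nab naz nbz hNx hNy hNc hNa hNb hNz
end
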